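/- arXiv:2108.07087 — 5 statements merged into one kernel-verified Lean document; each statement's English description precedes it below -/
import Mathlib

section
/- If H ⊆ ℝ² is a Horton set, then for any integers a and p with p ≥ 1, the set H_{a,p} (with level map (φ_H − a)/p) is also a Horton set. -/
noncomputable section

/-- The plane `ℝ²`. -/
abbrev Plane := EuclideanSpace ℝ (Fin 2)

/-- A finite set `S ⊆ ℝ^d` is `ℓ`-hole-free if for every `ℓ` distinct points of `S` there is a
point of `S` lying in the interior of the convex hull of those points. -/
def HoleFree {d : ℕ} (ℓ : ℕ) (S : Set (EuclideanSpace ℝ (Fin d))) : Prop :=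
  ∀ T : Set (EuclideanSpace ℝ (Fin d)), T ⊆ S → T.Finite → T.ncard = ℓ →
    ∃ s ∈ S, s ∈ interior (convexHull ℝ T)

/-- `x` lies strictly below the (non-vertical) line through `p` and `q`. -/
def StrictlyBelowLine (p q x : Plane) : Prop :=
  x 1 < p 1 + (x 0 - p 0) * (q 1 - p 1) / (q 0 - p 0)

/-- `x` lies strictly above the (non-vertical) line through `p` and `q`. -/
def StrictlyAboveLine (p q x : Plane) : Prop :=
  p 1 + (x 0 - p 0) * (q 1 - p 1) / (q 0 - p 0) < x 1

/-- `A` lies high above `B` (equivalently `B` lies deep below `A`): any point of `B` is strictly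
below every line through two points of `A` with distinct first coordinates, and any point of `A`
is strictly above every line through two points of `B` with distinct first coordinates. -/
def HighAbove (A B : Set Plane) : Prop :=
  (∀ p ∈ A, ∀ q ∈ A, p 0 ≠ q 0 → ∀ b ∈ B, StrictlyBelowLine p q b) ∧
  (∀ p ∈ B, ∀ q ∈ B, p 0 ≠ q 0 → ∀ a ∈ A, StrictlyAboveLine p q a)

/-- The subset of a levelled set (with level map `φ`) consisting of points whose level is
congruent to `a` modulo `p`. -/
def levelSubset (φ : Plane → ℝ) (H : Set Plane) (a p : ℤ) : Set Plane :=
  {x ∈ H | ∃ k : ℤ, φ x = (a : ℝ) + (p : ℝ) * (k : ℝ)}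

/-- The side conditions a planar Horton set must satisfy: finiteness, level map of the form
`a • π₁ + b` with `a ≠ 0`, injectivity of the level map on the set, and the image of the level
map being a consecutive set of integers. -/
def LevelledConds (H : Set Plane) (φ : Plane → ℝ) : Prop :=
  H.Finite ∧
  (∃ a b : ℝ, a ≠ 0 ∧ ∀ x : Plane, φ x = a * x 0 + b) ∧
  Set.InjOn φ H ∧
  (∃ s t : ℤ, φ '' H = (fun k : ℤ => (k : ℝ)) '' (Set.Icc s t))

/-- A planar Horton set (together with its level map), defined by the inductive rules:
the empty set or a singleton is Horton, and if `H_{0,2}` and `H_{1,2}` are Horton and one of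
them lies deep below (i.e. the other lies high above) the other, then `H` is Horton. -/
inductive IsHorton : Set Plane → (Plane → ℝ) → Prop
  | base (H : Set Plane) (φ : Plane → ℝ) :
      LevelledConds H φ → H.Subsingleton → IsHorton H φ
  | step (H : Set Plane) (φ : Plane → ℝ) :
      LevelledConds H φ →
      IsHorton (levelSubset φ H 0 2) (fun x => (φ x - 0) / 2) →
      IsHorton (levelSubset φ H 1 2) (fun x => (φ x - 1) / 2) →
      (HighAbove (levelSubset φ H 1 2) (levelSubset φ H 0 2) ∨
        HighAbove (levelSubset φ H 0 2) (levelSubset φ H 1 2)) →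
      IsHorton H φ

lemma levelSubset_subset (φ : Plane → ℝ) (H : Set Plane) (a p : ℤ) :
    levelSubset φ H a p ⊆ H := fun _ hx => hx.1

lemma levelledConds_sub {H : Set Plane} {φ : Plane → ℝ} (hc : LevelledConds H φ)
    (a p : ℤ) (hp : 1 ≤ p) :
    LevelledConds (levelSubset φ H a p) (fun x => (φ x - (a:ℝ)) / (p:ℝ)) := by
  obtain ⟨hfin, ⟨α, β, hα, hform⟩, hinj, s, t, himg⟩ := hc
  have hppos : (0:ℝ) < (p:ℝ) := by exact_mod_cast hp
  have hpne : (p:ℝ) ≠ 0 := hppos.ne'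
  refine ⟨hfin.subset (levelSubset_subset φ H a p),
    ⟨α/p, (β - a)/p, div_ne_zero hα hpne, fun x => by simp only []; rw [hform]; ring⟩,
    fun x hx y hy hxy => hinj hx.1 hy.1 ?_,
    ⟨⌈(((s:ℝ)) - a)/(p:ℝ)⌉, ⌊(((t:ℝ)) - a)/(p:ℝ)⌋, ?_⟩⟩
  · field_simp at hxy; linarith
  · ext y
    constructor
    · rintro ⟨x, ⟨hxH, k, hk⟩, rfl⟩
      have hmem : φ x ∈ φ '' H := ⟨x, hxH, rfl⟩
      rw [himg] at hmem
      obtain ⟨m, hm, hmx⟩ := hmem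
      simp only [] at hmx
      have hmk : m = a + p*k := by
        have : (m:ℝ) = (a:ℝ) + p*k := by rw [hmx, hk]
        exact_mod_cast this
      have h1 : (s:ℝ) ≤ (a:ℝ) + p*k := by exact_mod_cast hmk ▸ hm.1
      have h2 : (a:ℝ) + p*k ≤ (t:ℝ) := by exact_mod_cast hmk ▸ hm.2
      refine ⟨k, ⟨Int.ceil_le.mpr ((div_le_iff₀ hppos).mpr (by linarith)),
        Int.le_floor.mpr ((le_div_iff₀ hppos).mpr (by linarith))⟩, ?_⟩
      simp only [hk]; field_simp; ring
    · rintro ⟨k, hk, rfl⟩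
      have h1 : ((s:ℝ) - a)/(p:ℝ) ≤ (k:ℝ) := le_trans (Int.le_ceil _) (by exact_mod_cast hk.1)
      have h2 : (k:ℝ) ≤ ((t:ℝ) - a)/(p:ℝ) := le_trans (by exact_mod_cast hk.2) (Int.floor_le _)
      have h1' : (s:ℝ) ≤ (a:ℝ) + p*k := by
        have := (div_le_iff₀ hppos).mp h1; linarith
      have h2' : (a:ℝ) + p*k ≤ (t:ℝ) := by
        have := (le_div_iff₀ hppos).mp h2; linarith
      have hmem : ((a + p*k : ℤ):ℝ) ∈ (fun k : ℤ => (k:ℝ)) '' (Set.Icc s t) :=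
        ⟨a + p*k, ⟨by exact_mod_cast h1', by exact_mod_cast h2'⟩, rfl⟩
      rw [← himg] at hmem
      obtain ⟨x, hxH, hφx⟩ := hmem
      have hφx' : φ x = (a:ℝ) + p*k := by rw [hφx]; push_cast; ring
      exact ⟨x, ⟨hxH, k, hφx'⟩, by simp only []; rw [hφx']; field_simp; ring⟩

lemma evensplit (φ : Plane → ℝ) (H : Set Plane) (a q : ℤ) :
    levelSubset φ H a (2*q) =
    levelSubset (fun x => (φ x - ((a % 2 : ℤ):ℝ))/2) (levelSubset φ H (a % 2) 2) (a/2) q := by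
  have hmd : a % 2 + 2*(a/2) = a := Int.emod_add_mul_ediv a 2
  have hmdR : ((a % 2 : ℤ):ℝ) + 2*((a/2 : ℤ):ℝ) = (a:ℝ) := by exact_mod_cast hmd
  ext x
  constructor
  · rintro ⟨hx, k, hk⟩
    have hφ : φ x = ((a%2:ℤ):ℝ) + 2*(((a/2:ℤ):ℝ) + (q:ℝ)*(k:ℝ)) := by
      rw [hk]; push_cast; linarith
    refine ⟨⟨hx, a/2 + q*k, by rw [hφ]; push_cast; ring⟩, k, by simp only []; rw [hφ]; ring⟩
  · rintro ⟨⟨hx, _⟩, k, hk⟩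
    refine ⟨hx, k, ?_⟩
    simp only [] at hk
    have : φ x = ((a%2:ℤ):ℝ) + 2*(((a/2:ℤ):ℝ) + (q:ℝ)*(k:ℝ)) := by linarith
    rw [this]; push_cast; linarith

lemma half_eq (φ : Plane → ℝ) (H : Set Plane) (a p b : ℤ) (hp : (p:ℝ) ≠ 0) :
    levelSubset (fun x => (φ x - (a:ℝ))/(p:ℝ)) (levelSubset φ H a p) b 2 =
      levelSubset φ H (a + p*b) (2*p) := by
  ext x
  constructor
  · rintro ⟨⟨hx, _⟩, k, hk⟩
    have hφ : φ x = (a:ℝ) + (p:ℝ)*((b:ℝ) + 2*(k:ℝ)) := by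
      field_simp at hk; push_cast at hk; linarith [hk]
    exact ⟨hx, k, by rw [hφ]; push_cast; ring⟩
  · rintro ⟨hx, k, hk⟩
    have hφ : φ x = (a:ℝ) + (p:ℝ)*((b:ℝ) + 2*(k:ℝ)) := by rw [hk]; push_cast; ring
    refine ⟨⟨hx, b + 2*k, by rw [hφ]; push_cast; ring⟩, k, ?_⟩
    show (φ x - (a:ℝ))/(p:ℝ) = (b:ℝ) + ((2:ℤ):ℝ)*(k:ℝ)
    rw [hφ]; push_cast; field_simp; ring

lemma highAbove_mono {A B A' B' : Set Plane} (hA : A' ⊆ A) (hB : B' ⊆ B)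
    (h : HighAbove A B) : HighAbove A' B' :=
  ⟨fun p hp q hq hne b hb => h.1 p (hA hp) q (hA hq) hne b (hB hb),
   fun p hp q hq hne x hx => h.2 p (hB hp) q (hB hq) hne x (hA hx)⟩

lemma isHorton_congr {H K : Set Plane} {φ ψ : Plane → ℝ} (h : IsHorton H φ)
    (hs : H = K) (hm : φ = ψ) : IsHorton K ψ := hs ▸ hm ▸ h

lemma main_aux {H : Set Plane} {φ : Plane → ℝ} (hH : IsHorton H φ) :
    ∀ a p : ℤ, 1 ≤ p → IsHorton (levelSubset φ H a p) (fun x => (φ x - (a:ℝ))/(p:ℝ)) := by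
  induction hH with
  | base H φ hc hs =>
    intro a p hp
    exact .base _ _ (levelledConds_sub hc a p hp) (hs.anti (levelSubset_subset φ H a p))
  | step H φ hc h0 h1 hrel ih0 ih1 =>
    intro a p hp
    have hppos : (0:ℝ) < (p:ℝ) := by exact_mod_cast hp
    have hpne : (p:ℝ) ≠ 0 := hppos.ne'
    rcases Int.even_or_odd p with ⟨q, hq⟩ | ⟨q, hq⟩
    · -- p even, p = 2q
      have hq1 : 1 ≤ q := by omega
      have hp2 : p = 2*q := by omega
      rcases Int.emod_two_eq a with h2 | h2
      · refine isHorton_congr (ih0 (a/2) q hq1) ?_ ?_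
        · rw [hp2, evensplit φ H a q, h2]; norm_num
        · funext x; simp only []
          have haR : (a:ℝ) = 2*((a/2:ℤ):ℝ) := by exact_mod_cast (by omega : a = 2*(a/2))
          have hpR : (p:ℝ) = 2*(q:ℝ) := by exact_mod_cast hp2
          rw [haR, hpR]; ring
      · refine isHorton_congr (ih1 (a/2) q hq1) ?_ ?_
        · rw [hp2, evensplit φ H a q, h2]; norm_num
        · funext x; simp only []
          have haR : (a:ℝ) = 1 + 2*((a/2:ℤ):ℝ) := by
            exact_mod_cast (by omega : a = 1 + 2*(a/2))
          have hpR : (p:ℝ) = 2*(q:ℝ) := by exact_mod_cast hp2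
          rw [haR, hpR]; ring
    · -- p odd, p = 2q+1
      have hpodd : p % 2 = 1 := by omega
      have e0 : levelSubset (fun x => (φ x - (a:ℝ))/(p:ℝ)) (levelSubset φ H a p) 0 2
          = levelSubset φ H a (2*p) := by
        have := half_eq φ H a p 0 hpne; simpa using this
      have e1 : levelSubset (fun x => (φ x - (a:ℝ))/(p:ℝ)) (levelSubset φ H a p) 1 2
          = levelSubset φ H (a+p) (2*p) := by
        have := half_eq φ H a p 1 hpne; simpa using this
      refine IsHorton.step _ _ (levelledConds_sub hc a p hp) ?_ ?_ ?_
      · -- half 0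
        rcases Int.emod_two_eq a with h2 | h2
        · refine isHorton_congr (ih0 (a/2) p hp) ?_ ?_
          · rw [e0, evensplit φ H a p, h2]; norm_num
          · funext x; simp only []
            have haR : (a:ℝ) = 2*((a/2:ℤ):ℝ) := by exact_mod_cast (by omega : a = 2*(a/2))
            rw [haR]; ring
        · refine isHorton_congr (ih1 (a/2) p hp) ?_ ?_
          · rw [e0, evensplit φ H a p, h2]; norm_num
          · funext x; simp only []
            have haR : (a:ℝ) = 1 + 2*((a/2:ℤ):ℝ) := by
              exact_mod_cast (by omega : a = 1 + 2*(a/2))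
            rw [haR]; ring
      · -- half 1
        rcases Int.emod_two_eq (a+p) with h2 | h2
        · refine isHorton_congr (ih0 ((a+p)/2) p hp) ?_ ?_
          · rw [e1, evensplit φ H (a+p) p, h2]; norm_num
          · funext x; simp only []
            have haR : (a:ℝ) = 2*(((a+p)/2:ℤ):ℝ) - (p:ℝ) := by
              exact_mod_cast (by omega : a = 2*((a+p)/2) - p)
            rw [haR, ← mul_inv_cancel₀ hpne]; ring
        · refine isHorton_congr (ih1 ((a+p)/2) p hp) ?_ ?_
          · rw [e1, evensplit φ H (a+p) p, h2]; norm_num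
          · funext x; simp only []
            have haR : (a:ℝ) = 1 + 2*(((a+p)/2:ℤ):ℝ) - (p:ℝ) := by
              exact_mod_cast (by omega : a = 1 + 2*((a+p)/2) - p)
            rw [haR, ← mul_inv_cancel₀ hpne]; ring
      · -- HighAbove
        rcases Int.emod_two_eq a with h2 | h2
        · have hsub0 : levelSubset (fun x => (φ x - (a:ℝ))/(p:ℝ)) (levelSubset φ H a p) 0 2
              ⊆ levelSubset φ H 0 2 := by
            rw [e0, evensplit φ H a p, h2]; exact levelSubset_subset _ _ _ _
          have hsub1 : levelSubset (fun x => (φ x - (a:ℝ))/(p:ℝ)) (levelSubset φ H a p) 1 2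
              ⊆ levelSubset φ H 1 2 := by
            have h2' : (a+p) % 2 = 1 := by omega
            rw [e1, evensplit φ H (a+p) p, h2']; exact levelSubset_subset _ _ _ _
          rcases hrel with hr | hr
          · exact Or.inl (highAbove_mono hsub1 hsub0 hr)
          · exact Or.inr (highAbove_mono hsub0 hsub1 hr)
        · have hsub0 : levelSubset (fun x => (φ x - (a:ℝ))/(p:ℝ)) (levelSubset φ H a p) 0 2
              ⊆ levelSubset φ H 1 2 := by
            rw [e0, evensplit φ H a p, h2]; exact levelSubset_subset _ _ _ _
          have hsub1 : levelSubset (fun x => (φ x - (a:ℝ))/(p:ℝ)) (levelSubset φ H a p) 1 2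
              ⊆ levelSubset φ H 0 2 := by
            have h2' : (a+p) % 2 = 0 := by omega
            rw [e1, evensplit φ H (a+p) p, h2']; exact levelSubset_subset _ _ _ _
          rcases hrel with hr | hr
          · exact Or.inr (highAbove_mono hsub0 hsub1 hr)
          · exact Or.inl (highAbove_mono hsub1 hsub0 hr)

theorem statement5 (H : Set Plane) (φ : Plane → ℝ) (hH : IsHorton H φ)
    (a p : ℤ) (hp : 1 ≤ p) :
    IsHorton (levelSubset φ H a p) (fun x => (φ x - (a : ℝ)) / (p : ℝ)) := by
  exact main_aux hH a p hp
end
end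

section
/- Every Horton set H ⊆ ℝ² is 4-closed and 7-hole-free. -/
noncomputable section

/-- `p 0, …, p (r-1)` is a convex sequence: strictly increasing first coordinates and every
intermediate point lies strictly below the line through any earlier and later point. -/
def ConvexSeq (r : ℕ) (p : ℕ → Plane) : Prop :=
  (∀ i j, i < j → j < r → p i 0 < p j 0) ∧
  (∀ i j k, i < j → j < k → k < r → StrictlyBelowLine (p i) (p k) (p j))

/-- `p 0, …, p (r-1)` is a concave sequence. -/
def ConcaveSeq (r : ℕ) (p : ℕ → Plane) : Prop :=
  (∀ i j, i < j → j < r → p i 0 < p j 0) ∧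
  (∀ i j k, i < j → j < k → k < r → StrictlyAboveLine (p i) (p k) (p j))

/-- The sequence `p 0, …, p (r-1)` is upper closed by the point `q`: `q` has first coordinate
strictly between those of the endpoints, and lies strictly above the polygonal path. -/
def UpperClosedBy (r : ℕ) (p : ℕ → Plane) (q : Plane) : Prop :=
  p 0 0 < q 0 ∧ q 0 < p (r - 1) 0 ∧
  ∀ i, i + 1 < r → p i 0 ≤ q 0 → q 0 ≤ p (i + 1) 0 → StrictlyAboveLine (p i) (p (i + 1)) q

/-- The sequence `p 0, …, p (r-1)` is lower closed by the point `q`. -/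
def LowerClosedBy (r : ℕ) (p : ℕ → Plane) (q : Plane) : Prop :=
  p 0 0 < q 0 ∧ q 0 < p (r - 1) 0 ∧
  ∀ i, i + 1 < r → p i 0 ≤ q 0 → q 0 ≤ p (i + 1) 0 → StrictlyBelowLine (p i) (p (i + 1)) q

/-- `A` is upper `r`-closed: every convex sequence of `r` points of `A` is upper closed by some
point of `A`. -/
def UpperRClosed (r : ℕ) (A : Set Plane) : Prop :=
  ∀ p : ℕ → Plane, (∀ i, i < r → p i ∈ A) → ConvexSeq r p → ∃ q ∈ A, UpperClosedBy r p q

/-- `A` is lower `r`-closed: every concave sequence of `r` points of `A` is lower closed by some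
point of `A`. -/
def LowerRClosed (r : ℕ) (A : Set Plane) : Prop :=
  ∀ p : ℕ → Plane, (∀ i, i < r → p i ∈ A) → ConcaveSeq r p → ∃ q ∈ A, LowerClosedBy r p q

/-! ### Auxiliary machinery for the proof -/

/-- Twice the signed area of the triangle `p q r`. -/
def sg (p q r : Plane) : ℝ := (q 0 - p 0) * (r 1 - p 1) - (r 0 - p 0) * (q 1 - p 1)

lemma sg_cyclic (p q r : Plane) : sg p q r = sg q r p := by unfold sg; ring
lemma sg_swap (p q r : Plane) : sg p q r = - sg p r q := by unfold sg; ring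
lemma sg_swap01 (p q r : Plane) : sg p q r = - sg q p r := by unfold sg; ring
lemma sg_self (p q : Plane) : sg p q q = 0 := by unfold sg; ring
lemma sg_sum (a b c x : Plane) : sg b c x + sg c a x + sg a b x = sg a b c := by
  simp only [sg]; ring

lemma above_iff {p q x : Plane} (h : p 0 < q 0) : StrictlyAboveLine p q x ↔ 0 < sg p q x := by
  have hd : (0:ℝ) < q 0 - p 0 := by linarith
  unfold StrictlyAboveLine sg
  constructor
  · intro h'
    have h2 : (x 0 - p 0) * (q 1 - p 1) / (q 0 - p 0) < x 1 - p 1 := by linarith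
    have h3 := (div_lt_iff₀ hd).1 h2
    nlinarith
  · intro h'
    have h3 : (x 0 - p 0) * (q 1 - p 1) / (q 0 - p 0) < x 1 - p 1 :=
      (div_lt_iff₀ hd).2 (by nlinarith)
    linarith

lemma below_iff {p q x : Plane} (h : p 0 < q 0) : StrictlyBelowLine p q x ↔ sg p q x < 0 := by
  have hd : (0:ℝ) < q 0 - p 0 := by linarith
  unfold StrictlyBelowLine sg
  constructor
  · intro h'
    have h2 : x 1 - p 1 < (x 0 - p 0) * (q 1 - p 1) / (q 0 - p 0) := by linarith
    have h3 := (lt_div_iff₀ hd).1 h2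
    nlinarith
  · intro h'
    have h3 : x 1 - p 1 < (x 0 - p 0) * (q 1 - p 1) / (q 0 - p 0) :=
      (lt_div_iff₀ hd).2 (by nlinarith)
    linarith

lemma above_iff' {p q x : Plane} (h : q 0 < p 0) : StrictlyAboveLine p q x ↔ sg p q x < 0 := by
  have hd : q 0 - p 0 < (0:ℝ) := by linarith
  unfold StrictlyAboveLine sg
  constructor
  · intro h'
    have h2 : (x 0 - p 0) * (q 1 - p 1) / (q 0 - p 0) < x 1 - p 1 := by linarith
    have h3 := (div_lt_iff_of_neg hd).1 h2
    nlinarith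
  · intro h'
    have h3 : (x 0 - p 0) * (q 1 - p 1) / (q 0 - p 0) < x 1 - p 1 :=
      (div_lt_iff_of_neg hd).2 (by nlinarith)
    linarith

lemma below_iff' {p q x : Plane} (h : q 0 < p 0) : StrictlyBelowLine p q x ↔ 0 < sg p q x := by
  have hd : q 0 - p 0 < (0:ℝ) := by linarith
  unfold StrictlyBelowLine sg
  constructor
  · intro h'
    have h2 : x 1 - p 1 < (x 0 - p 0) * (q 1 - p 1) / (q 0 - p 0) := by linarith
    have h3 := (lt_div_iff_of_neg hd).1 h2
    nlinarith
  · intro h'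
    have h3 : x 1 - p 1 < (x 0 - p 0) * (q 1 - p 1) / (q 0 - p 0) :=
      (lt_div_iff_of_neg hd).2 (by nlinarith)
    linarith

lemma combo_eq (a b c x : Plane) (hD : sg a b c ≠ 0) :
    (sg b c x / sg a b c) • a + (sg c a x / sg a b c) • b + (sg a b x / sg a b c) • c = x := by
  ext j
  fin_cases j <;>
    simp only [Fin.zero_eta, Fin.mk_one, PiLp.add_apply, PiLp.smul_apply, smul_eq_mul] <;>
    (field_simp; simp only [sg]; ring)

lemma sg_continuous (a b : Plane) : Continuous fun x : Plane => sg a b x := by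
  simp only [sg]
  fun_prop

lemma mem_hull_of_sg_pos {a b c : Plane} {x : Plane}
    (h1 : 0 < sg a b x) (h2 : 0 < sg b c x) (h3 : 0 < sg c a x) :
    x ∈ convexHull ℝ ({a, b, c} : Set Plane) := by
  have hD : 0 < sg a b c := by
    have := sg_sum a b c x; linarith
  have hD' : sg a b c ≠ 0 := ne_of_gt hD
  set D := sg a b c with hDdef
  have hbc : 0 < sg c a x + sg a b x := by linarith
  have hconv : Convex ℝ (convexHull ℝ ({a, b, c} : Set Plane)) := convex_convexHull ℝ _
  have haH : a ∈ convexHull ℝ ({a, b, c} : Set Plane) :=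
    subset_convexHull ℝ _ (by simp)
  have hbH : b ∈ convexHull ℝ ({a, b, c} : Set Plane) :=
    subset_convexHull ℝ _ (by simp)
  have hcH : c ∈ convexHull ℝ ({a, b, c} : Set Plane) :=
    subset_convexHull ℝ _ (by simp)
  have hz : (sg c a x / (sg c a x + sg a b x)) • b + (sg a b x / (sg c a x + sg a b x)) • c
      ∈ convexHull ℝ ({a, b, c} : Set Plane) := by
    refine hconv hbH hcH (by positivity) (by positivity) ?_
    field_simp
  have hx : (sg b c x / D) • a + ((sg c a x + sg a b x) / D) •
      ((sg c a x / (sg c a x + sg a b x)) • b + (sg a b x / (sg c a x + sg a b x)) • c)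
      ∈ convexHull ℝ ({a, b, c} : Set Plane) := by
    refine hconv haH hz (by positivity) (by positivity) ?_
    field_simp
    linarith [sg_sum a b c x]
  convert hx using 1
  rw [smul_add, smul_smul, smul_smul]
  rw [show (sg c a x + sg a b x) / D * (sg c a x / (sg c a x + sg a b x)) = sg c a x / D by
    field_simp]
  rw [show (sg c a x + sg a b x) / D * (sg a b x / (sg c a x + sg a b x)) = sg a b x / D by
    field_simp]
  rw [← add_assoc]
  exact (combo_eq a b c x hD').symm

lemma mem_interior_triangle {a b c : Plane} {x : Plane}
    (h1 : 0 < sg a b x) (h2 : 0 < sg b c x) (h3 : 0 < sg c a x) :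
    x ∈ interior (convexHull ℝ ({a, b, c} : Set Plane)) := by
  rw [mem_interior]
  refine ⟨{y | 0 < sg a b y} ∩ ({y | 0 < sg b c y} ∩ {y | 0 < sg c a y}), ?_, ?_, h1, h2, h3⟩
  · rintro y ⟨hy1, hy2, hy3⟩
    exact mem_hull_of_sg_pos hy1 hy2 hy3
  · exact ((isOpen_lt continuous_const (sg_continuous a b)).inter
      ((isOpen_lt continuous_const (sg_continuous b c)).inter
        (isOpen_lt continuous_const (sg_continuous c a))))

lemma exists_sorted4 (S : Set Plane) (hfin : S.Finite) (hcard : 4 ≤ S.ncard)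
    (hinj : ∀ x ∈ S, ∀ y ∈ S, x 0 = y 0 → x = y) :
    ∃ d0 d1 d2 d3, d0 ∈ S ∧ d1 ∈ S ∧ d2 ∈ S ∧ d3 ∈ S ∧
      d0 0 < d1 0 ∧ d1 0 < d2 0 ∧ d2 0 < d3 0 := by
  classical
  set F := hfin.toFinset with hF
  have hFc : 4 ≤ F.card := by rw [hF, ← Set.ncard_eq_toFinset_card _ hfin]; exact hcard
  have hmemS : ∀ x, x ∈ F → x ∈ S := fun x hx => (Set.Finite.mem_toFinset hfin).1 hx
  obtain ⟨d3, hd3, hm3⟩ := F.exists_max_image (fun x => x 0) (Finset.card_pos.1 (by omega))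
  set F2 := F.erase d3 with hF2
  have hF2c : 3 ≤ F2.card := by rw [hF2, Finset.card_erase_of_mem hd3]; omega
  obtain ⟨d2, hd2, hm2⟩ := F2.exists_max_image (fun x => x 0) (Finset.card_pos.1 (by omega))
  set F1 := F2.erase d2 with hF1
  have hF1c : 2 ≤ F1.card := by rw [hF1, Finset.card_erase_of_mem hd2]; omega
  obtain ⟨d1, hd1, hm1⟩ := F1.exists_max_image (fun x => x 0) (Finset.card_pos.1 (by omega))
  set F0 := F1.erase d1 with hF0
  have hF0c : 1 ≤ F0.card := by rw [hF0, Finset.card_erase_of_mem hd1]; omega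
  obtain ⟨d0, hd0⟩ := Finset.card_pos.1 (by omega : 0 < F0.card)
  have h0F : d0 ∈ F :=
    Finset.mem_of_mem_erase (Finset.mem_of_mem_erase (Finset.mem_of_mem_erase hd0))
  have h1F : d1 ∈ F := Finset.mem_of_mem_erase (Finset.mem_of_mem_erase hd1)
  have h2F : d2 ∈ F := Finset.mem_of_mem_erase hd2
  have hs0 := hmemS _ h0F
  have hs1 := hmemS _ h1F
  have hs2 := hmemS _ h2F
  have hs3 := hmemS _ hd3
  refine ⟨d0, d1, d2, d3, hs0, hs1, hs2, hs3, ?_, ?_, ?_⟩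
  · have hle := hm1 _ (Finset.mem_of_mem_erase hd0)
    have hne : d0 ≠ d1 := Finset.ne_of_mem_erase hd0
    rcases lt_or_eq_of_le hle with h | h
    · exact h
    · exact absurd (hinj _ hs0 _ hs1 h) hne
  · have hle := hm2 _ (Finset.mem_of_mem_erase hd1)
    have hne : d1 ≠ d2 := Finset.ne_of_mem_erase hd1
    rcases lt_or_eq_of_le hle with h | h
    · exact h
    · exact absurd (hinj _ hs1 _ hs2 h) hne
  · have hle := hm3 _ h2F
    have hne : d2 ≠ d3 := Finset.ne_of_mem_erase hd2
    rcases lt_or_eq_of_le hle with h | h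
    · exact h
    · exact absurd (hinj _ hs2 _ hs3 h) hne

lemma lc_cover {H : Set Plane} {φ : Plane → ℝ} (hc : LevelledConds H φ) :
    ∀ x ∈ H, x ∈ levelSubset φ H 0 2 ∨ x ∈ levelSubset φ H 1 2 := by
  intro x hx
  obtain ⟨-, -, -, s, t, himg⟩ := hc
  have h1 : φ x ∈ φ '' H := Set.mem_image_of_mem φ hx
  rw [himg] at h1
  obtain ⟨m, -, hm⟩ := h1
  have hm' : (m : ℝ) = φ x := hm
  rcases Int.even_or_odd m with ⟨k, hk⟩ | ⟨k, hk⟩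
  · left
    exact ⟨hx, k, by rw [← hm', hk]; push_cast; ring⟩
  · right
    exact ⟨hx, k, by rw [← hm', hk]; push_cast; ring⟩

lemma lc_disj {H : Set Plane} {φ : Plane → ℝ} :
    ∀ x, x ∈ levelSubset φ H 0 2 → x ∈ levelSubset φ H 1 2 → False := by
  rintro x ⟨-, k, hk⟩ ⟨-, k', hk'⟩
  rw [hk] at hk'
  have : ((2 * k : ℤ) : ℝ) = ((1 + 2 * k' : ℤ) : ℝ) := by push_cast; push_cast at hk'; linarith
  have := Int.cast_injective this
  omega

lemma lc_xinj {H : Set Plane} {φ : Plane → ℝ} (hc : LevelledConds H φ) :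
    ∀ x ∈ H, ∀ y ∈ H, x 0 = y 0 → x = y := by
  intro x hx y hy hxy
  obtain ⟨-, ⟨a, b, -, hab⟩, hinj, -⟩ := hc
  exact hinj hx hy (by rw [hab, hab, hxy])

lemma lc_alt {H : Set Plane} {φ : Plane → ℝ} (hc : LevelledConds H φ) (e : ℤ) :
    ∀ p ∈ levelSubset φ H e 2, ∀ q ∈ levelSubset φ H e 2, p 0 < q 0 →
      ∃ u ∈ levelSubset φ H (1 - e) 2, p 0 < u 0 ∧ u 0 < q 0 := by
  rintro p ⟨hpH, kp, hkp⟩ q ⟨hqH, kq, hkq⟩ hpq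
  obtain ⟨hfin, ⟨a, b, ha, hab⟩, hinj, s, t, himg⟩ := hc
  have hmp : φ p = ((e + 2 * kp : ℤ) : ℝ) := by rw [hkp]; push_cast; ring
  have hmq : φ q = ((e + 2 * kq : ℤ) : ℝ) := by rw [hkq]; push_cast; ring
  have hIcc : ∀ x ∈ H, ∀ m : ℤ, φ x = (m : ℝ) → m ∈ Set.Icc s t := by
    intro x hx m hm
    have h1 : φ x ∈ φ '' H := Set.mem_image_of_mem φ hx
    rw [himg] at h1
    obtain ⟨m', hmI', hm'⟩ := h1
    have hm'' : (m' : ℝ) = φ x := hm'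
    have : m' = m := Int.cast_injective (by rw [hm'', hm])
    rwa [← this]
  have hbp := hIcc p hpH _ hmp
  have hbq := hIcc q hqH _ hmq
  have hex : ∀ n : ℤ, n ∈ Set.Icc s t → ∃ u ∈ H, φ u = (n : ℝ) := by
    intro n hn
    have : (n : ℝ) ∈ φ '' H := by rw [himg]; exact ⟨n, hn, rfl⟩
    obtain ⟨u, huH, hu⟩ := this
    exact ⟨u, huH, hu⟩
  rcases ha.lt_or_gt with haneg | hapos
  · have hφlt : φ q < φ p := by rw [hab p, hab q]; nlinarith
    have hklt : kq < kp := by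
      rw [hmp, hmq] at hφlt
      have := Int.cast_lt.1 hφlt
      omega
    obtain ⟨u, huH, hun⟩ := hex (e + 2 * kq + 1)
      (by simp only [Set.mem_Icc] at hbp hbq ⊢; omega)
    refine ⟨u, ⟨huH, kq + e, by rw [hun]; push_cast; ring⟩, ?_, ?_⟩
    · have h1 : φ u < φ p := by
        rw [hun, hmp]
        exact_mod_cast (by omega : e + 2 * kq + 1 < e + 2 * kp)
      rw [hab p, hab u] at h1
      nlinarith
    · have h2 : φ q < φ u := by
        rw [hun, hmq]
        exact_mod_cast (by omega : e + 2 * kq < e + 2 * kq + 1)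
      rw [hab q, hab u] at h2
      nlinarith
  · have hφlt : φ p < φ q := by rw [hab p, hab q]; nlinarith
    have hklt : kp < kq := by
      rw [hmp, hmq] at hφlt
      have := Int.cast_lt.1 hφlt
      omega
    obtain ⟨u, huH, hun⟩ := hex (e + 2 * kp + 1)
      (by simp only [Set.mem_Icc] at hbp hbq ⊢; omega)
    refine ⟨u, ⟨huH, kp + e, by rw [hun]; push_cast; ring⟩, ?_, ?_⟩
    · have h1 : φ p < φ u := by
        rw [hun, hmp]
        exact_mod_cast (by omega : e + 2 * kp < e + 2 * kp + 1)
      rw [hab p, hab u] at h1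
      nlinarith
    · have h2 : φ u < φ q := by
        rw [hun, hmq]
        exact_mod_cast (by omega : e + 2 * kp + 1 < e + 2 * kq)
      rw [hab q, hab u] at h2
      nlinarith

lemma highAbove_sgA {A B : Set Plane} (h : HighAbove A B) :
    ∀ p ∈ B, ∀ q ∈ B, p 0 < q 0 → ∀ u ∈ A, 0 < sg p q u :=
  fun p hp q hq hpq u hu => (above_iff hpq).1 (h.2 p hp q hq (ne_of_lt hpq) u hu)

lemma highAbove_sgB {A B : Set Plane} (h : HighAbove A B) :
    ∀ p ∈ A, ∀ q ∈ A, p 0 < q 0 → ∀ l ∈ B, sg p q l < 0 :=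
  fun p hp q hq hpq l hl => (below_iff hpq).1 (h.1 p hp q hq (ne_of_lt hpq) l hl)

lemma sg_ne_A {A B : Set Plane} (h : HighAbove A B) {x y z : Plane}
    (hx : x ∈ A) (hy : y ∈ A) (hz : z ∈ B) (hxy : x 0 ≠ y 0) : sg x y z ≠ 0 := by
  rcases hxy.lt_or_gt with hlt | hlt
  · exact ne_of_lt (highAbove_sgB h x hx y hy hlt z hz)
  · have := highAbove_sgB h y hy x hx hlt z hz
    rw [sg_swap01] at this
    intro hE; rw [hE] at this; simp at this

lemma sg_ne_B {A B : Set Plane} (h : HighAbove A B) {x y z : Plane}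
    (hx : x ∈ B) (hy : y ∈ B) (hz : z ∈ A) (hxy : x 0 ≠ y 0) : sg x y z ≠ 0 := by
  rcases hxy.lt_or_gt with hlt | hlt
  · exact ne_of_gt (highAbove_sgA h x hx y hy hlt z hz)
  · have := highAbove_sgA h y hy x hx hlt z hz
    rw [sg_swap01] at this
    intro hE; rw [hE] at this; simp at this

lemma horton_gp {H : Set Plane} {φ : Plane → ℝ} (hH : IsHorton H φ) :
    ∀ p ∈ H, ∀ q ∈ H, ∀ r ∈ H, p 0 ≠ q 0 → q 0 ≠ r 0 → p 0 ≠ r 0 → sg p q r ≠ 0 := by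
  induction hH with
  | base H φ hcond hsub =>
    intro p hp q hq r hr hpq _ _
    exact absurd (congrArg (fun z : Plane => z 0) (hsub hp hq)) hpq
  | step H φ hcond h0 h1 hsplit ih0 ih1 =>
    intro p hp q hq r hr hpq hqr hpr
    have cov := lc_cover hcond
    have key : ∀ x y z : Plane,
        ((x ∈ levelSubset φ H 0 2 ∧ y ∈ levelSubset φ H 0 2 ∧ z ∈ levelSubset φ H 1 2) ∨
         (x ∈ levelSubset φ H 1 2 ∧ y ∈ levelSubset φ H 1 2 ∧ z ∈ levelSubset φ H 0 2)) →
        x 0 ≠ y 0 → sg x y z ≠ 0 := by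
      rintro x y z (⟨hx, hy, hz⟩ | ⟨hx, hy, hz⟩) hxy <;> rcases hsplit with hHA | hHA
      · exact sg_ne_B hHA hx hy hz hxy
      · exact sg_ne_A hHA hx hy hz hxy
      · exact sg_ne_A hHA hx hy hz hxy
      · exact sg_ne_B hHA hx hy hz hxy
    rcases cov p hp with hp' | hp' <;> rcases cov q hq with hq' | hq' <;>
      rcases cov r hr with hr' | hr'
    · exact ih0 p hp' q hq' r hr' hpq hqr hpr
    · exact key p q r (Or.inl ⟨hp', hq', hr'⟩) hpq
    · rw [sg_swap]
      exact neg_ne_zero.2 (key p r q (Or.inl ⟨hp', hr', hq'⟩) hpr)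
    · rw [sg_cyclic]
      exact key q r p (Or.inr ⟨hq', hr', hp'⟩) hqr
    · rw [sg_cyclic]
      exact key q r p (Or.inl ⟨hq', hr', hp'⟩) hqr
    · rw [sg_swap]
      exact neg_ne_zero.2 (key p r q (Or.inr ⟨hp', hr', hq'⟩) hpr)
    · exact key p q r (Or.inr ⟨hp', hq', hr'⟩) hpq
    · exact ih1 p hp' q hq' r hr' hpq hqr hpr
lemma step_core
    (H L U : Set Plane)
    (hLH : L ⊆ H) (hUH : U ⊆ H)
    (hcover : ∀ x ∈ H, x ∈ L ∨ x ∈ U)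
    (hdisj : ∀ x, x ∈ L → x ∈ U → False)
    (hxinj : ∀ x ∈ H, ∀ y ∈ H, x 0 = y 0 → x = y)
    (haltL : ∀ p ∈ L, ∀ q ∈ L, p 0 < q 0 → ∃ u ∈ U, p 0 < u 0 ∧ u 0 < q 0)
    (haltU : ∀ p ∈ U, ∀ q ∈ U, p 0 < q 0 → ∃ l ∈ L, p 0 < l 0 ∧ l 0 < q 0)
    (hA : ∀ p ∈ L, ∀ q ∈ L, p 0 < q 0 → ∀ u ∈ U, 0 < sg p q u)
    (hB : ∀ p ∈ U, ∀ q ∈ U, p 0 < q 0 → ∀ l ∈ L, sg p q l < 0)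
    (hgp : ∀ p ∈ H, ∀ q ∈ H, ∀ r ∈ H, p 0 ≠ q 0 → q 0 ≠ r 0 → p 0 ≠ r 0 → sg p q r ≠ 0)
    (ihL : (UpperRClosed 4 L ∧ LowerRClosed 4 L) ∧ HoleFree 7 L)
    (ihU : (UpperRClosed 4 U ∧ LowerRClosed 4 U) ∧ HoleFree 7 U) :
    (UpperRClosed 4 H ∧ LowerRClosed 4 H) ∧ HoleFree 7 H := by
  have hup : UpperRClosed 4 H := by
    intro p hp hcs
    obtain ⟨hx, hbel⟩ := hcs
    have hcup : ∀ i j k, i < j → j < k → k < 4 → sg (p i) (p k) (p j) < 0 := fun i j k hij hjk hk4 =>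
      (below_iff (hx i k (hij.trans hjk) hk4)).1 (hbel i j k hij hjk hk4)
    by_cases hall0 : ∀ i, i < 4 → p i ∈ L
    · obtain ⟨q, hqL, hq⟩ := ihL.1.1 p hall0 ⟨hx, hbel⟩
      exact ⟨q, hLH hqL, hq⟩
    by_cases hall1 : ∀ i, i < 4 → p i ∈ U
    · obtain ⟨q, hqU, hq⟩ := ihU.1.1 p hall1 ⟨hx, hbel⟩
      exact ⟨q, hUH hqU, hq⟩
    push_neg at hall0 hall1
    obtain ⟨i0, hi04, hi0⟩ := hall0
    obtain ⟨j0, hj04, hj0⟩ := hall1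
    have mem : ∀ i, i < 4 → p i ∈ L ∨ p i ∈ U := fun i h => hcover _ (hp i h)
    have hU_i0 : p i0 ∈ U := (mem i0 hi04).resolve_left hi0
    have hL_j0 : p j0 ∈ L := (mem j0 hj04).resolve_right hj0
    have E1 : ∀ i j k, i < j → j < k → k < 4 → p i ∈ L → p j ∈ U → p k ∈ L → False := by
      intro i j k hij hjk hk4 hiL hjU hkL
      have := hA _ hiL _ hkL (hx i k (hij.trans hjk) hk4) _ hjU
      linarith [hcup i j k hij hjk hk4]
    have E2 : ∀ i j k, i < j → j < k → k < 4 → p i ∈ U → p j ∈ U → p k ∈ L → False := by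
      intro i j k hij hjk hk4 hiU hjU hkL
      have h2 := hB _ hiU _ hjU (hx i j hij (by omega)) _ hkL
      have e2 : sg (p i) (p j) (p k) = - sg (p i) (p k) (p j) := sg_swap _ _ _
      linarith [hcup i j k hij hjk hk4]
    have E3 : ∀ i j k, i < j → j < k → k < 4 → p i ∈ L → p j ∈ U → p k ∈ U → False := by
      intro i j k hij hjk hk4 hiL hjU hkU
      have h2 := hB _ hjU _ hkU (hx j k hjk hk4) _ hiL
      have e1 : sg (p i) (p j) (p k) = sg (p j) (p k) (p i) := sg_cyclic _ _ _
      have e2 : sg (p i) (p j) (p k) = - sg (p i) (p k) (p j) := sg_swap _ _ _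
      linarith [hcup i j k hij hjk hk4]
    have h1L : p 1 ∈ L := by
      by_contra h1U'
      have h1U : p 1 ∈ U := (mem 1 (by omega)).resolve_left h1U'
      have h0U : p 0 ∈ U := by
        by_contra h0L'
        have h0L : p 0 ∈ L := (mem 0 (by omega)).resolve_right h0L'
        rcases mem 2 (by omega) with h2L | h2U
        · exact E1 0 1 2 (by omega) (by omega) (by omega) h0L h1U h2L
        · exact E3 0 1 2 (by omega) (by omega) (by omega) h0L h1U h2U
      have h2U : p 2 ∈ U := by
        by_contra h2L'
        exact E2 0 1 2 (by omega) (by omega) (by omega) h0U h1U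
          ((mem 2 (by omega)).resolve_right h2L')
      have h3U : p 3 ∈ U := by
        by_contra h3L'
        exact E2 1 2 3 (by omega) (by omega) (by omega) h1U h2U
          ((mem 3 (by omega)).resolve_right h3L')
      interval_cases j0
      · exact hdisj _ hL_j0 h0U
      · exact hdisj _ hL_j0 h1U
      · exact hdisj _ hL_j0 h2U
      · exact hdisj _ hL_j0 h3U
    have h2L : p 2 ∈ L := by
      by_contra h2U'
      have h2U : p 2 ∈ U := (mem 2 (by omega)).resolve_left h2U'
      rcases mem 3 (by omega) with h3L | h3U
      · exact E1 1 2 3 (by omega) (by omega) (by omega) h1L h2U h3L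
      · exact E3 1 2 3 (by omega) (by omega) (by omega) h1L h2U h3U
    obtain ⟨u, huU, hu1, hu2⟩ := haltL _ h1L _ h2L (hx 1 2 (by omega) (by omega))
    refine ⟨u, hUH huU, (hx 0 1 (by omega) (by omega)).trans hu1, ?_, ?_⟩
    · show u 0 < p 3 0
      exact hu2.trans (hx 2 3 (by omega) (by omega))
    · intro i hi hle1 hle2
      have hi' : i < 3 := by omega
      interval_cases i
      · exfalso
        norm_num at hle2
        linarith
      · exact (above_iff (hx 1 2 (by omega) (by omega))).2
          (hA _ h1L _ h2L (hx 1 2 (by omega) (by omega)) _ huU)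
      · exfalso
        norm_num at hle1
        linarith
  have hlo : LowerRClosed 4 H := by
    intro p hp hcs
    obtain ⟨hx, habv⟩ := hcs
    have hcap : ∀ i j k, i < j → j < k → k < 4 → 0 < sg (p i) (p k) (p j) := fun i j k hij hjk hk4 =>
      (above_iff (hx i k (hij.trans hjk) hk4)).1 (habv i j k hij hjk hk4)
    by_cases hall0 : ∀ i, i < 4 → p i ∈ L
    · obtain ⟨q, hqL, hq⟩ := ihL.1.2 p hall0 ⟨hx, habv⟩
      exact ⟨q, hLH hqL, hq⟩
    by_cases hall1 : ∀ i, i < 4 → p i ∈ U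
    · obtain ⟨q, hqU, hq⟩ := ihU.1.2 p hall1 ⟨hx, habv⟩
      exact ⟨q, hUH hqU, hq⟩
    push_neg at hall0 hall1
    obtain ⟨i0, hi04, hi0⟩ := hall0
    obtain ⟨j0, hj04, hj0⟩ := hall1
    have mem : ∀ i, i < 4 → p i ∈ L ∨ p i ∈ U := fun i h => hcover _ (hp i h)
    have hU_i0 : p i0 ∈ U := (mem i0 hi04).resolve_left hi0
    have hL_j0 : p j0 ∈ L := (mem j0 hj04).resolve_right hj0
    have F1 : ∀ i j k, i < j → j < k → k < 4 → p i ∈ U → p j ∈ L → p k ∈ U → False := by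
      intro i j k hij hjk hk4 hiU hjL hkU
      have := hB _ hiU _ hkU (hx i k (hij.trans hjk) hk4) _ hjL
      linarith [hcap i j k hij hjk hk4]
    have F2 : ∀ i j k, i < j → j < k → k < 4 → p i ∈ L → p j ∈ L → p k ∈ U → False := by
      intro i j k hij hjk hk4 hiL hjL hkU
      have h2 := hA _ hiL _ hjL (hx i j hij (by omega)) _ hkU
      have e2 : sg (p i) (p j) (p k) = - sg (p i) (p k) (p j) := sg_swap _ _ _
      linarith [hcap i j k hij hjk hk4]
    have F3 : ∀ i j k, i < j → j < k → k < 4 → p i ∈ U → p j ∈ L → p k ∈ L → False := by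
      intro i j k hij hjk hk4 hiU hjL hkL
      have h2 := hA _ hjL _ hkL (hx j k hjk hk4) _ hiU
      have e1 : sg (p i) (p j) (p k) = sg (p j) (p k) (p i) := sg_cyclic _ _ _
      have e2 : sg (p i) (p j) (p k) = - sg (p i) (p k) (p j) := sg_swap _ _ _
      linarith [hcap i j k hij hjk hk4]
    have h1U : p 1 ∈ U := by
      by_contra h1L'
      have h1L : p 1 ∈ L := (mem 1 (by omega)).resolve_right h1L'
      have h0L : p 0 ∈ L := by
        by_contra h0U'
        have h0U : p 0 ∈ U := (mem 0 (by omega)).resolve_left h0U'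
        rcases mem 2 (by omega) with h2L | h2U
        · exact F3 0 1 2 (by omega) (by omega) (by omega) h0U h1L h2L
        · exact F1 0 1 2 (by omega) (by omega) (by omega) h0U h1L h2U
      have h2L : p 2 ∈ L := by
        by_contra h2U'
        exact F2 0 1 2 (by omega) (by omega) (by omega) h0L h1L
          ((mem 2 (by omega)).resolve_left h2U')
      have h3L : p 3 ∈ L := by
        by_contra h3U'
        exact F2 1 2 3 (by omega) (by omega) (by omega) h1L h2L
          ((mem 3 (by omega)).resolve_left h3U')
      interval_cases i0
      · exact hdisj _ h0L hU_i0
      · exact hdisj _ h1L hU_i0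
      · exact hdisj _ h2L hU_i0
      · exact hdisj _ h3L hU_i0
    have h2U : p 2 ∈ U := by
      by_contra h2L'
      have h2L : p 2 ∈ L := (mem 2 (by omega)).resolve_right h2L'
      rcases mem 3 (by omega) with h3L | h3U
      · exact F3 1 2 3 (by omega) (by omega) (by omega) h1U h2L h3L
      · exact F1 1 2 3 (by omega) (by omega) (by omega) h1U h2L h3U
    obtain ⟨l, hlL, hl1, hl2⟩ := haltU _ h1U _ h2U (hx 1 2 (by omega) (by omega))
    refine ⟨l, hLH hlL, (hx 0 1 (by omega) (by omega)).trans hl1, ?_, ?_⟩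
    · show l 0 < p 3 0
      exact hl2.trans (hx 2 3 (by omega) (by omega))
    · intro i hi hle1 hle2
      have hi' : i < 3 := by omega
      interval_cases i
      · exfalso
        norm_num at hle2
        linarith
      · exact (below_iff (hx 1 2 (by omega) (by omega))).2
          (hB _ h1U _ h2U (hx 1 2 (by omega) (by omega)) _ hlL)
      · exfalso
        norm_num at hle1
        linarith
  refine ⟨⟨hup, hlo⟩, ?_⟩
  intro T hTH hTfin hT7
  by_cases hTL : ∃ x ∈ T, x ∈ L
  swap
  · push_neg at hTL
    have hTU' : ∀ x ∈ T, x ∈ U := fun x hx => (hcover x (hTH hx)).resolve_left (hTL x hx)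
    obtain ⟨s, hsU, hsi⟩ := ihU.2 T hTU' hTfin hT7
    exact ⟨s, hUH hsU, hsi⟩
  by_cases hTU : ∃ x ∈ T, x ∈ U
  swap
  · push_neg at hTU
    have hTL' : ∀ x ∈ T, x ∈ L := fun x hx => (hcover x (hTH hx)).resolve_right (hTU x hx)
    obtain ⟨s, hsL, hsi⟩ := ihL.2 T hTL' hTfin hT7
    exact ⟨s, hLH hsL, hsi⟩
  obtain ⟨w, hwT, hwU⟩ := hTU
  obtain ⟨v, hvT, hvL⟩ := hTL
  have hdisj2 : Disjoint (T ∩ L) (T ∩ U) := by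
    rw [Set.disjoint_left]
    rintro x ⟨-, hxL⟩ ⟨-, hxU⟩
    exact hdisj x hxL hxU
  have hunion : (T ∩ L) ∪ (T ∩ U) = T := by
    ext x
    constructor
    · rintro (⟨h, -⟩ | ⟨h, -⟩) <;> exact h
    · intro hx
      rcases hcover x (hTH hx) with h | h
      · exact Or.inl ⟨hx, h⟩
      · exact Or.inr ⟨hx, h⟩
  have hfinL : (T ∩ L).Finite := hTfin.subset Set.inter_subset_left
  have hfinU : (T ∩ U).Finite := hTfin.subset Set.inter_subset_left
  have hcards : (T ∩ L).ncard + (T ∩ U).ncard = 7 := by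
    rw [← Set.ncard_union_eq hdisj2 hfinL hfinU, hunion, hT7]
  rcases (by omega : 4 ≤ (T ∩ L).ncard ∨ 4 ≤ (T ∩ U).ncard) with hbig | hbig
  · -- at least 4 points in L: find a point of L above a sub-segment, inside a triangle
    have fin : ∀ a b : Plane, a ∈ T ∩ L → b ∈ T ∩ L → ∀ q ∈ L, a 0 < q 0 → q 0 < b 0 →
        0 < sg a b q → ∃ s ∈ H, s ∈ interior (convexHull ℝ T) := by
      intro a b haTL hbTL q hqL haq hqb hsg
      refine ⟨q, hLH hqL, ?_⟩
      have htri : q ∈ interior (convexHull ℝ ({a, b, w} : Set Plane)) := by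
        apply mem_interior_triangle hsg
        · rw [sg_cyclic b w q, sg_cyclic w q b]
          exact hA _ hqL _ hbTL.2 hqb _ hwU
        · rw [sg_cyclic w a q]
          exact hA _ haTL.2 _ hqL haq _ hwU
      refine interior_mono (convexHull_mono ?_) htri
      intro y hy
      rcases hy with h | h | h
      · exact h ▸ haTL.1
      · exact h ▸ hbTL.1
      · exact (Set.mem_singleton_iff.1 h) ▸ hwT
    obtain ⟨d0, d1, d2, d3, h0, h1, h2, h3, h01, h12, h23⟩ :=
      exists_sorted4 (T ∩ L) hfinL hbig
        (fun x hx y hy => hxinj x (hTH hx.1) y (hTH hy.1))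
    have hH0 : d0 ∈ H := hTH h0.1
    have hH1 : d1 ∈ H := hTH h1.1
    have hH2 : d2 ∈ H := hTH h2.1
    have hH3 : d3 ∈ H := hTH h3.1
    by_cases c1 : 0 < sg d0 d2 d1
    · exact fin d0 d2 h0 h2 d1 h1.2 h01 h12 c1
    by_cases c2 : 0 < sg d0 d3 d1
    · exact fin d0 d3 h0 h3 d1 h1.2 h01 (h12.trans h23) c2
    by_cases c3 : 0 < sg d0 d3 d2
    · exact fin d0 d3 h0 h3 d2 h2.2 (h01.trans h12) h23 c3
    by_cases c4 : 0 < sg d1 d3 d2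
    · exact fin d1 d3 h1 h3 d2 h2.2 h12 h23 c4
    have n1 : sg d0 d2 d1 < 0 :=
      lt_of_le_of_ne (not_lt.1 c1) (hgp d0 hH0 d2 hH2 d1 hH1 (ne_of_lt (h01.trans h12))
        (ne_of_gt h12) (ne_of_lt h01))
    have n2 : sg d0 d3 d1 < 0 :=
      lt_of_le_of_ne (not_lt.1 c2) (hgp d0 hH0 d3 hH3 d1 hH1
        (ne_of_lt (h01.trans (h12.trans h23))) (ne_of_gt (h12.trans h23)) (ne_of_lt h01))
    have n3 : sg d0 d3 d2 < 0 :=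
      lt_of_le_of_ne (not_lt.1 c3) (hgp d0 hH0 d3 hH3 d2 hH2
        (ne_of_lt (h01.trans (h12.trans h23))) (ne_of_gt h23) (ne_of_lt (h01.trans h12)))
    have n4 : sg d1 d3 d2 < 0 :=
      lt_of_le_of_ne (not_lt.1 c4) (hgp d1 hH1 d3 hH3 d2 hH2
        (ne_of_lt (h12.trans h23)) (ne_of_gt h23) (ne_of_lt h12))
    set dd : ℕ → Plane := fun n => if n = 0 then d0 else if n = 1 then d1 else
      if n = 2 then d2 else d3 with hdd
    have hddL : ∀ i, i < 4 → dd i ∈ L := by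
      intro i hi
      interval_cases i <;> simp only [hdd] <;> norm_num
      · exact h0.2
      · exact h1.2
      · exact h2.2
      · exact h3.2
    have hseq : ConvexSeq 4 dd := by
      constructor
      · intro i j hij hj4
        interval_cases j <;> interval_cases i <;> simp only [hdd] <;> norm_num <;> linarith
      · intro i j k hij hjk hk4
        interval_cases k <;> interval_cases j <;> interval_cases i <;>
          simp only [hdd] <;> norm_num
        · exact (below_iff (h01.trans h12)).2 n1
        · exact (below_iff (h01.trans (h12.trans h23))).2 n2
        · exact (below_iff (h01.trans (h12.trans h23))).2 n3
        · exact (below_iff (h12.trans h23)).2 n4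
    obtain ⟨q, hqL, hq0, hq3, hseg⟩ := ihL.1.1 dd hddL hseq
    have hq0' : d0 0 < q 0 := by simpa [hdd] using hq0
    have hq3' : q 0 < d3 0 := by simpa [hdd] using hq3
    have hqH : q ∈ H := hLH hqL
    rcases le_or_gt (q 0) (d1 0) with hc | hc
    · have hne : q 0 ≠ d1 0 := by
        intro hE
        have hqd : q = d1 := hxinj q hqH d1 hH1 hE
        have := hseg 0 (by omega) (by simp only [hdd]; norm_num; linarith)
          (by simp only [hdd]; norm_num; linarith)
        simp only [hdd] at this
        norm_num at this
        rw [hqd] at this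
        have h0' := (above_iff h01).1 this
        rw [sg_self] at h0'
        exact lt_irrefl _ h0'
      have hlt : q 0 < d1 0 := lt_of_le_of_ne hc hne
      have habove := hseg 0 (by omega) (by simp only [hdd]; norm_num; linarith)
        (by simp only [hdd]; norm_num; linarith)
      simp only [hdd] at habove
      norm_num at habove
      exact fin d0 d1 h0 h1 q hqL hq0' hlt ((above_iff h01).1 habove)
    rcases le_or_gt (q 0) (d2 0) with hc2 | hc2
    · have hne : q 0 ≠ d2 0 := by
        intro hE
        have hqd : q = d2 := hxinj q hqH d2 hH2 hE
        have := hseg 1 (by omega) (by simp only [hdd]; norm_num; linarith)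
          (by simp only [hdd]; norm_num; linarith)
        simp only [hdd] at this
        norm_num at this
        rw [hqd] at this
        have h0' := (above_iff h12).1 this
        rw [sg_self] at h0'
        exact lt_irrefl _ h0'
      have hlt : q 0 < d2 0 := lt_of_le_of_ne hc2 hne
      have habove := hseg 1 (by omega) (by simp only [hdd]; norm_num; linarith)
        (by simp only [hdd]; norm_num; linarith)
      simp only [hdd] at habove
      norm_num at habove
      exact fin d1 d2 h1 h2 q hqL hc hlt ((above_iff h12).1 habove)
    · have habove := hseg 2 (by omega) (by simp only [hdd]; norm_num; linarith)
        (by simp only [hdd]; norm_num; linarith)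
      simp only [hdd] at habove
      norm_num at habove
      exact fin d2 d3 h2 h3 q hqL hc2 hq3' ((above_iff h23).1 habove)
  · -- at least 4 points in U
    have fin : ∀ a b : Plane, a ∈ T ∩ U → b ∈ T ∩ U → ∀ q ∈ U, a 0 < q 0 → q 0 < b 0 →
        sg a b q < 0 → ∃ s ∈ H, s ∈ interior (convexHull ℝ T) := by
      intro a b haTU hbTU q hqU haq hqb hsg
      refine ⟨q, hUH hqU, ?_⟩
      have htri : q ∈ interior (convexHull ℝ ({b, a, v} : Set Plane)) := by
        apply mem_interior_triangle
        · rw [sg_swap01 b a q]; linarith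
        · rw [show sg a v q = - sg a q v from sg_swap a v q]
          have := hB _ haTU.2 _ hqU haq _ hvL
          linarith
        · rw [sg_cyclic v b q, show sg b q v = - sg q b v from sg_swap01 b q v]
          have := hB _ hqU _ hbTU.2 hqb _ hvL
          linarith
      refine interior_mono (convexHull_mono ?_) htri
      intro y hy
      rcases hy with h | h | h
      · exact h ▸ hbTU.1
      · exact h ▸ haTU.1
      · exact (Set.mem_singleton_iff.1 h) ▸ hvT
    obtain ⟨d0, d1, d2, d3, h0, h1, h2, h3, h01, h12, h23⟩ :=
      exists_sorted4 (T ∩ U) hfinU hbig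
        (fun x hx y hy => hxinj x (hTH hx.1) y (hTH hy.1))
    have hH0 : d0 ∈ H := hTH h0.1
    have hH1 : d1 ∈ H := hTH h1.1
    have hH2 : d2 ∈ H := hTH h2.1
    have hH3 : d3 ∈ H := hTH h3.1
    by_cases c1 : sg d0 d2 d1 < 0
    · exact fin d0 d2 h0 h2 d1 h1.2 h01 h12 c1
    by_cases c2 : sg d0 d3 d1 < 0
    · exact fin d0 d3 h0 h3 d1 h1.2 h01 (h12.trans h23) c2
    by_cases c3 : sg d0 d3 d2 < 0
    · exact fin d0 d3 h0 h3 d2 h2.2 (h01.trans h12) h23 c3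
    by_cases c4 : sg d1 d3 d2 < 0
    · exact fin d1 d3 h1 h3 d2 h2.2 h12 h23 c4
    have n1 : 0 < sg d0 d2 d1 :=
      lt_of_le_of_ne (not_lt.1 c1) (Ne.symm (hgp d0 hH0 d2 hH2 d1 hH1
        (ne_of_lt (h01.trans h12)) (ne_of_gt h12) (ne_of_lt h01)))
    have n2 : 0 < sg d0 d3 d1 :=
      lt_of_le_of_ne (not_lt.1 c2) (Ne.symm (hgp d0 hH0 d3 hH3 d1 hH1
        (ne_of_lt (h01.trans (h12.trans h23))) (ne_of_gt (h12.trans h23)) (ne_of_lt h01)))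
    have n3 : 0 < sg d0 d3 d2 :=
      lt_of_le_of_ne (not_lt.1 c3) (Ne.symm (hgp d0 hH0 d3 hH3 d2 hH2
        (ne_of_lt (h01.trans (h12.trans h23))) (ne_of_gt h23) (ne_of_lt (h01.trans h12))))
    have n4 : 0 < sg d1 d3 d2 :=
      lt_of_le_of_ne (not_lt.1 c4) (Ne.symm (hgp d1 hH1 d3 hH3 d2 hH2
        (ne_of_lt (h12.trans h23)) (ne_of_gt h23) (ne_of_lt h12)))
    set dd : ℕ → Plane := fun n => if n = 0 then d0 else if n = 1 then d1 else
      if n = 2 then d2 else d3 with hdd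
    have hddU : ∀ i, i < 4 → dd i ∈ U := by
      intro i hi
      interval_cases i <;> simp only [hdd] <;> norm_num
      · exact h0.2
      · exact h1.2
      · exact h2.2
      · exact h3.2
    have hseq : ConcaveSeq 4 dd := by
      constructor
      · intro i j hij hj4
        interval_cases j <;> interval_cases i <;> simp only [hdd] <;> norm_num <;> linarith
      · intro i j k hij hjk hk4
        interval_cases k <;> interval_cases j <;> interval_cases i <;>
          simp only [hdd] <;> norm_num
        · exact (above_iff (h01.trans h12)).2 n1
        · exact (above_iff (h01.trans (h12.trans h23))).2 n2
        · exact (above_iff (h01.trans (h12.trans h23))).2 n3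
        · exact (above_iff (h12.trans h23)).2 n4
    obtain ⟨q, hqU, hq0, hq3, hseg⟩ := ihU.1.2 dd hddU hseq
    have hq0' : d0 0 < q 0 := by simpa [hdd] using hq0
    have hq3' : q 0 < d3 0 := by simpa [hdd] using hq3
    have hqH : q ∈ H := hUH hqU
    rcases le_or_gt (q 0) (d1 0) with hc | hc
    · have hne : q 0 ≠ d1 0 := by
        intro hE
        have hqd : q = d1 := hxinj q hqH d1 hH1 hE
        have := hseg 0 (by omega) (by simp only [hdd]; norm_num; linarith)
          (by simp only [hdd]; norm_num; linarith)
        simp only [hdd] at this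
        norm_num at this
        rw [hqd] at this
        have h0' := (below_iff h01).1 this
        rw [sg_self] at h0'
        exact lt_irrefl _ h0'
      have hlt : q 0 < d1 0 := lt_of_le_of_ne hc hne
      have hbelow := hseg 0 (by omega) (by simp only [hdd]; norm_num; linarith)
        (by simp only [hdd]; norm_num; linarith)
      simp only [hdd] at hbelow
      norm_num at hbelow
      exact fin d0 d1 h0 h1 q hqU hq0' hlt ((below_iff h01).1 hbelow)
    rcases le_or_gt (q 0) (d2 0) with hc2 | hc2
    · have hne : q 0 ≠ d2 0 := by
        intro hE
        have hqd : q = d2 := hxinj q hqH d2 hH2 hE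
        have := hseg 1 (by omega) (by simp only [hdd]; norm_num; linarith)
          (by simp only [hdd]; norm_num; linarith)
        simp only [hdd] at this
        norm_num at this
        rw [hqd] at this
        have h0' := (below_iff h12).1 this
        rw [sg_self] at h0'
        exact lt_irrefl _ h0'
      have hlt : q 0 < d2 0 := lt_of_le_of_ne hc2 hne
      have hbelow := hseg 1 (by omega) (by simp only [hdd]; norm_num; linarith)
        (by simp only [hdd]; norm_num; linarith)
      simp only [hdd] at hbelow
      norm_num at hbelow
      exact fin d1 d2 h1 h2 q hqU hc hlt ((below_iff h12).1 hbelow)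
    · have hbelow := hseg 2 (by omega) (by simp only [hdd]; norm_num; linarith)
        (by simp only [hdd]; norm_num; linarith)
      simp only [hdd] at hbelow
      norm_num at hbelow
      exact fin d2 d3 h2 h3 q hqU hc2 hq3' ((below_iff h23).1 hbelow)
theorem statement6 (H : Set Plane) (φ : Plane → ℝ) (hH : IsHorton H φ) :
    (UpperRClosed 4 H ∧ LowerRClosed 4 H) ∧ HoleFree 7 H := by
  induction hH with
  | base H φ hcond hsub =>
    refine ⟨⟨?_, ?_⟩, ?_⟩
    · intro p hp hcs
      exfalso
      have h01 := hcs.1 0 1 (by omega) (by omega)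
      have heq := hsub (hp 0 (by omega)) (hp 1 (by omega))
      rw [heq] at h01
      exact lt_irrefl _ h01
    · intro p hp hcs
      exfalso
      have h01 := hcs.1 0 1 (by omega) (by omega)
      have heq := hsub (hp 0 (by omega)) (hp 1 (by omega))
      rw [heq] at h01
      exact lt_irrefl _ h01
    · intro T hTH hTfin hT7
      exfalso
      have hTsub : T.Subsingleton := hsub.anti hTH
      rcases hTsub.eq_empty_or_singleton with h | ⟨x, h⟩ <;> rw [h] at hT7 <;>
        simp at hT7
  | step H φ hcond h0 h1 hsplit ih0 ih1 =>
    have hgp := horton_gp (IsHorton.step H φ hcond h0 h1 hsplit)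
    have hsub0 : levelSubset φ H 0 2 ⊆ H := fun x hx => hx.1
    have hsub1 : levelSubset φ H 1 2 ⊆ H := fun x hx => hx.1
    have halt0 : ∀ p ∈ levelSubset φ H 0 2, ∀ q ∈ levelSubset φ H 0 2, p 0 < q 0 →
        ∃ u ∈ levelSubset φ H 1 2, p 0 < u 0 ∧ u 0 < q 0 := by
      have := lc_alt hcond 0
      norm_num at this
      exact this
    have halt1 : ∀ p ∈ levelSubset φ H 1 2, ∀ q ∈ levelSubset φ H 1 2, p 0 < q 0 →
        ∃ u ∈ levelSubset φ H 0 2, p 0 < u 0 ∧ u 0 < q 0 := by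
      have := lc_alt hcond 1
      norm_num at this
      exact this
    rcases hsplit with hHA | hHA
    · -- levelSubset 1 is high above levelSubset 0
      exact step_core H (levelSubset φ H 0 2) (levelSubset φ H 1 2) hsub0 hsub1
        (lc_cover hcond) lc_disj (lc_xinj hcond) halt0 halt1
        (highAbove_sgA hHA) (highAbove_sgB hHA) hgp ih0 ih1
    · -- levelSubset 0 is high above levelSubset 1
      exact step_core H (levelSubset φ H 1 2) (levelSubset φ H 0 2) hsub1 hsub0
        (fun x hx => (lc_cover hcond x hx).symm) (fun x h1x h0x => lc_disj x h0x h1x)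
        (lc_xinj hcond) halt1 halt0
        (highAbove_sgA hHA) (highAbove_sgB hHA) hgp ih1 ih0
end
end

section
/- Let H₁, H₂ ⊆ ℝ² be Horton sets such that H₁ lies deep below H₂. Then H₁ ∪ H₂ is 7-hole-free. -/
noncomputable section

open Set

def cross (u v w : Plane) : ℝ :=
  (v 0 - u 0) * (w 1 - u 1) - (v 1 - u 1) * (w 0 - u 0)

lemma cross_rot (u v w : Plane) : cross u v w = cross v w u := by unfold cross; ring

lemma cross_swap (u v w : Plane) : cross u v w = -cross u w v := by unfold cross; ring

lemma cross_swap' (u v w : Plane) : cross u v w = -cross v u w := by unfold cross; ring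

lemma line_symm {p q x : Plane} (h : p 0 ≠ q 0) :
    p 1 + (x 0 - p 0) * (q 1 - p 1) / (q 0 - p 0) =
      q 1 + (x 0 - q 0) * (p 1 - q 1) / (p 0 - q 0) := by
  have h1 : q 0 - p 0 ≠ 0 := fun hc => h (by linarith [sub_eq_zero.mp hc])
  have h2 : p 0 - q 0 ≠ 0 := fun hc => h (sub_eq_zero.mp hc)
  field_simp
  ring

lemma aboveLine_symm {p q x : Plane} (h : p 0 ≠ q 0) :
    StrictlyAboveLine p q x ↔ StrictlyAboveLine q p x := by
  unfold StrictlyAboveLine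
  rw [line_symm h]

lemma belowLine_symm {p q x : Plane} (h : p 0 ≠ q 0) :
    StrictlyBelowLine p q x ↔ StrictlyBelowLine q p x := by
  unfold StrictlyBelowLine
  rw [line_symm h]

lemma above_iff_cross {p q x : Plane} (h : p 0 < q 0) :
    StrictlyAboveLine p q x ↔ 0 < cross p q x := by
  unfold StrictlyAboveLine cross
  constructor
  · intro ha
    have h2 : (x 0 - p 0) * (q 1 - p 1) / (q 0 - p 0) < x 1 - p 1 := by linarith
    rw [div_lt_iff₀ (by linarith)] at h2
    nlinarith
  · intro hc
    have h2 : (x 0 - p 0) * (q 1 - p 1) / (q 0 - p 0) < x 1 - p 1 := by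
      rw [div_lt_iff₀ (by linarith)]; nlinarith
    linarith

lemma below_iff_cross {p q x : Plane} (h : p 0 < q 0) :
    StrictlyBelowLine p q x ↔ cross p q x < 0 := by
  unfold StrictlyBelowLine cross
  constructor
  · intro ha
    have h2 : x 1 - p 1 < (x 0 - p 0) * (q 1 - p 1) / (q 0 - p 0) := by linarith
    rw [lt_div_iff₀ (by linarith)] at h2
    nlinarith
  · intro hc
    have h2 : x 1 - p 1 < (x 0 - p 0) * (q 1 - p 1) / (q 0 - p 0) := by
      rw [lt_div_iff₀ (by linarith)]; nlinarith
    linarith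

lemma above_cross_ne {p q x : Plane} (h : p 0 ≠ q 0) (ha : StrictlyAboveLine p q x) :
    cross p q x ≠ 0 := by
  rcases lt_or_gt_of_ne h with h' | h'
  · exact ne_of_gt ((above_iff_cross h').1 ha)
  · have := (above_iff_cross h').1 ((aboveLine_symm h).1 ha)
    rw [cross_swap'] at this
    intro hc; rw [hc] at this; simp at this

lemma below_cross_ne {p q x : Plane} (h : p 0 ≠ q 0) (ha : StrictlyBelowLine p q x) :
    cross p q x ≠ 0 := by
  rcases lt_or_gt_of_ne h with h' | h'
  · exact ne_of_lt ((below_iff_cross h').1 ha)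
  · have := (below_iff_cross h').1 ((belowLine_symm h).1 ha)
    rw [cross_swap'] at this
    intro hc; rw [hc] at this; simp at this

lemma continuous_cross (u v : Plane) : Continuous fun y : Plane => cross u v y := by
  unfold cross
  fun_prop

lemma bary (u v w y : Plane) (i : Fin 2) :
    cross u v w * y i = cross v w y * u i + cross w u y * v i + cross u v y * w i := by
  fin_cases i <;> simp only [Fin.mk_zero, Fin.mk_one] <;> (unfold cross; ring)

lemma cross_sum (u v w y : Plane) : cross v w y + cross w u y + cross u v y = cross u v w := by
  unfold cross; ring

lemma mem_triangle_hull {u v w y : Plane} (h1 : 0 < cross u v y) (h2 : 0 < cross v w y)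
    (h3 : 0 < cross w u y) : y ∈ convexHull ℝ ({u, v, w} : Set Plane) := by
  set a := cross v w y with ha
  set b := cross w u y with hb
  set c := cross u v y with hc
  have hd : a + b + c = cross u v w := cross_sum u v w y
  have hdpos : 0 < cross u v w := by rw [← hd]; positivity
  have hbc : 0 < b + c := by positivity
  have habc : 0 < a + b + c := by positivity
  have hu : u ∈ convexHull ℝ ({u, v, w} : Set Plane) := subset_convexHull ℝ _ (by simp)
  have hv : v ∈ convexHull ℝ ({u, v, w} : Set Plane) := subset_convexHull ℝ _ (by simp)
  have hw : w ∈ convexHull ℝ ({u, v, w} : Set Plane) := subset_convexHull ℝ _ (by simp)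
  have hm : (b / (b + c)) • v + (c / (b + c)) • w ∈ convexHull ℝ ({u, v, w} : Set Plane) := by
    apply (convex_convexHull ℝ _).segment_subset hv hw
    exact ⟨b / (b + c), c / (b + c), by positivity, by positivity, by field_simp, rfl⟩
  have hy : y = (a / (a + b + c)) • u +
      (1 - a / (a + b + c)) • ((b / (b + c)) • v + (c / (b + c)) • w) := by
    have h1' : (1 : ℝ) - a / (a + b + c) = (b + c) / (a + b + c) := by
      field_simp
      ring
    have hcoef1 : (b + c) / (a + b + c) * (b / (b + c)) = b / (a + b + c) := by
      field_simp
    have hcoef2 : (b + c) / (a + b + c) * (c / (b + c)) = c / (a + b + c) := by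
      field_simp
    rw [h1', smul_add, smul_smul, smul_smul, hcoef1, hcoef2]
    ext i
    have hb2 := bary u v w y i
    rw [← ha, ← hb, ← hc, ← hd] at hb2
    simp only [PiLp.add_apply, PiLp.smul_apply, smul_eq_mul]
    field_simp
    linear_combination hb2
  rw [hy]
  apply (convex_convexHull ℝ _).segment_subset hu hm
  refine ⟨a / (a + b + c), 1 - a / (a + b + c), by positivity, ?_, by ring, rfl⟩
  rw [sub_nonneg, div_le_one habc]; linarith

lemma mem_triangle_interior {u v w y : Plane} (h1 : 0 < cross u v y) (h2 : 0 < cross v w y)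
    (h3 : 0 < cross w u y) : y ∈ interior (convexHull ℝ ({u, v, w} : Set Plane)) := by
  have hopen : IsOpen {z : Plane | 0 < cross u v z ∧ 0 < cross v w z ∧ 0 < cross w u z} :=
    (isOpen_lt continuous_const (continuous_cross u v)).inter
      ((isOpen_lt continuous_const (continuous_cross v w)).inter
        (isOpen_lt continuous_const (continuous_cross w u)))
  exact interior_maximal (fun z hz => mem_triangle_hull hz.1 hz.2.1 hz.2.2) hopen ⟨h1, h2, h3⟩


def refl2 : Plane → Plane := fun x => WithLp.toLp 2 (fun i => if i = 0 then x 0 else -(x 1))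

lemma refl2_apply0 (x : Plane) : refl2 x 0 = x 0 := rfl
lemma refl2_apply1 (x : Plane) : refl2 x 1 = -(x 1) := rfl
lemma refl2_invol (x : Plane) : refl2 (refl2 x) = x := by
  ext i
  fin_cases i <;> simp [refl2]

lemma refl2_inj : Function.Injective refl2 :=
  Function.LeftInverse.injective refl2_invol

def refl2Lin : Plane ≃ₗ[ℝ] Plane where
  toFun := refl2
  invFun := refl2
  map_add' := by
    intro x y; ext i
    fin_cases i <;> simp [refl2] <;> ring
  map_smul' := by
    intro c x; ext i
    fin_cases i <;> simp [refl2] <;> ring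
  left_inv := refl2_invol
  right_inv := refl2_invol

def refl2Homeo : Plane ≃ₜ Plane :=
  { refl2Lin with
    continuous_toFun := LinearMap.continuous_of_finiteDimensional refl2Lin.toLinearMap
    continuous_invFun := LinearMap.continuous_of_finiteDimensional refl2Lin.symm.toLinearMap }

lemma refl2_image_interior (s : Set Plane) :
    refl2 '' interior s = interior (refl2 '' s) :=
  refl2Homeo.image_interior s

lemma refl2_image_convexHull (s : Set Plane) :
    refl2 '' convexHull ℝ s = convexHull ℝ (refl2 '' s) := by
  have := refl2Lin.toLinearMap.toAffineMap.image_convexHull s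
  exact this

/-- no 3 collinear (as a cross-product statement) -/
def NC3 (S : Set Plane) : Prop :=
  ∀ u ∈ S, ∀ v ∈ S, ∀ w ∈ S, u ≠ v → u ≠ w → v ≠ w → cross u v w ≠ 0

/-- every 4-cup has a point of X strictly above one of its edges -/
def CupClosed4 (X : Set Plane) : Prop :=
  ∀ p₁ ∈ X, ∀ p₂ ∈ X, ∀ p₃ ∈ X, ∀ p₄ ∈ X,
    p₁ 0 < p₂ 0 → p₂ 0 < p₃ 0 → p₃ 0 < p₄ 0 →
    0 < cross p₁ p₂ p₃ → 0 < cross p₁ p₂ p₄ → 0 < cross p₁ p₃ p₄ → 0 < cross p₂ p₃ p₄ →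
    ∃ q ∈ X, ∃ e f : Plane,
      ((e = p₁ ∧ f = p₂) ∨ (e = p₂ ∧ f = p₃) ∨ (e = p₃ ∧ f = p₄)) ∧
      e 0 < q 0 ∧ q 0 < f 0 ∧ 0 < cross e f q

/-- every 4-cap has a point of X strictly below one of its edges -/
def CapClosed4 (X : Set Plane) : Prop :=
  ∀ p₁ ∈ X, ∀ p₂ ∈ X, ∀ p₃ ∈ X, ∀ p₄ ∈ X,
    p₁ 0 < p₂ 0 → p₂ 0 < p₃ 0 → p₃ 0 < p₄ 0 →
    cross p₁ p₂ p₃ < 0 → cross p₁ p₂ p₄ < 0 → cross p₁ p₃ p₄ < 0 → cross p₂ p₃ p₄ < 0 →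
    ∃ q ∈ X, ∃ e f : Plane,
      ((e = p₁ ∧ f = p₂) ∨ (e = p₂ ∧ f = p₃) ∨ (e = p₃ ∧ f = p₄)) ∧
      e 0 < q 0 ∧ q 0 < f 0 ∧ cross e f q < 0

/-- the key step: if `H = L ∪ U` with `U` (in cross form) high above `L` and between any two
`L`-points there is a `U`-point, and `U` is cup-closed, then `H` is cup-closed. -/
lemma cupStep {L U H : Set Plane}
    (hsub : ∀ x ∈ H, x ∈ L ∨ x ∈ U) (hLH : L ⊆ H) (hUH : U ⊆ H)
    (hUL : ∀ p ∈ L, ∀ q ∈ L, ∀ u ∈ U, p 0 < q 0 → 0 < cross p q u)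
    (hLU : ∀ p ∈ U, ∀ q ∈ U, ∀ l ∈ L, p 0 < q 0 → cross p q l < 0)
    (hint : ∀ u ∈ L, ∀ v ∈ L, u 0 < v 0 → ∃ w ∈ U, u 0 < w 0 ∧ w 0 < v 0)
    (hU : CupClosed4 U) : CupClosed4 H := by
  intro p₁ hp₁ p₂ hp₂ p₃ hp₃ p₄ hp₄ h12 h23 h34 C123 C124 C134 C234
  -- good case: the middle two points are both in `L`
  rcases hsub p₂ hp₂ with m2 | m2
  · rcases hsub p₃ hp₃ with m3 | m3
    · obtain ⟨w, hwU, hw1, hw2⟩ := hint p₂ m2 p₃ m3 h23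
      exact ⟨w, hUH hwU, p₂, p₃, Or.inr (Or.inl ⟨rfl, rfl⟩), hw1, hw2,
        hUL p₂ m2 p₃ m3 w hwU h23⟩
    · -- p₂ ∈ L, p₃ ∈ U
      rcases hsub p₄ hp₄ with m4 | m4
      · -- p₃ ∈ U between L-pair (p₂, p₄): contradiction
        have := hUL p₂ m2 p₄ m4 p₃ m3 (h23.trans h34)
        have h' := cross_swap p₂ p₃ p₄
        linarith
      · -- p₃, p₄ ∈ U, p₂ ∈ L : p₂ outside the span of the U-pair (p₃,p₄): contradiction
        have := hLU p₃ m3 p₄ m4 p₂ m2 h34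
        have h' : cross p₂ p₃ p₄ = cross p₃ p₄ p₂ := by rw [cross_rot]
        linarith
  · rcases hsub p₃ hp₃ with m3 | m3
    · -- p₂ ∈ U, p₃ ∈ L
      rcases hsub p₁ hp₁ with m1 | m1
      · -- p₂ ∈ U between L-pair (p₁,p₃)
        have := hUL p₁ m1 p₃ m3 p₂ m2 (h12.trans h23)
        have h' := cross_swap p₁ p₂ p₃
        linarith
      · -- p₁, p₂ ∈ U, p₃ ∈ L : p₃ outside? no: right of pair (p₁,p₂) : L below U-lines
        have := hLU p₁ m1 p₂ m2 p₃ m3 h12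
        linarith
    · -- p₂, p₃ ∈ U
      rcases hsub p₁ hp₁ with m1 | m1
      · -- p₁ ∈ L left of U-pair (p₂,p₃): contradiction
        have := hLU p₂ m2 p₃ m3 p₁ m1 h23
        have h' : cross p₁ p₂ p₃ = cross p₂ p₃ p₁ := by rw [cross_rot]
        linarith
      · rcases hsub p₄ hp₄ with m4 | m4
        · -- p₄ ∈ L right of U-pair (p₂,p₃)
          have := hLU p₂ m2 p₃ m3 p₄ m4 h23
          linarith
        · -- all in U
          obtain ⟨q, hq, e, f, hef, h1, h2, h3⟩ :=
            hU p₁ m1 p₂ m2 p₃ m3 p₄ m4 h12 h23 h34 C123 C124 C134 C234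
          exact ⟨q, hUH hq, e, f, hef, h1, h2, h3⟩

lemma cross_refl2 (u v w : Plane) : cross (refl2 u) (refl2 v) (refl2 w) = -cross u v w := by
  show ((refl2 v) 0 - (refl2 u) 0) * ((refl2 w) 1 - (refl2 u) 1) -
    ((refl2 v) 1 - (refl2 u) 1) * ((refl2 w) 0 - (refl2 u) 0) = _
  show (v 0 - u 0) * (-(w 1) - -(u 1)) - (-(v 1) - -(u 1)) * (w 0 - u 0) = _
  unfold cross; ring

lemma capClosed_of_refl {X : Set Plane} (h : CupClosed4 (refl2 '' X)) : CapClosed4 X := by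
  intro p₁ h1 p₂ h2 p₃ h3 p₄ h4 h12 h23 h34 C1 C2 C3 C4
  obtain ⟨q', hq', e, f, hef, hx1, hx2, hc⟩ :=
    h (refl2 p₁) (mem_image_of_mem _ h1) (refl2 p₂) (mem_image_of_mem _ h2)
      (refl2 p₃) (mem_image_of_mem _ h3) (refl2 p₄) (mem_image_of_mem _ h4)
      h12 h23 h34
      (by rw [cross_refl2]; linarith) (by rw [cross_refl2]; linarith)
      (by rw [cross_refl2]; linarith) (by rw [cross_refl2]; linarith)
  obtain ⟨q, hq, rfl⟩ := hq'
  rcases hef with ⟨rfl, rfl⟩ | ⟨rfl, rfl⟩ | ⟨rfl, rfl⟩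
  · exact ⟨q, hq, p₁, p₂, Or.inl ⟨rfl, rfl⟩, hx1, hx2, by
      rw [cross_refl2] at hc; linarith⟩
  · exact ⟨q, hq, p₂, p₃, Or.inr (Or.inl ⟨rfl, rfl⟩), hx1, hx2, by
      rw [cross_refl2] at hc; linarith⟩
  · exact ⟨q, hq, p₃, p₄, Or.inr (Or.inr ⟨rfl, rfl⟩), hx1, hx2, by
      rw [cross_refl2] at hc; linarith⟩

lemma reflCup_of_capClosed {X : Set Plane} (h : CapClosed4 X) : CupClosed4 (refl2 '' X) := by
  rintro p₁ ⟨q₁, hq1, rfl⟩ p₂ ⟨q₂, hq2, rfl⟩ p₃ ⟨q₃, hq3, rfl⟩ p₄ ⟨q₄, hq4, rfl⟩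
    h12 h23 h34 C1 C2 C3 C4
  rw [cross_refl2] at C1 C2 C3 C4
  obtain ⟨q, hq, e, f, hef, hx1, hx2, hc⟩ :=
    h q₁ hq1 q₂ hq2 q₃ hq3 q₄ hq4 h12 h23 h34
      (by linarith) (by linarith) (by linarith) (by linarith)
  rcases hef with ⟨rfl, rfl⟩ | ⟨rfl, rfl⟩ | ⟨rfl, rfl⟩
  · exact ⟨refl2 q, mem_image_of_mem _ hq, refl2 e, refl2 f, Or.inl ⟨rfl, rfl⟩, hx1, hx2, by
      rw [cross_refl2]; linarith⟩
  · exact ⟨refl2 q, mem_image_of_mem _ hq, refl2 e, refl2 f, Or.inr (Or.inl ⟨rfl, rfl⟩),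
      hx1, hx2, by rw [cross_refl2]; linarith⟩
  · exact ⟨refl2 q, mem_image_of_mem _ hq, refl2 e, refl2 f, Or.inr (Or.inr ⟨rfl, rfl⟩),
      hx1, hx2, by rw [cross_refl2]; linarith⟩

lemma distinct_x {H φ} (hc : LevelledConds H φ) {u v : Plane} (hu : u ∈ H) (hv : v ∈ H)
    (hne : u ≠ v) : u 0 ≠ v 0 := by
  obtain ⟨-, ⟨a, b, ha, hab⟩, hinj, -⟩ := hc
  intro hx
  exact hne (hinj hu hv (by rw [hab, hab, hx]))

lemma decomp {H φ} (hc : LevelledConds H φ) :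
    ∀ x ∈ H, x ∈ levelSubset φ H 0 2 ∨ x ∈ levelSubset φ H 1 2 := by
  obtain ⟨-, -, -, s, t, himg⟩ := hc
  intro x hx
  have : φ x ∈ φ '' H := ⟨x, hx, rfl⟩
  rw [himg] at this
  obtain ⟨n, _, hn⟩ := this
  rcases Int.even_or_odd n with ⟨k, hk⟩ | ⟨k, hk⟩
  · left
    refine ⟨hx, k, ?_⟩
    rw [← hn, hk]; push_cast; ring
  · right
    refine ⟨hx, k, ?_⟩
    rw [← hn, hk]; push_cast; ring

lemma interleave {H φ} (hc : LevelledConds H φ) (c : ℤ) {u v : Plane} (hu : u ∈ H) (hv : v ∈ H)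
    (ku kv : ℤ) (hku : φ u = (c : ℝ) + 2 * (ku : ℝ)) (hkv : φ v = (c : ℝ) + 2 * (kv : ℝ))
    (hx : u 0 < v 0) :
    ∃ w ∈ H, (u 0 < w 0 ∧ w 0 < v 0) ∧ ∃ kw : ℤ, φ w = ((1 - c : ℤ) : ℝ) + 2 * (kw : ℝ) := by
  obtain ⟨-, ⟨a, b, ha, hab⟩, hinj, s, t, himg⟩ := hc
  have hmem : ∀ n : ℤ, ∀ z, z ∈ H → φ z = (n : ℝ) → n ∈ Set.Icc s t := by
    intro n z hz hφz
    have : φ z ∈ φ '' H := ⟨z, hz, rfl⟩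
    rw [himg] at this
    obtain ⟨m, hm, hmn⟩ := this
    have hmn' : (m : ℝ) = (n : ℝ) := by
      have : (fun k : ℤ => (k : ℝ)) m = φ z := hmn
      simp only at this
      rw [this, hφz]
    have : m = n := by exact_mod_cast hmn'
    rwa [this] at hm
  have hnu : (c + 2 * ku : ℤ) ∈ Set.Icc s t := by
    apply hmem _ u hu; push_cast; rw [hku]
  have hnv : (c + 2 * kv : ℤ) ∈ Set.Icc s t := by
    apply hmem _ v hv; push_cast; rw [hkv]
  have hget : ∀ n : ℤ, n ∈ Set.Icc s t → ∃ w ∈ H, φ w = (n : ℝ) := by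
    intro n hn
    have : (n : ℝ) ∈ φ '' H := by rw [himg]; exact ⟨n, hn, rfl⟩
    obtain ⟨w, hw, hw'⟩ := this
    exact ⟨w, hw, hw'⟩
  rcases lt_trichotomy a 0 with hA | hA | hA
  · -- a < 0 : φ decreasing in x
    have hφ : φ v < φ u := by rw [hab, hab]; nlinarith
    have hk : kv < ku := by
      rw [hku, hkv] at hφ
      have : (kv : ℝ) < ku := by linarith
      exact_mod_cast this
    obtain ⟨w, hw, hφw⟩ := hget (c + 2 * ku - 1)
      ⟨le_trans hnv.1 (by omega), le_trans (by omega) hnu.2⟩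
    refine ⟨w, hw, ⟨?_, ?_⟩, ku + c - 1, ?_⟩
    · have h1 : φ w < φ u := by rw [hφw, hku]; push_cast; linarith
      rw [hab, hab] at h1; nlinarith
    · have h1 : φ v < φ w := by
        rw [hφw, hkv]; push_cast
        have : (kv : ℝ) + 1 ≤ ku := by exact_mod_cast hk
        linarith
      rw [hab, hab] at h1; nlinarith
    · rw [hφw]; push_cast; ring
  · exact absurd hA ha
  · -- a > 0 : φ increasing in x
    have hφ : φ u < φ v := by rw [hab, hab]; nlinarith
    have hk : ku < kv := by
      rw [hku, hkv] at hφ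
      have : (ku : ℝ) < kv := by linarith
      exact_mod_cast this
    obtain ⟨w, hw, hφw⟩ := hget (c + 2 * ku + 1)
      ⟨le_trans hnu.1 (by omega), le_trans (by omega) hnv.2⟩
    refine ⟨w, hw, ⟨?_, ?_⟩, ku + c, ?_⟩
    · have h1 : φ u < φ w := by rw [hφw, hku]; push_cast; linarith
      rw [hab, hab] at h1; nlinarith
    · have h1 : φ w < φ v := by
        rw [hφw, hkv]; push_cast
        have : (ku : ℝ) + 1 ≤ kv := by exact_mod_cast hk
        linarith
      rw [hab, hab] at h1; nlinarith
    · rw [hφw]; push_cast; ring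

lemma isHorton_levelled {H φ} (h : IsHorton H φ) : LevelledConds H φ := by
  cases h <;> assumption

/-- cross form of `HighAbove`, upper set `U`, lower set `L` -/
lemma highAbove_crossUL {U L : Set Plane} (h : HighAbove U L) :
    ∀ p ∈ L, ∀ q ∈ L, ∀ u ∈ U, p 0 < q 0 → 0 < cross p q u :=
  fun p hp q hq u hu hpq =>
    (above_iff_cross hpq).1 (h.2 p hp q hq (ne_of_lt hpq) u hu)

lemma highAbove_crossLU {U L : Set Plane} (h : HighAbove U L) :
    ∀ p ∈ U, ∀ q ∈ U, ∀ l ∈ L, p 0 < q 0 → cross p q l < 0 :=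
  fun p hp q hq l hl hpq =>
    (below_iff_cross hpq).1 (h.1 p hp q hq (ne_of_lt hpq) l hl)

section HortonStructure

variable {H : Set Plane} {φ : Plane → ℝ}

/-- interleaving, instantiated to the parity parts -/
lemma interleave01 (hc : LevelledConds H φ) {u v : Plane}
    (hu : u ∈ levelSubset φ H 0 2) (hv : v ∈ levelSubset φ H 0 2) (hx : u 0 < v 0) :
    ∃ w ∈ levelSubset φ H 1 2, u 0 < w 0 ∧ w 0 < v 0 := by
  obtain ⟨hu', ku, hku⟩ := hu
  obtain ⟨hv', kv, hkv⟩ := hv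
  obtain ⟨w, hw, hbtw, kw, hkw⟩ := interleave hc 0 hu' hv' ku kv
    (by rw [hku]; push_cast; ring) (by rw [hkv]; push_cast; ring) hx
  exact ⟨w, ⟨hw, kw, by rw [hkw]; push_cast; ring⟩, hbtw⟩

lemma interleave10 (hc : LevelledConds H φ) {u v : Plane}
    (hu : u ∈ levelSubset φ H 1 2) (hv : v ∈ levelSubset φ H 1 2) (hx : u 0 < v 0) :
    ∃ w ∈ levelSubset φ H 0 2, u 0 < w 0 ∧ w 0 < v 0 := by
  obtain ⟨hu', ku, hku⟩ := hu
  obtain ⟨hv', kv, hkv⟩ := hv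
  obtain ⟨w, hw, hbtw, kw, hkw⟩ := interleave hc 1 hu' hv' ku kv
    (by rw [hku]; push_cast; ring) (by rw [hkv]; push_cast; ring) hx
  exact ⟨w, ⟨hw, kw, by rw [hkw]; push_cast; ring⟩, hbtw⟩

theorem horton_closed (h : IsHorton H φ) : CupClosed4 H ∧ CapClosed4 H := by
  induction h with
  | base H φ hc hsub =>
    constructor <;>
    · intro p₁ h1 p₂ h2 p₃ h3 p₄ h4 h12 h23 h34 _ _ _ _
      exact absurd (congrArg (fun z : Plane => z 0) (hsub h1 h2)) (ne_of_lt h12)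
  | step H φ hc h0 h1 hor ih0 ih1 =>
    have hdec := decomp hc
    have hLH : levelSubset φ H 0 2 ⊆ H := fun x hx => hx.1
    have hUH : levelSubset φ H 1 2 ⊆ H := fun x hx => hx.1
    have hint01 : ∀ u ∈ levelSubset φ H 0 2, ∀ v ∈ levelSubset φ H 0 2, u 0 < v 0 →
        ∃ w ∈ levelSubset φ H 1 2, u 0 < w 0 ∧ w 0 < v 0 :=
      fun u hu v hv hx => interleave01 hc hu hv hx
    have hint10 : ∀ u ∈ levelSubset φ H 1 2, ∀ v ∈ levelSubset φ H 1 2, u 0 < v 0 →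
        ∃ w ∈ levelSubset φ H 0 2, u 0 < w 0 ∧ w 0 < v 0 :=
      fun u hu v hv hx => interleave10 hc hu hv hx
    -- reflected versions of the decomposition and interleaving
    have hdec' : ∀ x ∈ refl2 '' H,
        x ∈ refl2 '' levelSubset φ H 1 2 ∨ x ∈ refl2 '' levelSubset φ H 0 2 := by
      rintro x ⟨y, hy, rfl⟩
      rcases hdec y hy with h | h
      · exact Or.inr (mem_image_of_mem _ h)
      · exact Or.inl (mem_image_of_mem _ h)
    rcases hor with hUp | hUp
    · -- `levelSubset φ H 1 2` is high above `levelSubset φ H 0 2`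
      constructor
      · exact cupStep hdec hLH hUH (highAbove_crossUL hUp) (highAbove_crossLU hUp)
          hint01 ih1.1
      · apply capClosed_of_refl
        apply cupStep (L := refl2 '' levelSubset φ H 1 2) (U := refl2 '' levelSubset φ H 0 2)
          hdec'
          (fun x ⟨y, hy, he⟩ => he ▸ mem_image_of_mem _ (hUH hy))
          (fun x ⟨y, hy, he⟩ => he ▸ mem_image_of_mem _ (hLH hy))
          ?_ ?_ ?_ (reflCup_of_capClosed ih0.2)
        · rintro p ⟨p', hp', rfl⟩ q ⟨q', hq', rfl⟩ u ⟨u', hu', rfl⟩ hpq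
          rw [cross_refl2]
          have := highAbove_crossLU hUp p' hp' q' hq' u' hu' hpq
          linarith
        · rintro p ⟨p', hp', rfl⟩ q ⟨q', hq', rfl⟩ l ⟨l', hl', rfl⟩ hpq
          rw [cross_refl2]
          have := highAbove_crossUL hUp p' hp' q' hq' l' hl' hpq
          linarith
        · rintro u ⟨u', hu', rfl⟩ v ⟨v', hv', rfl⟩ hx
          obtain ⟨w, hw, h1, h2⟩ := hint10 u' hu' v' hv' hx
          exact ⟨refl2 w, mem_image_of_mem _ hw, h1, h2⟩
    · -- `levelSubset φ H 0 2` is high above `levelSubset φ H 1 2`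
      constructor
      · exact cupStep (fun x hx => (hdec x hx).symm) hUH hLH
          (highAbove_crossUL hUp) (highAbove_crossLU hUp) hint10 ih0.1
      · apply capClosed_of_refl
        apply cupStep (L := refl2 '' levelSubset φ H 0 2) (U := refl2 '' levelSubset φ H 1 2)
          (fun x hx => (hdec' x hx).symm)
          (fun x ⟨y, hy, he⟩ => he ▸ mem_image_of_mem _ (hLH hy))
          (fun x ⟨y, hy, he⟩ => he ▸ mem_image_of_mem _ (hUH hy))
          ?_ ?_ ?_ (reflCup_of_capClosed ih1.2)
        · rintro p ⟨p', hp', rfl⟩ q ⟨q', hq', rfl⟩ u ⟨u', hu', rfl⟩ hpq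
          rw [cross_refl2]
          have := highAbove_crossLU hUp p' hp' q' hq' u' hu' hpq
          linarith
        · rintro p ⟨p', hp', rfl⟩ q ⟨q', hq', rfl⟩ l ⟨l', hl', rfl⟩ hpq
          rw [cross_refl2]
          have := highAbove_crossUL hUp p' hp' q' hq' l' hl' hpq
          linarith
        · rintro u ⟨u', hu', rfl⟩ v ⟨v', hv', rfl⟩ hx
          obtain ⟨w, hw, h1, h2⟩ := hint01 u' hu' v' hv' hx
          exact ⟨refl2 w, mem_image_of_mem _ hw, h1, h2⟩

end HortonStructure
lemma nc3_union {A B : Set Plane} (hA : NC3 A) (hB : NC3 B)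
    (hAx : ∀ u ∈ A, ∀ v ∈ A, u ≠ v → u 0 ≠ v 0)
    (hBx : ∀ u ∈ B, ∀ v ∈ B, u ≠ v → u 0 ≠ v 0)
    (hHigh : HighAbove B A) : NC3 (A ∪ B) := by
  have keyA : ∀ u ∈ A, ∀ v ∈ A, ∀ w ∈ B, u ≠ v → cross u v w ≠ 0 := by
    intro u hu v hv w hw huv
    exact above_cross_ne (hAx u hu v hv huv) (hHigh.2 u hu v hv (hAx u hu v hv huv) w hw)
  have keyB : ∀ u ∈ B, ∀ v ∈ B, ∀ w ∈ A, u ≠ v → cross u v w ≠ 0 := by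
    intro u hu v hv w hw huv
    exact below_cross_ne (hBx u hu v hv huv) (hHigh.1 u hu v hv (hBx u hu v hv huv) w hw)
  intro u hu v hv w hw huv huw hvw
  rcases hu with hu | hu <;> rcases hv with hv | hv <;> rcases hw with hw | hw
  · exact hA u hu v hv w hw huv huw hvw
  · exact keyA u hu v hv w hw huv
  · intro h0
    exact keyA u hu w hw v hv huw (by have := cross_swap u v w; linarith)
  · intro h0
    exact keyB v hv w hw u hu hvw (by have h1 := cross_rot u v w; linarith)
  · intro h0
    exact keyA v hv w hw u hu hvw (by have h1 := cross_rot u v w; linarith)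
  · intro h0
    exact keyB u hu w hw v hv huw (by have := cross_swap u v w; linarith)
  · exact keyB u hu v hv w hw huv
  · exact hB u hu v hv w hw huv huw hvw

theorem horton_nc3 {H φ} (h : IsHorton H φ) : NC3 H := by
  induction h with
  | base H φ hc hsub =>
    intro u hu v hv w hw huv _ _
    exact absurd (hsub hu hv) huv
  | step H φ hc h0 h1 hor ih0 ih1 =>
    have hdec := decomp hc
    have hHLU : H = levelSubset φ H 0 2 ∪ levelSubset φ H 1 2 := by
      apply Subset.antisymm
      · intro x hx; exact hdec x hx
      · rintro x (hx | hx) <;> exact hx.1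
    have hLx : ∀ u ∈ levelSubset φ H 0 2, ∀ v ∈ levelSubset φ H 0 2, u ≠ v → u 0 ≠ v 0 :=
      fun u hu v hv => distinct_x hc hu.1 hv.1
    have hUx : ∀ u ∈ levelSubset φ H 1 2, ∀ v ∈ levelSubset φ H 1 2, u ≠ v → u 0 ≠ v 0 :=
      fun u hu v hv => distinct_x hc hu.1 hv.1
    rw [hHLU]
    rcases hor with hUp | hUp
    · exact nc3_union ih0 ih1 hLx hUx hUp
    · rw [union_comm]
      exact nc3_union ih1 ih0 hUx hLx hUp
lemma seg_cross {u v t : Plane} (h : t ∈ segment ℝ u v) : cross u v t = 0 := by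
  obtain ⟨a, b, _, _, hab, heq⟩ := h
  have h0 : t 0 = a * u 0 + b * v 0 := by
    rw [← heq]; simp [PiLp.add_apply, PiLp.smul_apply]
  have h1 : t 1 = a * u 1 + b * v 1 := by
    rw [← heq]; simp [PiLp.add_apply, PiLp.smul_apply]
  have hb : b = 1 - a := by linarith
  unfold cross
  rw [h0, h1, hb]; ring

lemma triangle_rep {u v w t : Plane} (h : t ∈ convexHull ℝ ({u, v, w} : Set Plane)) :
    ∃ a b c : ℝ, 0 ≤ a ∧ 0 ≤ b ∧ 0 ≤ c ∧ a + b + c = 1 ∧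
      (∀ i, t i = a * u i + b * v i + c * w i) := by
  rw [convexHull_insert (by exact ⟨v, by simp⟩), mem_convexJoin] at h
  obtain ⟨x, hx, z, hz, hseg⟩ := h
  rw [mem_singleton_iff] at hx
  subst hx
  rw [convexHull_pair] at hz
  obtain ⟨θ, η, hθ, hη, hθη, hzeq⟩ := hz
  obtain ⟨a, s, ha, hs, has, hteq⟩ := hseg
  refine ⟨a, s * θ, s * η, ha, by positivity, by positivity, by nlinarith, fun i => ?_⟩
  rw [← hteq, ← hzeq]
  simp [PiLp.add_apply, PiLp.smul_apply]
  ring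

lemma interior_from_hull {S T : Set Plane} (hgp : NC3 S) (hTS : T ⊆ S) {t : Plane}
    (htT : t ∈ T) (ht : t ∈ convexHull ℝ (T \ {t})) :
    t ∈ interior (convexHull ℝ T) := by
  classical
  rw [convexHull_eq_union] at ht
  simp only [Set.mem_iUnion] at ht
  obtain ⟨F, hFsub, hai, htF⟩ := ht
  have hcard : F.card ≤ 3 := by
    have h1 := hai.card_le_finrank_succ
    have h2 : Module.finrank ℝ (vectorSpan ℝ (Set.range (Subtype.val : F → Plane))) ≤
        Module.finrank ℝ Plane := Submodule.finrank_le _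
    have h3 : Module.finrank ℝ Plane = 2 := by simp
    rw [Fintype.card_coe] at h1
    omega
  interval_cases hc : F.card
  · rw [Finset.card_eq_zero] at hc
    subst hc
    simp at htF
  · rw [Finset.card_eq_one] at hc
    obtain ⟨u, rfl⟩ := hc
    simp only [Finset.coe_singleton, convexHull_singleton, mem_singleton_iff] at htF
    subst htF
    have := hFsub (by simp : t ∈ ({t} : Finset Plane))
    simp at this
  · rw [Finset.card_eq_two] at hc
    obtain ⟨u, v, huv, hF⟩ := hc
    rw [hF] at hFsub htF
    have hu : u ∈ T \ {t} := hFsub (by simp)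
    have hv : v ∈ T \ {t} := hFsub (by simp)
    have : ↑({u, v} : Finset Plane) = ({u, v} : Set Plane) := by simp
    rw [this, convexHull_pair] at htF
    have h0 := seg_cross htF
    exact absurd h0 (hgp u (hTS hu.1) v (hTS hv.1) t (hTS htT)
      huv (fun h => hu.2 (by simp [h.symm]))
      (fun h => hv.2 (by simp [h.symm])))
  · rw [Finset.card_eq_three] at hc
    obtain ⟨u, v, w, huv, huw, hvw, hF⟩ := hc
    rw [hF] at hFsub htF
    have hu : u ∈ T \ {t} := hFsub (by simp)
    have hv : v ∈ T \ {t} := hFsub (by simp)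
    have hw : w ∈ T \ {t} := hFsub (by simp)
    have hcoe : ↑({u, v, w} : Finset Plane) = ({u, v, w} : Set Plane) := by simp
    rw [hcoe] at htF
    obtain ⟨a, b, c, ha, hb, hcc, hsum, hrep⟩ := triangle_rep htF
    have hb' : b = 1 - a - c := by linarith
    have e0 := hrep 0
    have e1 := hrep 1
    rw [hb'] at e0 e1
    have key1 : cross u v t = c * cross u v w := by unfold cross; rw [e0, e1]; ring
    have key2 : cross v w t = a * cross u v w := by
      unfold cross; rw [e0, e1]; ring
    have key3 : cross w u t = (1 - a - c) * cross u v w := by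
      unfold cross; rw [e0, e1]; ring
    have htu : t ≠ u := fun h => hu.2 (by simp [h.symm])
    have htv : t ≠ v := fun h => hv.2 (by simp [h.symm])
    have htw : t ≠ w := fun h => hw.2 (by simp [h.symm])
    have n1 : cross u v t ≠ 0 :=
      hgp u (hTS hu.1) v (hTS hv.1) t (hTS htT) huv htu.symm htv.symm
    have n2 : cross v w t ≠ 0 :=
      hgp v (hTS hv.1) w (hTS hw.1) t (hTS htT) hvw htv.symm htw.symm
    have n3 : cross w u t ≠ 0 :=
      hgp w (hTS hw.1) u (hTS hu.1) t (hTS htT) (Ne.symm huw) htw.symm htu.symm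
    have hsubT : ({u, v, w} : Set Plane) ⊆ T := by
      intro x hx
      rcases hx with rfl | rfl | rfl
      · exact hu.1
      · exact hv.1
      · exact hw.1
    have hd : cross u v w ≠ 0 := by
      intro h0; rw [h0] at key1; simp at key1; exact n1 key1
    rcases lt_or_gt_of_ne hd with hd | hd
    · -- negative orientation: use the triangle (v, u, w)
      have c1 : 0 < cross v u t := by
        rw [cross_swap' v u t]
        rcases lt_or_gt_of_ne n1 with h | h
        · linarith
        · exfalso
          have : 0 < c := by
            rcases hcc.lt_or_eq with h' | h'
            · exact h'
            · rw [← h'] at key1; simp at key1; exact absurd key1 n1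
          nlinarith
      have c2 : 0 < cross w v t := by
        rw [show cross w v t = -cross v w t from by rw [cross_swap']]
        rcases lt_or_gt_of_ne n2 with h | h
        · linarith
        · exfalso
          have : 0 < a := by
            rcases ha.lt_or_eq with h' | h'
            · exact h'
            · rw [← h'] at key2; simp at key2; exact absurd key2 n2
          nlinarith
      have c3 : 0 < cross u w t := by
        rw [show cross u w t = -cross w u t from by rw [cross_swap']]
        rcases lt_or_gt_of_ne n3 with h | h
        · linarith
        · exfalso
          have : 0 < 1 - a - c := by
            rcases (by linarith : (0:ℝ) ≤ 1 - a - c).lt_or_eq with h' | h'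
            · exact h'
            · rw [← h'] at key3; simp at key3; exact absurd key3 n3
          nlinarith
      have := mem_triangle_interior c1 c3 c2
      have hset : ({v, u, w} : Set Plane) = ({u, v, w} : Set Plane) := by
        ext x; simp; tauto
      rw [hset] at this
      exact interior_mono (convexHull_mono hsubT) this
    · -- positive orientation
      have c1 : 0 < cross u v t := by
        rcases lt_or_gt_of_ne n1 with h | h
        · exfalso
          have : 0 < c := by
            rcases hcc.lt_or_eq with h' | h'
            · exact h'
            · rw [← h'] at key1; simp at key1; exact absurd key1 n1
          nlinarith
        · exact h
      have c2 : 0 < cross v w t := by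
        rcases lt_or_gt_of_ne n2 with h | h
        · exfalso
          have : 0 < a := by
            rcases ha.lt_or_eq with h' | h'
            · exact h'
            · rw [← h'] at key2; simp at key2; exact absurd key2 n2
          nlinarith
        · exact h
      have c3 : 0 < cross w u t := by
        rcases lt_or_gt_of_ne n3 with h | h
        · exfalso
          have : 0 < 1 - a - c := by
            rcases (by linarith : (0:ℝ) ≤ 1 - a - c).lt_or_eq with h' | h'
            · exact h'
            · rw [← h'] at key3; simp at key3; exact absurd key3 n3
          nlinarith
        · exact h
      exact interior_mono (convexHull_mono hsubT) (mem_triangle_interior c1 c2 c3)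
lemma sort4 {F : Finset Plane} (hF : F.card = 4)
    (hx : ∀ u ∈ F, ∀ v ∈ F, u ≠ v → u 0 ≠ v 0) :
    ∃ p₁ ∈ F, ∃ p₂ ∈ F, ∃ p₃ ∈ F, ∃ p₄ ∈ F,
      p₁ 0 < p₂ 0 ∧ p₂ 0 < p₃ 0 ∧ p₃ 0 < p₄ 0 := by
  classical
  obtain ⟨p₁, hp₁, hmin₁⟩ := F.exists_min_image (fun p => p 0) (by
    rw [← Finset.card_pos, hF]; norm_num)
  set F₂ := F.erase p₁ with hF₂
  have hcard₂ : F₂.card = 3 := by rw [hF₂, Finset.card_erase_of_mem hp₁, hF]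
  obtain ⟨p₂, hp₂, hmin₂⟩ := F₂.exists_min_image (fun p => p 0) (by
    rw [← Finset.card_pos, hcard₂]; norm_num)
  set F₃ := F₂.erase p₂ with hF₃
  have hcard₃ : F₃.card = 2 := by rw [hF₃, Finset.card_erase_of_mem hp₂, hcard₂]
  obtain ⟨p₃, hp₃, hmin₃⟩ := F₃.exists_min_image (fun p => p 0) (by
    rw [← Finset.card_pos, hcard₃]; norm_num)
  set F₄ := F₃.erase p₃ with hF₄
  have hcard₄ : F₄.card = 1 := by rw [hF₄, Finset.card_erase_of_mem hp₃, hcard₃]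
  obtain ⟨p₄, hp₄⟩ := Finset.card_pos.mp (by rw [hcard₄]; norm_num : 0 < F₄.card)
  have h2F : p₂ ∈ F := Finset.mem_of_mem_erase hp₂
  have h3F2 : p₃ ∈ F₂ := Finset.mem_of_mem_erase hp₃
  have h3F : p₃ ∈ F := Finset.mem_of_mem_erase h3F2
  have h4F3 : p₄ ∈ F₃ := Finset.mem_of_mem_erase hp₄
  have h4F2 : p₄ ∈ F₂ := Finset.mem_of_mem_erase h4F3
  have h4F : p₄ ∈ F := Finset.mem_of_mem_erase h4F2
  have ne12 : p₁ ≠ p₂ := (Finset.ne_of_mem_erase hp₂).symm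
  have ne23 : p₂ ≠ p₃ := (Finset.ne_of_mem_erase hp₃).symm
  have ne34 : p₃ ≠ p₄ := (Finset.ne_of_mem_erase hp₄).symm
  refine ⟨p₁, hp₁, p₂, h2F, p₃, h3F, p₄, h4F, ?_, ?_, ?_⟩
  · exact lt_of_le_of_ne (hmin₁ p₂ h2F) (hx p₁ hp₁ p₂ h2F ne12)
  · exact lt_of_le_of_ne (hmin₂ p₃ h3F2) (hx p₂ h2F p₃ h3F ne23)
  · exact lt_of_le_of_ne (hmin₃ p₄ h4F3) (hx p₃ h3F p₄ h4F ne34)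

/-- The main geometric case: `T` in strictly convex position, at least 4 points of `T` in the
lower set `A`, at least one point outside `A`. -/
lemma lowCase {A B T : Set Plane}
    (hUp : ∀ p ∈ A, ∀ q ∈ A, ∀ b ∈ B, p 0 < q 0 → 0 < cross p q b)
    (hgp : NC3 (A ∪ B))
    (hAx : ∀ u ∈ A, ∀ v ∈ A, u ≠ v → u 0 ≠ v 0)
    (hcup : CupClosed4 A)
    (hTsub : T ⊆ A ∪ B) (hTfin : T.Finite)
    (hconv : ∀ t ∈ T, t ∉ convexHull ℝ (T \ {t}))
    (hA4 : 4 ≤ (T ∩ A).ncard)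
    (hb : ∃ b ∈ T, b ∉ A) :
    ∃ s ∈ A ∪ B, s ∈ interior (convexHull ℝ T) := by
  classical
  obtain ⟨b, hbT, hbA⟩ := hb
  have hbB : b ∈ B := (hTsub hbT).resolve_left hbA
  -- every triple in T ∩ A, sorted by x, is a cup
  have tripleCup : ∀ p ∈ T ∩ A, ∀ q ∈ T ∩ A, ∀ r ∈ T ∩ A,
      p 0 < q 0 → q 0 < r 0 → 0 < cross p q r := by
    intro p hp q hq r hr hpq hqr
    have hpr : p 0 < r 0 := hpq.trans hqr
    have hne : cross p r q ≠ 0 :=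
      hgp p (Or.inl hp.2) r (Or.inl hr.2) q (Or.inl hq.2)
        (fun h => absurd (congrArg (fun z : Plane => z 0) h) (ne_of_lt hpr))
        (fun h => absurd (congrArg (fun z : Plane => z 0) h) (ne_of_lt hpq))
        (fun h => absurd (congrArg (fun z : Plane => z 0) h) (ne_of_gt hqr))
    rcases lt_or_gt_of_ne hne with h | h
    · have := cross_swap p q r
      linarith
    · -- q above segment p-r : contradiction with convex position
      exfalso
      have c2 : 0 < cross r b q := by
        have h1 : 0 < cross q r b := hUp q hq.2 r hr.2 b hbB hqr
        have h2 : cross r b q = cross q r b := by rw [cross_rot q r b]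
        linarith
      have c3 : 0 < cross b p q := by
        have h1 : 0 < cross p q b := hUp p hp.2 q hq.2 b hbB hpq
        have h2 : cross b p q = cross p q b := by rw [cross_rot b p q]
        linarith
      have hint := mem_triangle_interior h c2 c3
      have hsubT : ({p, r, b} : Set Plane) ⊆ T \ {q} := by
        intro x hx
        rcases hx with rfl | rfl | rfl
        · exact ⟨hp.1, fun hh =>
            (ne_of_lt hpq) (congrArg (fun z : Plane => z 0) (mem_singleton_iff.mp hh))⟩
        · exact ⟨hr.1, fun hh =>
            (ne_of_gt hqr) (congrArg (fun z : Plane => z 0) (mem_singleton_iff.mp hh))⟩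
        · exact ⟨hbT, fun hh => hbA (by rw [mem_singleton_iff] at hh; rw [hh]; exact hq.2)⟩
      exact hconv q hq.1 (convexHull_mono hsubT (interior_subset hint))
  -- extract four x-sorted points of T ∩ A
  obtain ⟨T4, hT4sub, hT4card⟩ := Set.exists_subset_card_eq hA4
  have hT4fin : T4.Finite := hTfin.subset (hT4sub.trans (fun x hx => hx.1))
  have hT4card' : hT4fin.toFinset.card = 4 := by
    rw [← Set.ncard_eq_toFinset_card _ hT4fin]
    exact hT4card
  obtain ⟨p₁, hp₁, p₂, hp₂, p₃, hp₃, p₄, hp₄, h12, h23, h34⟩ := sort4 hT4card' (by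
    intro u hu v hv huv
    rw [Set.Finite.mem_toFinset] at hu hv
    exact hAx u (hT4sub hu).2 v (hT4sub hv).2 huv)
  rw [Set.Finite.mem_toFinset] at hp₁ hp₂ hp₃ hp₄
  have m₁ := hT4sub hp₁
  have m₂ := hT4sub hp₂
  have m₃ := hT4sub hp₃
  have m₄ := hT4sub hp₄
  -- they form a 4-cup in A
  obtain ⟨q, hqA, e, f, hef, hx1, hx2, hcr⟩ :=
    hcup p₁ m₁.2 p₂ m₂.2 p₃ m₃.2 p₄ m₄.2 h12 h23 h34
      (tripleCup p₁ m₁ p₂ m₂ p₃ m₃ h12 h23)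
      (tripleCup p₁ m₁ p₂ m₂ p₄ m₄ h12 (h23.trans h34))
      (tripleCup p₁ m₁ p₃ m₃ p₄ m₄ (h12.trans h23) h34)
      (tripleCup p₂ m₂ p₃ m₃ p₄ m₄ h23 h34)
  -- the returned pair (e, f) is one of the edges; both endpoints lie in T ∩ A
  have hefTA : e ∈ T ∩ A ∧ f ∈ T ∩ A := by
    rcases hef with ⟨rfl, rfl⟩ | ⟨rfl, rfl⟩ | ⟨rfl, rfl⟩
    · exact ⟨m₁, m₂⟩
    · exact ⟨m₂, m₃⟩
    · exact ⟨m₃, m₄⟩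
  -- q is inside the triangle (e, f, b) ⊆ conv T
  have c2 : 0 < cross f b q := by
    have h1 : 0 < cross q f b := hUp q hqA f hefTA.2.2 b hbB hx2
    have h2 : cross f b q = cross q f b := by rw [cross_rot q f b]
    linarith
  have c3 : 0 < cross b e q := by
    have h1 : 0 < cross e q b := hUp e hefTA.1.2 q hqA b hbB hx1
    have h2 : cross b e q = cross e q b := by rw [cross_rot b e q]
    linarith
  have hint := mem_triangle_interior hcr c2 c3
  have hsubT : ({e, f, b} : Set Plane) ⊆ T := by
    intro x hx
    rcases hx with rfl | rfl | rfl
    · exact hefTA.1.1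
    · exact hefTA.2.1
    · exact hbT
  exact ⟨q, Or.inl hqA, interior_mono (convexHull_mono hsubT) hint⟩
lemma refl2_x (z : Plane) : refl2 z 0 = z 0 := rfl

lemma union_holeFree {A B : Set Plane}
    (hHigh : HighAbove B A)
    (hAx : ∀ u ∈ A, ∀ v ∈ A, u ≠ v → u 0 ≠ v 0)
    (hBx : ∀ u ∈ B, ∀ v ∈ B, u ≠ v → u 0 ≠ v 0)
    (hgpAB : NC3 (A ∪ B))
    (hA7 : HoleFree 7 A) (hB7 : HoleFree 7 B)
    (hcupA : CupClosed4 A) (hcapB : CapClosed4 B) :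
    HoleFree 7 (A ∪ B) := by
  intro T hT hfin hcard
  by_cases hcv : ∃ t ∈ T, t ∈ convexHull ℝ (T \ {t})
  · obtain ⟨t, htT, ht⟩ := hcv
    exact ⟨t, hT htT, interior_from_hull hgpAB hT htT ht⟩
  push_neg at hcv
  by_cases hTA : T ⊆ A
  · obtain ⟨s, hs, hsi⟩ := hA7 T hTA hfin hcard
    exact ⟨s, Or.inl hs, hsi⟩
  by_cases hTB : T ⊆ B
  · obtain ⟨s, hs, hsi⟩ := hB7 T hTB hfin hcard
    exact ⟨s, Or.inr hs, hsi⟩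
  obtain ⟨bb, hbbT, hbbA⟩ := not_subset.mp hTA
  obtain ⟨aa, haaT, haaB⟩ := not_subset.mp hTB
  have hpart : (T ∩ A).ncard + (T \ A).ncard = 7 := by
    rw [Set.ncard_inter_add_ncard_diff_eq_ncard T A hfin, hcard]
  rcases le_or_gt 4 ((T ∩ A).ncard) with h4 | h4
  · exact lowCase (highAbove_crossUL hHigh) hgpAB hAx hcupA hT hfin hcv h4 ⟨bb, hbbT, hbbA⟩
  · have h4' : 4 ≤ (T \ A).ncard := by omega
    -- reflect and use `lowCase` for `B` (seen from below)
    have hgp' : NC3 (refl2 '' B ∪ refl2 '' A) := by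
      rintro u hu v hv w hw huv huw hvw
      have getm : ∀ z, z ∈ refl2 '' B ∪ refl2 '' A → ∃ z', z' ∈ A ∪ B ∧ z = refl2 z' := by
        rintro z (⟨z', hz', rfl⟩ | ⟨z', hz', rfl⟩)
        · exact ⟨z', Or.inr hz', rfl⟩
        · exact ⟨z', Or.inl hz', rfl⟩
      obtain ⟨u', hu', rfl⟩ := getm u hu
      obtain ⟨v', hv', rfl⟩ := getm v hv
      obtain ⟨w', hw', rfl⟩ := getm w hw
      rw [cross_refl2]
      have := hgpAB u' hu' v' hv' w' hw'
        (fun h => huv (congrArg refl2 h)) (fun h => huw (congrArg refl2 h))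
        (fun h => hvw (congrArg refl2 h))
      intro h0
      exact this (by linarith)
    have hUp' : ∀ p ∈ refl2 '' B, ∀ q ∈ refl2 '' B, ∀ u ∈ refl2 '' A,
        p 0 < q 0 → 0 < cross p q u := by
      rintro p ⟨p', hp', rfl⟩ q ⟨q', hq', rfl⟩ u ⟨u', hu', rfl⟩ hpq
      rw [cross_refl2]
      have := highAbove_crossLU hHigh p' hp' q' hq' u' hu' hpq
      linarith
    have hAx' : ∀ u ∈ refl2 '' B, ∀ v ∈ refl2 '' B, u ≠ v → u 0 ≠ v 0 := by
      rintro u ⟨u', hu', rfl⟩ v ⟨v', hv', rfl⟩ huv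
      exact hBx u' hu' v' hv' (fun h => huv (congrArg refl2 h))
    have hT' : refl2 '' T ⊆ refl2 '' B ∪ refl2 '' A := by
      rintro x ⟨z, hz, rfl⟩
      rcases hT hz with h | h
      · exact Or.inr (mem_image_of_mem _ h)
      · exact Or.inl (mem_image_of_mem _ h)
    have hconv' : ∀ t ∈ refl2 '' T, t ∉ convexHull ℝ ((refl2 '' T) \ {t}) := by
      rintro t ⟨z, hz, rfl⟩ hmem
      have hdiff : (refl2 '' T) \ {refl2 z} = refl2 '' (T \ {z}) := by
        rw [Set.image_diff refl2_inj, Set.image_singleton]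
      rw [hdiff, ← refl2_image_convexHull] at hmem
      obtain ⟨z', hz', heq⟩ := hmem
      rw [refl2_inj heq] at hz'
      exact hcv z hz hz'
    have hTBsub : T \ A ⊆ T ∩ B := fun x hx => ⟨hx.1, (hT hx.1).resolve_left hx.2⟩
    have hA4' : 4 ≤ ((refl2 '' T) ∩ (refl2 '' B)).ncard := by
      rw [← Set.image_inter refl2_inj, Set.ncard_image_of_injective _ refl2_inj]
      exact le_trans (le_trans h4' (Set.ncard_le_ncard hTBsub
        (hfin.subset inter_subset_left))) (le_refl _)
    have hb' : ∃ b ∈ refl2 '' T, b ∉ refl2 '' B := by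
      refine ⟨refl2 aa, mem_image_of_mem _ haaT, ?_⟩
      rintro ⟨z, hz, heq⟩
      exact haaB (refl2_inj heq ▸ hz)
    obtain ⟨s', hs', hsi'⟩ := lowCase hUp' hgp' hAx' (reflCup_of_capClosed hcapB)
      hT' (hfin.image _) hconv' hA4' hb'
    rw [← refl2_image_convexHull, ← refl2_image_interior] at hsi'
    obtain ⟨s, hs, rfl⟩ := hsi'
    refine ⟨s, ?_, hs⟩
    rcases hs' with ⟨z, hz, heq⟩ | ⟨z, hz, heq⟩
    · exact Or.inr (refl2_inj heq ▸ hz)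
    · exact Or.inl (refl2_inj heq ▸ hz)

theorem horton_holeFree {H : Set Plane} {φ : Plane → ℝ} (h : IsHorton H φ) : HoleFree 7 H := by
  induction h with
  | base H φ hc hsub =>
    intro T hT hfin hcard
    exfalso
    rcases (hsub.anti hT).eq_empty_or_singleton with h | ⟨x, h⟩ <;>
      rw [h] at hcard <;> simp at hcard
  | step H φ hc h0 h1 hor ih0 ih1 =>
    have hdec := decomp hc
    have hHLU : H = levelSubset φ H 0 2 ∪ levelSubset φ H 1 2 := by
      apply Subset.antisymm
      · intro x hx; exact hdec x hx
      · rintro x (hx | hx) <;> exact hx.1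
    have hLx : ∀ u ∈ levelSubset φ H 0 2, ∀ v ∈ levelSubset φ H 0 2, u ≠ v → u 0 ≠ v 0 :=
      fun u hu v hv => distinct_x hc hu.1 hv.1
    have hUx : ∀ u ∈ levelSubset φ H 1 2, ∀ v ∈ levelSubset φ H 1 2, u ≠ v → u 0 ≠ v 0 :=
      fun u hu v hv => distinct_x hc hu.1 hv.1
    have hncL := horton_nc3 h0
    have hncU := horton_nc3 h1
    rw [hHLU]
    rcases hor with hUp | hUp
    · exact union_holeFree hUp hLx hUx (nc3_union hncL hncU hLx hUx hUp)
        ih0 ih1 (horton_closed h0).1 (horton_closed h1).2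
    · rw [union_comm]
      exact union_holeFree hUp hUx hLx (nc3_union hncU hncL hUx hLx hUp)
        ih1 ih0 (horton_closed h1).1 (horton_closed h0).2


theorem statement7 (H₁ H₂ : Set Plane) (φ₁ φ₂ : Plane → ℝ)
    (h₁ : IsHorton H₁ φ₁) (h₂ : IsHorton H₂ φ₂)
    (hdeep : HighAbove H₂ H₁) :
    HoleFree 7 (H₁ ∪ H₂) := by

  have hAx : ∀ u ∈ H₁, ∀ v ∈ H₁, u ≠ v → u 0 ≠ v 0 :=
    fun u hu v hv => distinct_x (isHorton_levelled h₁) hu hv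
  have hBx : ∀ u ∈ H₂, ∀ v ∈ H₂, u ≠ v → u 0 ≠ v 0 :=
    fun u hu v hv => distinct_x (isHorton_levelled h₂) hu hv
  exact union_holeFree hdeep hAx hBx
    (nc3_union (horton_nc3 h₁) (horton_nc3 h₂) hAx hBx hdeep)
    (horton_holeFree h₁) (horton_holeFree h₂)
    (horton_closed h₁).1 (horton_closed h₂).2
end
end

section
/- Let S ⊆ ℤ² be a finite set of lattice points with |S| ≥ 7. Then either the interior of the convex hull of S (taken in ℝ²) contains a point of ℤ², or S is covered by two parallel lines in ℝ². -/
noncomputable section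

/-- The point of `ℝ²` corresponding to a lattice point of `ℤ²`. -/
def intCast2 (x : Fin 2 → ℤ) : Fin 2 → ℝ := fun i => (x i : ℝ)

/-- integer 2x2 determinant -/
def dt (a b : Fin 2 → ℤ) : ℤ := a 0 * b 1 - a 1 * b 0

/-- real 2x2 determinant -/
def dR (a b : Fin 2 → ℝ) : ℝ := a 0 * b 1 - a 1 * b 0

lemma dR_cast (a b : Fin 2 → ℤ) : dR (intCast2 a) (intCast2 b) = (dt a b : ℝ) := by
  simp only [dR, dt, intCast2, Pi.sub_apply]; push_cast; ring_nf

lemma tbary (A B C : Fin 2 → ℝ) (hΔ : dR (B - A) (C - A) ≠ 0) (α β γ : ℝ)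
    (hα : 0 < α) (hβ : 0 < β) (hγ : 0 < γ) (hsum : α + β + γ = 1) :
    α • A + β • B + γ • C ∈ interior (convexHull ℝ {A, B, C}) := by
  have hAI : AffineIndependent ℝ ![A, B, C] := by
    rw [affineIndependent_iff_not_collinear]
    intro hcol
    obtain ⟨v, hv⟩ := (collinear_iff_of_mem (Set.mem_range_self (0 : Fin 3))).mp hcol
    obtain ⟨t1, ht1⟩ := hv _ (Set.mem_range_self (1 : Fin 3))
    obtain ⟨t2, ht2⟩ := hv _ (Set.mem_range_self (2 : Fin 3))
    apply hΔ
    have hB : B - A = t1 • v := by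
      have : B = t1 • v + A := ht1
      rw [this]; abel
    have hC : C - A = t2 • v := by
      have : C = t2 • v + A := ht2
      rw [this]; abel
    rw [hB, hC]
    simp [dR]; ring
  have htop : affineSpan ℝ (Set.range ![A, B, C]) = ⊤ := by
    rw [hAI.affineSpan_eq_top_iff_card_eq_finrank_add_one]
    simp [Module.finrank_pi]
  let b : AffineBasis (Fin 3) ℝ (Fin 2 → ℝ) := ⟨![A, B, C], hAI, htop⟩
  have hrange : Set.range (⇑b) = {A, B, C} := by
    show Set.range ![A, B, C] = _
    ext x
    constructor
    · rintro ⟨i, rfl⟩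
      fin_cases i <;> simp
    · rintro (rfl | rfl | rfl)
      exacts [⟨0, rfl⟩, ⟨1, rfl⟩, ⟨2, rfl⟩]
  have hcomb : α • A + β • B + γ • C =
      Finset.univ.affineCombination ℝ ![A, B, C] ![α, β, γ] := by
    rw [Finset.affineCombination_eq_linear_combination _ _ _ (by simp [Fin.sum_univ_three, hsum])]
    simp [Fin.sum_univ_three]
  rw [← hrange, b.interior_convexHull]
  intro i
  have : b.coord i (Finset.univ.affineCombination ℝ ![A, B, C] ![α, β, γ]) = ![α, β, γ] i :=
    b.coord_apply_combination_of_mem (Finset.mem_univ i) (by simp [Fin.sum_univ_three, hsum])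
  rw [hcomb]
  show 0 < b.coord i _
  rw [this]
  fin_cases i <;> simpa

/-- strict inside predicate -/
def sIn (a b c z : Fin 2 → ℤ) : Prop :=
  0 < dt (b - a) (z - a) ∧ 0 < dt (c - b) (z - b) ∧ 0 < dt (a - c) (z - c)

lemma dt_identity (a b c z : Fin 2 → ℤ) :
    dt (b - a) (c - a) = dt (b - a) (z - a) + dt (c - b) (z - b) + dt (a - c) (z - c) := by
  simp only [dt, Pi.sub_apply]; ring

lemma tint {a b c z : Fin 2 → ℤ} (h : sIn a b c z) :
    intCast2 z ∈ interior (convexHull ℝ {intCast2 a, intCast2 b, intCast2 c}) := by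
  obtain ⟨h1, h2, h3⟩ := h
  set D1 := dt (b - a) (z - a) with hD1
  set D2 := dt (c - b) (z - b) with hD2
  set D3 := dt (a - c) (z - c) with hD3
  have hΔ : dt (b - a) (c - a) = D1 + D2 + D3 := dt_identity a b c z
  have hΔpos : (0 : ℤ) < D1 + D2 + D3 := by positivity
  have key : ((D2 : ℝ) / (D1 + D2 + D3)) • intCast2 a + ((D3 : ℝ) / (D1 + D2 + D3)) • intCast2 b
      + ((D1 : ℝ) / (D1 + D2 + D3)) • intCast2 c = intCast2 z := by
    have hne : ((D1 : ℝ) + D2 + D3) ≠ 0 := by positivity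
    have hid : ∀ i : Fin 2, (D2 : ℝ) * a i + D3 * b i + D1 * c i = ((D1 : ℝ) + D2 + D3) * z i := by
      intro i
      have : D2 * a i + D3 * b i + D1 * c i = (D1 + D2 + D3) * z i := by
        fin_cases i <;>
          (simp only [hD1, hD2, hD3, dt, Pi.sub_apply, Fin.isValue]; push_cast; ring)
      exact_mod_cast this
    funext i
    have := hid i
    simp only [Pi.add_apply, Pi.smul_apply, intCast2, smul_eq_mul]
    field_simp
    linarith [this]
  rw [← key]
  have hΔR : dR (intCast2 b - intCast2 a) (intCast2 c - intCast2 a) ≠ 0 := by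
    have : intCast2 b - intCast2 a = intCast2 (b - a) := by
      funext i; simp [intCast2]
    rw [this]
    have : intCast2 c - intCast2 a = intCast2 (c - a) := by
      funext i; simp [intCast2]
    rw [this, dR_cast, hΔ]
    exact_mod_cast hΔpos.ne'
  have hS : (0:ℝ) < (D1 : ℝ) + D2 + D3 := by exact_mod_cast hΔpos
  refine tbary _ _ _ hΔR _ _ _ ?_ ?_ ?_ ?_
  · positivity
  · positivity
  · positivity
  · field_simp; ring

lemma tintS {S : Set (Fin 2 → ℤ)} {a b c z : Fin 2 → ℤ} (ha : a ∈ S) (hb : b ∈ S)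
    (hc : c ∈ S) (h : sIn a b c z) :
    intCast2 z ∈ interior (convexHull ℝ (intCast2 '' S)) := by
  refine interior_mono (convexHull_mono ?_) (tint h)
  rintro x (rfl | rfl | rfl)
  exacts [⟨a, ha, rfl⟩, ⟨b, hb, rfl⟩, ⟨c, hc, rfl⟩]

/-- primitivity -/
def Prim (e : Fin 2 → ℤ) : Prop := IsCoprime (e 0) (e 1)

lemma prim_ne_zero {e : Fin 2 → ℤ} (he : Prim e) : e ≠ 0 := by
  rintro rfl
  exact not_isCoprime_zero_zero (by simpa [Prim] using he)

lemma primP {e w : Fin 2 → ℤ} (he : Prim e) (h : dt e w = 0) : ∃ k : ℤ, w = k • e := by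
  obtain ⟨a, b, hab⟩ := he
  refine ⟨a * w 0 + b * w 1, ?_⟩
  have h' : e 0 * w 1 = e 1 * w 0 := by simpa [dt, sub_eq_zero] using h
  funext i
  fin_cases i
  · show w 0 = (a * w 0 + b * w 1) * e 0
    linear_combination (-(w 0)) * hab - b * h'
  · show w 1 = (a * w 0 + b * w 1) * e 1
    linear_combination (-(w 1)) * hab + a * h'

lemma prim_height_one {e : Fin 2 → ℤ} (he : Prim e) : ∃ w : Fin 2 → ℤ, dt e w = 1 := by
  obtain ⟨a, b, hab⟩ := he
  exact ⟨![-b, a], by simp [dt]; linarith [hab]⟩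

/-- content decomposition of a nonzero vector -/
lemma content_decomp (v : Fin 2 → ℤ) (hv : v ≠ 0) :
    ∃ (L : ℤ) (e : Fin 2 → ℤ), Prim e ∧ v = L • e ∧ 0 < L ∧ (L : ℤ) = Int.gcd (v 0) (v 1) := by
  have hne : v 0 ≠ 0 ∨ v 1 ≠ 0 := by
    by_contra hcon; push_neg at hcon
    exact hv (by funext i; fin_cases i <;> simp [hcon.1, hcon.2])
  have hg0 : 0 < Int.gcd (v 0) (v 1) := Int.gcd_pos_iff.mpr (by tauto)
  set g : ℤ := (Int.gcd (v 0) (v 1) : ℤ) with hg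
  have hgpos : 0 < g := by rw [hg]; exact_mod_cast hg0
  have hd0 : g ∣ v 0 := Int.gcd_dvd_left _ _
  have hd1 : g ∣ v 1 := Int.gcd_dvd_right _ _
  refine ⟨g, ![v 0 / g, v 1 / g], ?_, ?_, hgpos, rfl⟩
  · have := Int.gcd_div_gcd_div_gcd hg0
    rw [Prim, Int.isCoprime_iff_gcd_eq_one]
    simpa using this
  · funext i
    fin_cases i
    · show v 0 = g * (v 0 / g)
      exact (Int.mul_ediv_cancel' hd0).symm
    · show v 1 = g * (v 1 / g)
      exact (Int.mul_ediv_cancel' hd1).symm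

lemma dt_add_right (a b c : Fin 2 → ℤ) : dt a (b + c) = dt a b + dt a c := by simp [dt]; ring
lemma dt_smul_right (k : ℤ) (a b : Fin 2 → ℤ) : dt a (k • b) = k * dt a b := by simp [dt]; ring
lemma dt_smul_left (k : ℤ) (a b : Fin 2 → ℤ) : dt (k • a) b = k * dt a b := by simp [dt]; ring
lemma dt_anti (a b : Fin 2 → ℤ) : dt a b = - dt b a := by simp [dt]; ring
lemma dt_self (a : Fin 2 → ℤ) : dt a a = 0 := by simp [dt]; ring
lemma dt_sub_right (a b c : Fin 2 → ℤ) : dt a (b - c) = dt a b - dt a c := by simp [dt]; ring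

/-- the slice lemma: a long-enough base with a high-enough apex has an interior
lattice point. -/
lemma sliceLem {A Y e : Fin 2 → ℤ} (he : Prim e) (L : ℤ) (hL : 0 < L)
    (hβ : 0 < dt e (Y - A)) (hcond : L * (dt e (Y - A) - 1) > dt e (Y - A)) :
    ∃ z, sIn A (A + L • e) Y z := by
  set β := dt e (Y - A) with hβdef
  obtain ⟨w₀, hw₀⟩ := prim_height_one he
  set A' : Fin 2 → ℤ := A + L • e with hA'
  set C₂ := dt (Y - A') (A + w₀ - A') with hC₂
  set C₃ := dt (A - Y) (A + w₀ - Y) with hC₃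
  have hAA' : A' - A = L • e := by rw [hA']; abel
  have hid : L * β = L + C₂ + C₃ := by
    have := dt_identity A A' Y (A + w₀)
    rw [hAA'] at this
    rw [dt_smul_left, dt_smul_left] at this
    have h1 : A + w₀ - A = w₀ := by abel
    rw [h1, hw₀, mul_one] at this
    rw [← hβdef] at this
    linarith [this]
  set k := (C₂ - 1) / β with hk
  have hdm : β * k + (C₂ - 1) % β = C₂ - 1 := Int.mul_ediv_add_emod (C₂ - 1) β
  have hm0 : 0 ≤ (C₂ - 1) % β := Int.emod_nonneg _ (ne_of_gt hβ)
  have hm1 : (C₂ - 1) % β < β := Int.emod_lt_of_pos _ hβ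
  refine ⟨A + w₀ + k • e, ?_, ?_, ?_⟩
  · have h1 : A + L • e - A = L • e := by abel
    have h2 : A + w₀ + k • e - A = w₀ + k • e := by abel
    rw [h1, h2, dt_smul_left, dt_add_right, dt_smul_right, hw₀, dt_self]
    nlinarith [hL]
  · have h2 : A + w₀ + k • e - (A + L • e) = (A + w₀ - A') + k • e := by rw [hA']; abel
    have h3 : Y - (A + L • e) = Y - A' := by rw [hA']
    rw [h2, h3, dt_add_right, dt_smul_right, ← hC₂]
    have h4 : dt (Y - A') e = -β := by
      have h5 : Y - A' = (Y - A) - L • e := by rw [hA']; abel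
      rw [dt_anti, h5, dt_sub_right, dt_smul_right, dt_self, ← hβdef]
      ring
    rw [h4]
    nlinarith [hdm, hm0]
  · have h2 : A + w₀ + k • e - Y = (A + w₀ - Y) + k • e := by abel
    rw [h2, dt_add_right, dt_smul_right, ← hC₃]
    have h4 : dt (A - Y) e = β := by
      have h5 : A - Y = -((Y - A)) := by abel
      rw [dt_anti, h5]
      have : dt e (-(Y - A)) = - dt e (Y - A) := by simp [dt]; ring
      rw [this, ← hβdef]; ring
    rw [h4]
    nlinarith [hdm, hm1, hid, hcond]

lemma zmod2_det (a b c d x y : ZMod 2) (h1 : a * d - b * c = 0) (h2 : a * y - b * x = 1)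
    (hv : c ≠ 0 ∨ d ≠ 0) (he : a ≠ 0 ∨ b ≠ 0) : c * y - d * x = 1 := by
  revert h1 h2 hv he; revert a b c d x y; decide

lemma prim_not_both_even {e : Fin 2 → ℤ} (he : Prim e) :
    ¬((2:ℤ) ∣ e 0 ∧ (2:ℤ) ∣ e 1) := by
  rintro ⟨h0, h1⟩
  have := he.isUnit_of_dvd' h0 h1
  rw [Int.isUnit_iff] at this
  omega

lemma parity_slice {A Y e : Fin 2 → ℤ} (he : Prim e) (hβ : dt e (Y - A) = 2)
    (hodd : ¬((2:ℤ) ∣ (Y 0 - A 0)) ∨ ¬((2:ℤ) ∣ (Y 1 - A 1))) :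
    ∃ z, sIn A (A + (2:ℤ) • e) Y z := by
  obtain ⟨w₀, hw₀⟩ := prim_height_one he
  set A' : Fin 2 → ℤ := A + (2:ℤ) • e with hA'
  set C₂ := dt (Y - A') (A + w₀ - A') with hC₂
  set C₃ := dt (A - Y) (A + w₀ - Y) with hC₃
  have hid : (2:ℤ) * 2 = 2 + C₂ + C₃ := by
    have := dt_identity A A' Y (A + w₀)
    have hAA' : A' - A = (2:ℤ) • e := by rw [hA']; abel
    rw [hAA'] at this
    rw [dt_smul_left, dt_smul_left] at this
    have h1 : A + w₀ - A = w₀ := by abel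
    rw [h1, hw₀, mul_one, hβ] at this
    linarith [this]
  -- C₂ is odd
  have hφd : ∀ u v : Fin 2 → ℤ, ((dt u v : ℤ) : ZMod 2)
      = ((u 0 : ℤ) : ZMod 2) * ((v 1 : ℤ) : ZMod 2)
        - ((u 1 : ℤ) : ZMod 2) * ((v 0 : ℤ) : ZMod 2) := by
    intro u v
    simp only [dt]
    push_cast
    ring
  have htwo : ((2 : ℤ) : ZMod 2) = 0 := by decide
  have hC₂odd : (2:ℤ) ∣ (C₂ - 1) := by
    have hC₂' : C₂ = dt (Y - A) w₀ - 2 * dt (Y - A) e - 2 * dt e w₀ + 2 * 2 * dt e e := by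
      rw [hC₂, hA']
      simp only [dt, Pi.sub_apply, Pi.add_apply, Pi.smul_apply, smul_eq_mul]
      ring
    have h1' : ((e 0 : ℤ) : ZMod 2) * (((Y - A) 1 : ℤ) : ZMod 2)
        - ((e 1 : ℤ) : ZMod 2) * (((Y - A) 0 : ℤ) : ZMod 2) = 0 := by
      rw [← hφd e (Y - A), hβ, htwo]
    have h2' : ((e 0 : ℤ) : ZMod 2) * ((w₀ 1 : ℤ) : ZMod 2)
        - ((e 1 : ℤ) : ZMod 2) * ((w₀ 0 : ℤ) : ZMod 2) = 1 := by
      rw [← hφd e w₀, hw₀]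
      norm_num
    have hvne : (((Y - A) 0 : ℤ) : ZMod 2) ≠ 0 ∨ (((Y - A) 1 : ℤ) : ZMod 2) ≠ 0 := by
      rcases hodd with h | h
      · left; rw [Ne, ZMod.intCast_zmod_eq_zero_iff_dvd]
        simpa using h
      · right; rw [Ne, ZMod.intCast_zmod_eq_zero_iff_dvd]
        simpa using h
    have hene : ((e 0 : ℤ) : ZMod 2) ≠ 0 ∨ ((e 1 : ℤ) : ZMod 2) ≠ 0 := by
      by_contra hcon
      push_neg at hcon
      refine prim_not_both_even he ⟨?_, ?_⟩
      · have := hcon.1; rw [ZMod.intCast_zmod_eq_zero_iff_dvd] at this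
        exact_mod_cast this
      · have := hcon.2; rw [ZMod.intCast_zmod_eq_zero_iff_dvd] at this
        exact_mod_cast this
    have hdtvw : ((dt (Y - A) w₀ : ℤ) : ZMod 2) = 1 := by
      rw [hφd (Y - A) w₀]
      exact zmod2_det _ _ _ _ _ _ h1' h2' hvne hene
    rw [dt_self] at hC₂'
    have hcast : ((C₂ - 1 : ℤ) : ZMod 2) = 0 := by
      rw [hC₂']
      push_cast
      rw [hdtvw]
      have h2z : ((2 : ZMod 2)) = 0 := by decide
      rw [h2z]
      ring
    have := (ZMod.intCast_zmod_eq_zero_iff_dvd (C₂ - 1) 2).mp hcast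
    exact_mod_cast this
  set k := (C₂ - 1) / 2 with hk
  have h2k : 2 * k = C₂ - 1 := Int.mul_ediv_cancel' hC₂odd
  refine ⟨A + w₀ + k • e, ?_, ?_, ?_⟩
  · have h1 : A + (2:ℤ) • e - A = (2:ℤ) • e := by abel
    have h2 : A + w₀ + k • e - A = w₀ + k • e := by abel
    rw [h1, h2, dt_smul_left, dt_add_right, dt_smul_right, hw₀, dt_self]
    norm_num
  · have h2 : A + w₀ + k • e - (A + (2:ℤ) • e) = (A + w₀ - A') + k • e := by rw [hA']; abel
    have h3 : Y - (A + (2:ℤ) • e) = Y - A' := by rw [hA']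
    rw [h2, h3, dt_add_right, dt_smul_right, ← hC₂]
    have h4 : dt (Y - A') e = -2 := by
      have h5 : Y - A' = (Y - A) - (2:ℤ) • e := by rw [hA']; abel
      rw [dt_anti, h5, dt_sub_right, dt_smul_right, dt_self, hβ]
      ring
    rw [h4]
    linarith [h2k]
  · have h2 : A + w₀ + k • e - Y = (A + w₀ - Y) + k • e := by abel
    rw [h2, dt_add_right, dt_smul_right, ← hC₃]
    have h4 : dt (A - Y) e = 2 := by
      have h5 : A - Y = -(Y - A) := by abel
      rw [dt_anti, h5]
      have : dt e (-(Y - A)) = - dt e (Y - A) := by simp [dt]; ring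
      rw [this, hβ]; ring
    rw [h4]
    linarith [h2k, hid]

lemma intCast2_add (a b : Fin 2 → ℤ) : intCast2 (a + b) = intCast2 a + intCast2 b := by
  funext i; simp [intCast2]

lemma intCast2_sub (a b : Fin 2 → ℤ) : intCast2 (a - b) = intCast2 a - intCast2 b := by
  funext i; simp [intCast2]

lemma intCast2_smul (k : ℤ) (a : Fin 2 → ℤ) :
    intCast2 (k • a) = (k : ℝ) • intCast2 a := by
  funext i; simp [intCast2]

lemma dR_sub_right (a b c : Fin 2 → ℝ) : dR a (b - c) = dR a b - dR a c := by simp [dR]; ring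

set_option maxHeartbeats 1000000 in
lemma quad {S : Set (Fin 2 → ℤ)} {A e r s : Fin 2 → ℤ} {L : ℤ}
    (hA : A ∈ S) (hA' : A + L • e ∈ S) (hr : r ∈ S) (hs : s ∈ S)
    (hL : 2 ≤ L) (hrp : 0 < dt e (r - A)) (hsn : dt e (s - A) < 0) :
    intCast2 (A + e) ∈ interior (convexHull ℝ (intCast2 '' S)) := by
  set P := intCast2 A with hP
  set Qp := intCast2 (A + L • e) with hQp
  set R := intCast2 r with hR
  set Sp := intCast2 s with hSp
  set E := intCast2 e with hE
  set Z := intCast2 (A + e) with hZ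
  have hLR : (2 : ℝ) ≤ (L : ℝ) := by exact_mod_cast hL
  have hLpos : (0 : ℝ) < L := by linarith
  have hQpP : Qp - P = (L : ℝ) • E := by
    rw [hQp, hP, ← intCast2_sub]
    have : A + L • e - A = L • e := by abel
    rw [this, intCast2_smul]
  have hZP : Z - P = E := by
    rw [hZ, hP, ← intCast2_sub]
    have : A + e - A = e := by abel
    rw [this]
  have hm : (0:ℝ) < dR E (R - P) := by
    rw [hE, hP, hR, ← intCast2_sub, dR_cast]
    exact_mod_cast hrp
  have hn : dR E (Sp - P) < 0 := by
    rw [hE, hP, hSp, ← intCast2_sub, dR_cast]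
    exact_mod_cast hsn
  set Δ := dR (Qp - P) (R - P) with hΔdef
  have hΔ : Δ = (L:ℝ) * dR E (R - P) := by rw [hΔdef, hQpP]; simp [dR]; ring
  have hΔpos : 0 < Δ := by rw [hΔ]; positivity
  set lam := dR (Sp - P) (R - P) / Δ with hlam
  set ν := dR (Qp - P) (Sp - P) / Δ with hν
  have hνneg : ν < 0 := by
    rw [hν]
    apply div_neg_of_neg_of_pos _ hΔpos
    have : dR (Qp - P) (Sp - P) = (L:ℝ) * dR E (Sp - P) := by rw [hQpP]; simp [dR]; ring
    rw [this]
    exact mul_neg_of_pos_of_neg hLpos hn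
  have hdecomp : Sp - P = lam • (Qp - P) + ν • (R - P) := by
    have hcramer : ∀ i : Fin 2, Δ * (Sp - P) i =
        dR (Sp - P) (R - P) * (Qp - P) i + dR (Qp - P) (Sp - P) * (R - P) i := by
      intro i
      fin_cases i
      · show Δ * (Sp 0 - P 0) =
            dR (Sp - P) (R - P) * (Qp 0 - P 0) + dR (Qp - P) (Sp - P) * (R 0 - P 0)
        simp only [hΔdef, dR, Pi.sub_apply]; ring
      · show Δ * (Sp 1 - P 1) =
            dR (Sp - P) (R - P) * (Qp 1 - P 1) + dR (Qp - P) (Sp - P) * (R 1 - P 1)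
        simp only [hΔdef, dR, Pi.sub_apply]; ring
    funext i
    have hcramer := hcramer i
    simp only [Pi.sub_apply] at hcramer
    simp only [Pi.add_apply, Pi.smul_apply, smul_eq_mul, hlam, hν]
    field_simp
    simp only [Pi.sub_apply]
    linarith [hcramer]
  set θ : ℝ := 1 / (L:ℝ) with hθ
  have hθ0 : 0 < θ := by positivity
  have hθ1 : θ < 1 := by rw [hθ]; rw [div_lt_one hLpos]; linarith
  have hZcomb : Z = P + θ • (Qp - P) := by
    have : θ • (Qp - P) = E := by
      rw [hQpP, smul_smul, hθ]
      rw [one_div, inv_mul_cancel₀ (by positivity : (L:ℝ) ≠ 0), one_smul]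
    rw [this, ← hZP]; abel
  set M : ℝ := |θ - lam| + |ν| + 1 with hM
  have hMpos : 0 < M := by positivity
  set μ : ℝ := min θ (1 - θ) / M with hμ
  have hminpos : 0 < min θ (1 - θ) := lt_min hθ0 (by linarith)
  have hμpos : 0 < μ := by positivity
  have hμM : μ * M = min θ (1 - θ) := by
    rw [hμ]; field_simp
  -- the three barycentric coordinates of z₁
  set β' : ℝ := θ + μ * (θ - lam) with hβ'
  set γ' : ℝ := -(μ * ν) with hγ'
  set α' : ℝ := 1 - β' - γ' with hα'
  have habs1 : θ - lam ≤ |θ - lam| := le_abs_self _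
  have habs2 : -(θ - lam) ≤ |θ - lam| := neg_le_abs _
  have habsν : |ν| = -ν := abs_of_neg hνneg
  have hmin1 : min θ (1 - θ) ≤ θ := min_le_left _ _
  have hmin2 : min θ (1 - θ) ≤ 1 - θ := min_le_right _ _
  have hβ'pos : 0 < β' := by
    rw [hβ']
    nlinarith [hμM, hμpos, habs2, abs_nonneg ν]
  have hγ'pos : 0 < γ' := by
    rw [hγ']
    nlinarith [hμpos, hνneg]
  have hα'pos : 0 < α' := by
    rw [hα', hβ', hγ']
    nlinarith [hμM, hμpos, habs1, habsν]
  have hsum : α' + β' + γ' = 1 := by rw [hα']; ring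
  -- z₁
  have hz₁eq : Z + μ • (Z - Sp) = α' • P + β' • Qp + γ' • R := by
    have hSpeq : Sp = P + (lam • (Qp - P) + ν • (R - P)) := by
      rw [← hdecomp]; abel
    rw [hZcomb, hSpeq, hα', hβ', hγ']
    module
  have hsub : ({P, Qp, R} : Set (Fin 2 → ℝ)) ⊆ intCast2 '' S := by
    rintro x (rfl | rfl | rfl)
    exacts [⟨A, hA, rfl⟩, ⟨A + L • e, hA', rfl⟩, ⟨r, hr, rfl⟩]
  have hz₁S : Z + μ • (Z - Sp) ∈ interior (convexHull ℝ (intCast2 '' S)) := by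
    refine interior_mono (convexHull_mono hsub) ?_
    rw [hz₁eq]
    exact tbary P Qp R hΔpos.ne' α' β' γ' hα'pos hβ'pos hγ'pos hsum
  have hSpC : Sp ∈ convexHull ℝ (intCast2 '' S) :=
    subset_convexHull ℝ _ ⟨s, hs, rfl⟩
  have h1μ : (0:ℝ) < 1 + μ := by positivity
  have hfin : (1/(1+μ)) • (Z + μ • (Z - Sp)) + (μ/(1+μ)) • Sp = Z := by
    funext i
    simp only [Pi.add_apply, Pi.smul_apply, Pi.sub_apply, smul_eq_mul]
    field_simp
    ring
  have hmem := (convex_convexHull ℝ (intCast2 '' S)).combo_interior_closure_mem_interior hz₁S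
    (subset_closure hSpC) (by positivity : (0:ℝ) < 1/(1+μ))
    (by positivity : (0:ℝ) ≤ μ/(1+μ)) (by field_simp)
  rwa [hfin] at hmem

lemma cover_right {S : Set (Fin 2 → ℤ)} {u : Fin 2 → ℤ} (hu : u ≠ 0) (c₁ c₂ : ℤ)
    (hcov : ∀ x ∈ S, u 0 * x 0 + u 1 * x 1 = c₁ ∨ u 0 * x 0 + u 1 * x 1 = c₂) :
    ∃ v p₁ p₂ : Fin 2 → ℝ, v ≠ 0 ∧
      intCast2 '' S ⊆ {x | ∃ t : ℝ, x = p₁ + t • v} ∪ {x | ∃ t : ℝ, x = p₂ + t • v} := by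
  have hucomp : u 0 ≠ 0 ∨ u 1 ≠ 0 := by
    by_contra hcon
    push_neg at hcon
    exact hu (by funext i; fin_cases i <;> simp [hcon.1, hcon.2])
  set N : ℝ := (u 0 : ℝ)^2 + (u 1 : ℝ)^2 with hN
  have hNpos : 0 < N := by
    rcases hucomp with h | h
    · have : (u 0 : ℝ) ≠ 0 := by exact_mod_cast h
      positivity
    · have : (u 1 : ℝ) ≠ 0 := by exact_mod_cast h
      positivity
  set v : Fin 2 → ℝ := ![-(u 1 : ℝ), (u 0 : ℝ)] with hv
  have hvne : v ≠ 0 := by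
    intro h
    rcases hucomp with h0 | h0
    · have := congrFun h 1
      simp [hv] at this
      exact h0 (by exact_mod_cast this)
    · have := congrFun h 0
      simp [hv] at this
      exact h0 (by exact_mod_cast this)
  refine ⟨v, ((c₁ : ℝ)/N) • ![(u 0 : ℝ), (u 1 : ℝ)], ((c₂ : ℝ)/N) • ![(u 0 : ℝ), (u 1 : ℝ)],
    hvne, ?_⟩
  rintro x ⟨sx, hsx, rfl⟩
  have key : ∀ c : ℤ, u 0 * sx 0 + u 1 * sx 1 = c →
      intCast2 sx = ((c : ℝ)/N) • ![(u 0 : ℝ), (u 1 : ℝ)] +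
        (((u 0 : ℝ) * sx 1 - (u 1 : ℝ) * sx 0)/N) • v := by
    intro c hc
    have hcR : (u 0 : ℝ) * sx 0 + (u 1 : ℝ) * sx 1 = c := by exact_mod_cast hc
    funext i
    fin_cases i
    · show (sx 0 : ℝ) = (c : ℝ)/N * (u 0 : ℝ) +
        ((u 0 : ℝ) * sx 1 - (u 1 : ℝ) * sx 0)/N * (-(u 1 : ℝ))
      field_simp
      linear_combination ((u 0 : ℝ)) * hcR + ((sx 0 : ℝ)) * hN
    · show (sx 1 : ℝ) = (c : ℝ)/N * (u 1 : ℝ) +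
        ((u 0 : ℝ) * sx 1 - (u 1 : ℝ) * sx 0)/N * (u 0 : ℝ)
      field_simp
      linear_combination ((u 1 : ℝ)) * hcR + ((sx 1 : ℝ)) * hN
  rcases hcov sx hsx with h | h
  · left; exact ⟨_, key c₁ h⟩
  · right; exact ⟨_, key c₂ h⟩

lemma dt_shift (E a x : Fin 2 → ℤ) (L : ℤ) : dt E (x - (a + L • E)) = dt E (x - a) := by
  have h : x - (a + L • E) = (x - a) - L • E := by abel
  rw [h, dt_sub_right, dt_smul_right, dt_self]; ring

lemma dt_neg_left (e w : Fin 2 → ℤ) : dt (-e) w = - dt e w := by simp [dt]; ring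

set_option maxHeartbeats 2000000 in
theorem statement8 (S : Set (Fin 2 → ℤ)) (hS : S.Finite) (hcard : 7 ≤ S.ncard) :
    (∃ z : Fin 2 → ℤ, intCast2 z ∈ interior (convexHull ℝ (intCast2 '' S))) ∨
    (∃ v p₁ p₂ : Fin 2 → ℝ, v ≠ 0 ∧
      intCast2 '' S ⊆ {x | ∃ t : ℝ, x = p₁ + t • v} ∪ {x | ∃ t : ℝ, x = p₂ + t • v}) := by
  by_contra hcon
  rw [not_or] at hcon
  obtain ⟨hLeft, hRight⟩ := hcon
  push_neg at hLeft
  -- no strictly-inside lattice point for any triangle with vertices in S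
  have hT : ∀ a b c z, a ∈ S → b ∈ S → c ∈ S → ¬ sIn a b c z := by
    intro a b c z ha hb hc h
    exact hLeft z (tintS ha hb hc h)
  -- no quadrilateral configuration
  have hQ : ∀ (A e r s : Fin 2 → ℤ) (L : ℤ), A ∈ S → A + L • e ∈ S → r ∈ S → s ∈ S →
      2 ≤ L → 0 < dt e (r - A) → dt e (s - A) < 0 → False := by
    intro A e r s L hA hA' hr hs hL h1 h2
    exact hLeft (A + e) (quad hA hA' hr hs hL h1 h2)
  -- no two-parallel-lines cover
  have hcover : ∀ (A e : Fin 2 → ℤ) (h₁ h₂ : ℤ), e ≠ 0 →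
      (∀ x ∈ S, dt e (x - A) = h₁ ∨ dt e (x - A) = h₂) → False := by
    intro A e h₁ h₂ hene hcov
    set u : Fin 2 → ℤ := ![-(e 1), e 0] with hu
    have hune : u ≠ 0 := by
      intro h
      apply hene
      have h0 := congrFun h 0
      have h1 := congrFun h 1
      simp [hu] at h0 h1
      funext i
      fin_cases i
      · simpa using h1
      · simpa using h0
    apply hRight
    apply cover_right hune (h₁ + (u 0 * A 0 + u 1 * A 1)) (h₂ + (u 0 * A 0 + u 1 * A 1))
    intro x hx
    have hdt : dt e (x - A) = u 0 * x 0 + u 1 * x 1 - (u 0 * A 0 + u 1 * A 1) := by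
      simp [dt, hu]; ring
    rcases hcov x hx with h | h
    · left; rw [hdt] at h; omega
    · right; rw [hdt] at h; omega
  -- supporting lines
  have hsupp : ∀ (A e : Fin 2 → ℤ) (L : ℤ), A ∈ S → A + L • e ∈ S → 2 ≤ L →
      (∃ y ∈ S, 0 < dt e (y - A)) → ∀ x ∈ S, 0 ≤ dt e (x - A) := by
    intro A e L hA hA' hLL ⟨y, hy, hypos⟩ x hx
    by_contra hneg
    push_neg at hneg
    exact hQ A e y x L hA hA' hy hx hLL hypos hneg
  -- height bound from the slice lemma
  have hbound : ∀ (A e : Fin 2 → ℤ) (L : ℤ), A ∈ S → A + L • e ∈ S → Prim e → 2 ≤ L →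
      ∀ y ∈ S, 0 < dt e (y - A) → L * (dt e (y - A) - 1) ≤ dt e (y - A) := by
    intro A e L hA hA' he hLL y hy hpos
    by_contra hgt
    push_neg at hgt
    obtain ⟨z, hz⟩ := sliceLem he L (by omega) hpos (by linarith)
    exact hT A (A + L • e) y z hA hA' hy hz
  -- master pair analysis
  have hmaster : ∀ (a E : Fin 2 → ℤ) (L : ℤ), Prim E → a ∈ S → a + L • E ∈ S → 2 ≤ L →
      (L = 2 → ∀ y ∈ S, (dt E (y - a) = 2 ∨ dt E (y - a) = -2) →
        ¬((2:ℤ) ∣ (y 0 - a 0) ∧ (2:ℤ) ∣ (y 1 - a 1))) → False := by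
    intro a E L hE ha ha' hL2 htrip
    -- normalize the orientation
    obtain ⟨A₀, e₀, he₀, hA₀, hA₀', hside, hsame⟩ :
        ∃ A₀ e₀, Prim e₀ ∧ A₀ ∈ S ∧ A₀ + L • e₀ ∈ S ∧ (∀ x ∈ S, 0 ≤ dt e₀ (x - A₀)) ∧
          (∀ y : Fin 2 → ℤ, (dt e₀ (y - A₀) = 2 → (dt E (y - a) = 2 ∨ dt E (y - a) = -2)) ∧
            (L = 2 → dt e₀ (y - A₀) = 2 → ((2:ℤ) ∣ (y 0 - A₀ 0) ∧ (2:ℤ) ∣ (y 1 - A₀ 1)) →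
              ((2:ℤ) ∣ (y 0 - a 0) ∧ (2:ℤ) ∣ (y 1 - a 1)))) := by
      by_cases hpos : ∃ y ∈ S, 0 < dt E (y - a)
      · refine ⟨a, E, hE, ha, ha', hsupp a E L ha ha' hL2 hpos, ?_⟩
        intro y
        exact ⟨fun h => Or.inl h, fun _ _ h => h⟩
      · push_neg at hpos
        have hprim' : Prim (-E) := by
          have : (-E) 0 = -(E 0) := rfl
          have h1 : (-E) 1 = -(E 1) := rfl
          rw [Prim, this, h1]
          exact hE.neg_left.neg_right
        have hmem : a + L • E + L • (-E) = a := by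
          rw [smul_neg]; abel
        refine ⟨a + L • E, -E, hprim', ha', by rw [hmem]; exact ha, ?_, ?_⟩
        · intro x hx
          rw [dt_neg_left, dt_shift]
          simpa using hpos x hx
        · intro y
          constructor
          · intro h
            rw [dt_neg_left, dt_shift] at h
            right; omega
          · intro hLeq h hdvd
            rw [hLeq] at hdvd
            have h0 : y 0 - (a + (2:ℤ) • E) 0 = (y 0 - a 0) - 2 * E 0 := by
              simp; ring
            have h1 : y 1 - (a + (2:ℤ) • E) 1 = (y 1 - a 1) - 2 * E 1 := by
              simp; ring
            rw [h0, h1] at hdvd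
            omega
    have hb := hbound A₀ e₀ L hA₀ hA₀' he₀ hL2
    rcases eq_or_lt_of_le hL2 with hL2e | hL3
    · -- L = 2
      have hLeq : L = 2 := hL2e.symm
      subst hLeq
      by_cases hy2 : ∃ y ∈ S, dt e₀ (y - A₀) = 2
      · obtain ⟨y, hy, hy2v⟩ := hy2
        have hnotdvd : ¬((2:ℤ) ∣ (y 0 - A₀ 0) ∧ (2:ℤ) ∣ (y 1 - A₀ 1)) := by
          intro hdvd
          exact htrip rfl y hy ((hsame y).1 hy2v) ((hsame y).2 rfl hy2v hdvd)
        have hodd : ¬((2:ℤ) ∣ (y 0 - A₀ 0)) ∨ ¬((2:ℤ) ∣ (y 1 - A₀ 1)) := by tauto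
        obtain ⟨z, hz⟩ := parity_slice he₀ hy2v hodd
        exact hT A₀ (A₀ + (2:ℤ) • e₀) y z hA₀ hA₀' hy hz
      · push_neg at hy2
        apply hcover A₀ e₀ 0 1 (prim_ne_zero he₀)
        intro x hx
        have h0 := hside x hx
        have hne2 := hy2 x hx
        rcases eq_or_lt_of_le h0 with h | h
        · left; omega
        · have := hb x hx h
          right; omega
    · -- 3 ≤ L
      apply hcover A₀ e₀ 0 1 (prim_ne_zero he₀)
      intro x hx
      have h0 := hside x hx
      rcases eq_or_lt_of_le h0 with h | h
      · left; omega
      · have hbb := hb x hx h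
        right
        nlinarith [hbb, hL3, h]
  -- pair decomposition: same-parity pairs have content exactly 2
  have hnegprim : ∀ v : Fin 2 → ℤ, Prim v → Prim (-v) := by
    intro v hv
    have h0 : (-v) 0 = -(v 0) := rfl
    have h1 : (-v) 1 = -(v 1) := rfl
    rw [Prim, h0, h1]
    exact hv.neg_left.neg_right
  have hpair2 : ∀ a b : Fin 2 → ℤ, a ∈ S → b ∈ S → a ≠ b → (2:ℤ) ∣ (b 0 - a 0) →
      (2:ℤ) ∣ (b 1 - a 1) → ∃ B, Prim B ∧ b = a + (2:ℤ) • B := by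
    intro a b ha hb hab h0 h1
    have hvne : b - a ≠ 0 := sub_ne_zero.mpr (Ne.symm hab)
    obtain ⟨L, E, hE, hdec, hLpos, hgcd⟩ := content_decomp (b - a) hvne
    have h2L : (2:ℤ) ∣ L := by
      rw [hgcd]
      exact Int.dvd_coe_gcd h0 h1
    have hL2 : 2 ≤ L := by omega
    have hbmem : a + L • E ∈ S := by
      have : a + L • E = b := by rw [← hdec]; abel
      rw [this]; exact hb
    by_cases hL3 : 3 ≤ L
    · exact absurd (hmaster a E L hE ha hbmem hL2 (fun h => by omega)) not_false
    · have hLeq : L = 2 := by omega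
      rw [hLeq] at hdec
      exact ⟨E, hE, by rw [← hdec]; abel⟩
  -- pigeonhole: a distinct same-parity pair
  have hpigeon : ∃ p ∈ S, ∃ q ∈ S, p ≠ q ∧ (2:ℤ) ∣ (q 0 - p 0) ∧ (2:ℤ) ∣ (q 1 - p 1) := by
    have hcards : S.ncard = hS.toFinset.card := Set.ncard_eq_toFinset_card S hS
    have hcard' : (Finset.univ : Finset (ZMod 2 × ZMod 2)).card < hS.toFinset.card := by
      have h4 : (Finset.univ : Finset (ZMod 2 × ZMod 2)).card = 4 := by decide
      omega
    obtain ⟨p, hp, q, hq, hne, heq⟩ :=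
      Finset.exists_ne_map_eq_of_card_lt_of_maps_to
        (f := fun v : Fin 2 → ℤ => (((v 0 : ℤ) : ZMod 2), ((v 1 : ℤ) : ZMod 2)))
        hcard' (fun x _ => Finset.mem_univ _)
    refine ⟨p, hS.mem_toFinset.mp hp, q, hS.mem_toFinset.mp hq, hne, ?_, ?_⟩
    · have h0 : ((p 0 : ℤ) : ZMod 2) = ((q 0 : ℤ) : ZMod 2) := congrArg Prod.fst heq
      have hz : ((q 0 - p 0 : ℤ) : ZMod 2) = 0 := by push_cast; rw [← h0]; ring
      exact_mod_cast (ZMod.intCast_zmod_eq_zero_iff_dvd _ 2).mp hz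
    · have h0 : ((p 1 : ℤ) : ZMod 2) = ((q 1 : ℤ) : ZMod 2) := congrArg Prod.snd heq
      have hz : ((q 1 - p 1 : ℤ) : ZMod 2) = 0 := by push_cast; rw [← h0]; ring
      exact_mod_cast (ZMod.intCast_zmod_eq_zero_iff_dvd _ 2).mp hz
  -- the triangle case
  have htri : ∀ p q r B C : Fin 2 → ℤ, p ∈ S → q ∈ S → r ∈ S →
      q = p + (2:ℤ) • B → r = p + (2:ℤ) • C → Prim B → Prim C → Prim (C - B) →
      0 < dt B C → False := by
    intro p q r B C hp hq hr hqe hre hB hC hCB hBC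
    have hq' : p + (2:ℤ) • B ∈ S := by rw [← hqe]; exact hq
    have hr' : p + (2:ℤ) • C ∈ S := by rw [← hre]; exact hr
    have hr'' : q + (2:ℤ) • (C - B) ∈ S := by
      have hh : q + (2:ℤ) • (C - B) = p + (2:ℤ) • C := by rw [hqe, smul_sub]; abel
      rw [hh]; exact hr'
    have hp'' : r + (2:ℤ) • (-C) ∈ S := by
      have hh : r + (2:ℤ) • (-C) = p := by rw [hre, smul_neg]; abel
      rw [hh]; exact hp
    have hs1 : ∀ x ∈ S, 0 ≤ dt B (x - p) := by
      apply hsupp p B 2 hp hq' le_rfl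
      refine ⟨r, hr, ?_⟩
      have hh : dt B (r - p) = 2 * dt B C := by
        rw [hre]
        simp only [dt, Pi.sub_apply, Pi.add_apply, Pi.smul_apply, smul_eq_mul]
        ring
      omega
    have hs2 : ∀ x ∈ S, 0 ≤ dt (C - B) (x - q) := by
      apply hsupp q (C - B) 2 hq hr'' le_rfl
      refine ⟨p, hp, ?_⟩
      have hh : dt (C - B) (p - q) = 2 * dt B C := by
        rw [hqe]
        simp only [dt, Pi.sub_apply, Pi.add_apply, Pi.smul_apply, smul_eq_mul]
        ring
      omega
    have hs3 : ∀ x ∈ S, 0 ≤ dt (-C) (x - r) := by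
      apply hsupp r (-C) 2 hr hp'' le_rfl
      refine ⟨q, hq, ?_⟩
      have hh : dt (-C) (q - r) = 2 * dt B C := by
        rw [hqe, hre]
        simp only [dt, Pi.sub_apply, Pi.add_apply, Pi.smul_apply, Pi.neg_apply, smul_eq_mul]
        ring
      omega
    have hsub : S ⊆ ({p, p + B, p + (2:ℤ) • B, p + B + C, p + (2:ℤ) • C, p + C} :
        Set (Fin 2 → ℤ)) := by
      intro x hx
      have h1 := hs1 x hx
      have h2 := hs2 x hx
      have h3 := hs3 x hx
      have hnot := hT p q r x hp hq hr
      simp only [sIn, not_and_or, not_lt] at hnot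
      have e1 : dt (q - p) (x - p) = 2 * dt B (x - p) := by
        rw [hqe]
        simp only [dt, Pi.sub_apply, Pi.add_apply, Pi.smul_apply, smul_eq_mul]
        ring
      have e2 : dt (r - q) (x - q) = 2 * dt (C - B) (x - q) := by
        rw [hqe, hre]
        simp only [dt, Pi.sub_apply, Pi.add_apply, Pi.smul_apply, smul_eq_mul]
        ring
      have e3 : dt (p - r) (x - r) = 2 * dt (-C) (x - r) := by
        rw [hre]
        simp only [dt, Pi.sub_apply, Pi.add_apply, Pi.smul_apply, Pi.neg_apply, smul_eq_mul]
        ring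
      have hzero : dt B (x - p) = 0 ∨ dt (C - B) (x - q) = 0 ∨ dt (-C) (x - r) = 0 := by
        rcases hnot with h | h | h
        · left; rw [e1] at h; omega
        · right; left; rw [e2] at h; omega
        · right; right; rw [e3] at h; omega
      rcases hzero with h | h | h
      · obtain ⟨k, hk⟩ := primP hB h
        have hxp : x = p + k • B := by rw [← hk]; abel
        have c2 : dt (C - B) (x - q) = (2 - k) * dt B C := by
          rw [hxp, hqe]
          simp only [dt, Pi.sub_apply, Pi.add_apply, Pi.smul_apply, smul_eq_mul]
          ring
        have c3 : dt (-C) (x - r) = k * dt B C := by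
          rw [hxp, hre]
          simp only [dt, Pi.sub_apply, Pi.add_apply, Pi.smul_apply, Pi.neg_apply, smul_eq_mul]
          ring
        have hk0 : 0 ≤ k := by nlinarith [h3, c3, hBC]
        have hk2 : k ≤ 2 := by nlinarith [h2, c2, hBC]
        interval_cases k
        · have hx' : x = p := by rw [hxp]; simp
          rw [hx']; simp
        · have hx' : x = p + B := by rw [hxp]; simp
          rw [hx']; simp
        · have hx' : x = p + (2:ℤ) • B := by rw [hxp]
          rw [hx']; simp
      · obtain ⟨k, hk⟩ := primP hCB h
        have hxp : x = q + k • (C - B) := by rw [← hk]; abel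
        have c1 : dt B (x - p) = k * dt B C := by
          rw [hxp, hqe]
          simp only [dt, Pi.sub_apply, Pi.add_apply, Pi.smul_apply, smul_eq_mul]
          ring
        have c3 : dt (-C) (x - r) = (2 - k) * dt B C := by
          rw [hxp, hqe, hre]
          simp only [dt, Pi.sub_apply, Pi.add_apply, Pi.smul_apply, Pi.neg_apply, smul_eq_mul]
          ring
        have hk0 : 0 ≤ k := by nlinarith [h1, c1, hBC]
        have hk2 : k ≤ 2 := by nlinarith [h3, c3, hBC]
        interval_cases k
        · have hx' : x = p + (2:ℤ) • B := by rw [hxp, hqe]; simp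
          rw [hx']; simp
        · have hx' : x = p + B + C := by rw [hxp, hqe, one_smul]; abel
          rw [hx']; simp
        · have hx' : x = p + (2:ℤ) • C := by rw [hxp, hqe, smul_sub]; abel
          rw [hx']; simp
      · obtain ⟨k, hk⟩ := primP hC (show dt C (x - r) = 0 by rw [dt_neg_left] at h; omega)
        have hxp : x = r + k • C := by rw [← hk]; abel
        have c1 : dt B (x - p) = (2 + k) * dt B C := by
          rw [hxp, hre]
          simp only [dt, Pi.sub_apply, Pi.add_apply, Pi.smul_apply, smul_eq_mul]
          ring
        have c2 : dt (C - B) (x - q) = -k * dt B C := by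
          rw [hxp, hqe, hre]
          simp only [dt, Pi.sub_apply, Pi.add_apply, Pi.smul_apply, smul_eq_mul]
          ring
        have hk0 : -2 ≤ k := by nlinarith [h1, c1, hBC]
        have hk2 : k ≤ 0 := by nlinarith [h2, c2, hBC]
        interval_cases k
        · have hx' : x = p := by
            rw [hxp, hre]
            have : ((-2 : ℤ)) • C = -((2:ℤ) • C) := by rw [neg_smul]
            rw [this]; abel
          rw [hx']; simp
        · have hx' : x = p + C := by
            rw [hxp, hre]
            have : ((-1 : ℤ)) • C = -C := by rw [neg_smul, one_smul]
            rw [this]; abel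
          rw [hx']; simp
        · have hx' : x = p + (2:ℤ) • C := by rw [hxp, hre]; simp
          rw [hx']; simp
    have h6 : ({p, p + B, p + (2:ℤ) • B, p + B + C, p + (2:ℤ) • C, p + C} :
        Set (Fin 2 → ℤ)).ncard ≤ 6 := by
      have i5 : ({p + C} : Set (Fin 2 → ℤ)).ncard = 1 := Set.ncard_singleton _
      have i4 := Set.ncard_insert_le (p + (2:ℤ) • C) ({p + C} : Set (Fin 2 → ℤ))
      have i3 := Set.ncard_insert_le (p + B + C)
        (insert (p + (2:ℤ) • C) ({p + C} : Set (Fin 2 → ℤ)))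
      have i2 := Set.ncard_insert_le (p + (2:ℤ) • B)
        (insert (p + B + C) (insert (p + (2:ℤ) • C) ({p + C} : Set (Fin 2 → ℤ))))
      have i1 := Set.ncard_insert_le (p + B)
        (insert (p + (2:ℤ) • B) (insert (p + B + C)
          (insert (p + (2:ℤ) • C) ({p + C} : Set (Fin 2 → ℤ)))))
      have i0 := Set.ncard_insert_le p
        (insert (p + B) (insert (p + (2:ℤ) • B) (insert (p + B + C)
          (insert (p + (2:ℤ) • C) ({p + C} : Set (Fin 2 → ℤ))))))
      omega
    have hle := Set.ncard_le_ncard hsub (Set.toFinite _)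
    omega
  -- main case split
  by_cases hc3 : ∃ p q r : Fin 2 → ℤ, p ∈ S ∧ q ∈ S ∧ r ∈ S ∧ p ≠ q ∧ p ≠ r ∧ q ≠ r ∧
      ((2:ℤ) ∣ (q 0 - p 0)) ∧ ((2:ℤ) ∣ (q 1 - p 1)) ∧ ((2:ℤ) ∣ (r 0 - p 0)) ∧
      ((2:ℤ) ∣ (r 1 - p 1))
  · obtain ⟨p, q, r, hp, hq, hr, hpq, hpr, hqr, hq0, hq1, hr0, hr1⟩ := hc3
    obtain ⟨B, hB, hqe⟩ := hpair2 p q hp hq hpq hq0 hq1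
    obtain ⟨C, hC, hre⟩ := hpair2 p r hp hr hpr hr0 hr1
    obtain ⟨D, hD, hqre⟩ := hpair2 q r hq hr hqr (by omega) (by omega)
    have hDCB : D = C - B := by
      funext i
      have e1 := congrFun hqe i
      have e2 := congrFun hre i
      have e3 := congrFun hqre i
      simp only [Pi.add_apply, Pi.smul_apply, smul_eq_mul] at e1 e2 e3
      show D i = C i - B i
      omega
    rcases lt_trichotomy (dt B C) 0 with hlt | heq0 | hgt
    · have hBC' : Prim (B - C) := by
        have hh : B - C = -D := by rw [hDCB]; abel
        rw [hh]
        exact hnegprim D hD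
      have hCB' : (0:ℤ) < dt C B := by
        have : dt C B = - dt B C := by rw [dt_anti]
        omega
      exact htri p r q C B hp hr hq hre hqe hC hB hBC' hCB'
    · obtain ⟨k, hk⟩ := primP hB heq0
      have hk1 : k = 1 ∨ k = -1 := by
        have hgB : Int.gcd (B 0) (B 1) = 1 := Int.isCoprime_iff_gcd_eq_one.mp hB
        have hgC : Int.gcd (C 0) (C 1) = 1 := Int.isCoprime_iff_gcd_eq_one.mp hC
        have hC0 : C 0 = k * B 0 := by rw [hk]; rfl
        have hC1 : C 1 = k * B 1 := by rw [hk]; rfl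
        rw [hC0, hC1, Int.gcd_mul_left, hgB, mul_one] at hgC
        omega
      rcases hk1 with hk1 | hk1
      · apply hqr
        rw [hqe, hre, hk, hk1, one_smul]
      · have hD2 : D = (-2 : ℤ) • B := by
          rw [hDCB, hk, hk1]
          funext i
          simp only [Pi.sub_apply, Pi.smul_apply, smul_eq_mul, Pi.neg_apply]
          show (-1 : ℤ) * B i - B i = -2 * B i
          ring
        have hgD : Int.gcd (D 0) (D 1) = 1 := Int.isCoprime_iff_gcd_eq_one.mp hD
        have hgB : Int.gcd (B 0) (B 1) = 1 := Int.isCoprime_iff_gcd_eq_one.mp hB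
        have hD0 : D 0 = (-2) * B 0 := by rw [hD2]; rfl
        have hD1 : D 1 = (-2) * B 1 := by rw [hD2]; rfl
        rw [hD0, hD1, Int.gcd_mul_left, hgB, mul_one] at hgD
        omega
    · exact htri p q r B C hp hq hr hqe hre hB hC (by rw [← hDCB]; exact hD) hgt
  · push_neg at hc3
    obtain ⟨p, hp, q, hq, hpq, h0, h1⟩ := hpigeon
    obtain ⟨E, hE, hqe⟩ := hpair2 p q hp hq hpq h0 h1
    have hq' : p + (2:ℤ) • E ∈ S := by rw [← hqe]; exact hq
    apply hmaster p E 2 hE hp hq' le_rfl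
    intro _ y hy hdty hdvd
    have hyp : q ≠ y := by
      intro h
      rw [← h, hqe] at hdty
      have hz : dt E (p + (2:ℤ) • E - p) = 0 := by
        have hh : p + (2:ℤ) • E - p = (2:ℤ) • E := by abel
        rw [hh, dt_smul_right, dt_self]; ring
      omega
    have hpy : p ≠ y := by
      intro h
      rw [← h] at hdty
      have hz : dt E (p - p) = 0 := by
        rw [sub_self]
        simp [dt]
      omega
    exact hc3 p q y hp hq hy hpq hpy hyp h0 h1 hdvd.1 hdvd.2
end
end

section
/- Let d and r be positive integers. Every cube of length r in ℤ^d contains a basic cube of length ⌊r/d⌋ in its convex hull; that is, if C is a cube of length r in ℤ^d, then there exists a basic cube C' of length ⌊r/d⌋ in ℤ^d with C' contained in the convex hull of C taken in ℝ^d. -/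
noncomputable section

/-- The point of `ℝ^d` corresponding to a lattice point of `ℤ^d`. -/
def intCast (d : ℕ) (x : Fin d → ℤ) : Fin d → ℝ := fun i => (x i : ℝ)

/-- A cube of length `r` in `ℤ^d`: the set of points `a + i₁v₁ + ⋯ + i_d v_d` with
`0 ≤ i₁, …, i_d ≤ r`, where `v₁, …, v_d` are linearly independent over `ℝ`. -/
def IsCube (d r : ℕ) (C : Set (Fin d → ℤ)) : Prop :=
  ∃ (a : Fin d → ℤ) (v : Fin d → Fin d → ℤ),
    LinearIndependent ℝ (fun j : Fin d => intCast d (v j)) ∧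
    C = {x | ∃ c : Fin d → ℤ, (∀ j, 0 ≤ c j ∧ c j ≤ (r : ℤ)) ∧ x = a + ∑ j, c j • v j}

/-- A basic cube of length `r` in `ℤ^d`: a cube whose basis vectors form a `ℤ`-basis of `ℤ^d`,
i.e. generate `ℤ^d` as a `ℤ`-module. -/
def IsBasicCube (d r : ℕ) (C : Set (Fin d → ℤ)) : Prop :=
  ∃ (a : Fin d → ℤ) (v : Fin d → Fin d → ℤ),
    LinearIndependent ℝ (fun j : Fin d => intCast d (v j)) ∧
    Submodule.span ℤ (Set.range v) = (⊤ : Submodule ℤ (Fin d → ℤ)) ∧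
    C = {x | ∃ c : Fin d → ℤ, (∀ j, 0 ≤ c j ∧ c j ≤ (r : ℤ)) ∧ x = a + ∑ j, c j • v j}

namespace Statement9Aux

open Matrix Submodule

variable {d : ℕ}

def Vm (v : Fin d → Fin d → ℤ) : Matrix (Fin d) (Fin d) ℤ := Matrix.of v

def phi (v : Fin d → Fin d → ℤ) : (Fin d → ℤ) →ₗ[ℤ] (Fin d → ℤ) :=
  (Vm v).adjugate.vecMulLinear

lemma phi_v (v : Fin d → Fin d → ℤ) (i j : Fin d) :
    phi v (v i) j = if i = j then (Vm v).det else 0 := by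
  have h := congrFun (congrFun (Matrix.mul_adjugate (Vm v)) i) j
  simpa [phi, Matrix.mul_apply, Matrix.vecMulLinear_apply, Matrix.vecMul, dotProduct, Vm,
    Matrix.smul_apply, Matrix.one_apply] using h

lemma vecMul_phi (v : Fin d → Fin d → ℤ) (x : Fin d → ℤ) :
    (phi v x) ᵥ* (Vm v) = (Vm v).det • x := by
  rw [phi, Matrix.vecMulLinear_apply, Matrix.vecMul_vecMul, Matrix.adjugate_mul]
  simp [Matrix.vecMul_smul]

lemma sum_phi (v : Fin d → Fin d → ℤ) (x : Fin d → ℤ) (i : Fin d) :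
    ∑ j, phi v x j * v j i = (Vm v).det * x i := by
  have := congrFun (vecMul_phi v x) i
  simpa [Matrix.vecMul, dotProduct, Vm] using this

lemma repr_intCast (v : Fin d → Fin d → ℤ) (hD : ((Vm v).det : ℝ) ≠ 0) (x : Fin d → ℤ) :
    intCast d x = ∑ j, ((phi v x j : ℝ) / ((Vm v).det : ℝ)) • intCast d (v j) := by
  funext i
  have h2 : (∑ j, (phi v x j : ℝ) * (v j i : ℝ)) = ((Vm v).det : ℝ) * (x i : ℝ) := by
    exact_mod_cast congrArg (fun z : ℤ => (z : ℝ)) (sum_phi v x i)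
  have : (∑ j, ((phi v x j : ℝ) / ((Vm v).det : ℝ)) • intCast d (v j)) i
      = (∑ j, (phi v x j : ℝ) * (v j i : ℝ)) / ((Vm v).det : ℝ) := by
    rw [Finset.sum_apply, Finset.sum_div]
    refine Finset.sum_congr rfl fun j _ => ?_
    simp [intCast, div_mul_eq_mul_div]
  rw [this, h2, mul_div_cancel_left₀ _ hD]
  rfl

lemma phi_injective (v : Fin d → Fin d → ℤ) (hD : ((Vm v).det : ℝ) ≠ 0) (x : Fin d → ℤ)
    (hx : ∀ j, phi v x j = 0) : x = 0 := by
  have hD' : (Vm v).det ≠ 0 := by exact_mod_cast hD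
  funext i
  have := sum_phi v x i
  simp only [hx, zero_mul, Finset.sum_const_zero] at this
  have := (mul_eq_zero.mp this.symm).resolve_left hD'
  simpa using this

def Lam (v : Fin d → Fin d → ℤ) (k : ℕ) : Submodule ℤ (Fin d → ℤ) where
  carrier := {x | ∀ j : Fin d, k ≤ (j : ℕ) → phi v x j = 0}
  add_mem' := by
    intro a b ha hb j hj
    rw [map_add]
    simp [ha j hj, hb j hj]
  zero_mem' := by intro j hj; simp
  smul_mem' := by
    intro c x hx j hj
    rw [_root_.map_smul]
    simp [hx j hj]

lemma mem_Lam {v : Fin d → Fin d → ℤ} {k : ℕ} {x : Fin d → ℤ} :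
    x ∈ Lam v k ↔ ∀ j : Fin d, k ≤ (j : ℕ) → phi v x j = 0 := Iff.rfl

lemma Lam_mono (v : Fin d → Fin d → ℤ) {k l : ℕ} (h : k ≤ l) : Lam v k ≤ Lam v l :=
  fun x hx j hj => hx j (le_trans h hj)

lemma Lam_top (v : Fin d → Fin d → ℤ) : Lam v d = ⊤ := by
  refine eq_top_iff.mpr fun x _ j hj => absurd j.isLt (not_lt.mpr hj)

lemma v_mem_Lam (v : Fin d → Fin d → ℤ) (i : Fin d) (k : ℕ) (hik : (i : ℕ) < k) :
    v i ∈ Lam v k := by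
  intro j hj
  rw [phi_v]
  have : i ≠ j := by
    rintro rfl
    exact absurd (lt_of_lt_of_le hik hj) (lt_irrefl _)
  simp [this]

lemma main_induction (v : Fin d → Fin d → ℤ) (hD : ((Vm v).det : ℝ) ≠ 0) :
    ∀ k, k ≤ d → ∃ u : Fin d → Fin d → ℤ,
      Submodule.span ℤ (u '' {i : Fin d | (i : ℕ) < k}) = Lam v k ∧
      ∀ i : Fin d, (i : ℕ) < k → ∀ j : Fin d,
        0 ≤ (phi v (u i) j : ℝ) / ((Vm v).det : ℝ) ∧
          (phi v (u i) j : ℝ) / ((Vm v).det : ℝ) ≤ 1 := by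
  intro k
  induction k with
  | zero =>
    intro _
    refine ⟨0, ?_, fun i hi => absurd hi (Nat.not_lt_zero _)⟩
    have h1 : {i : Fin d | (i : ℕ) < 0} = ∅ := by ext i; simp
    rw [h1, Set.image_empty, Submodule.span_empty]
    symm
    rw [eq_bot_iff]
    intro x hx
    have := phi_injective v hD x (fun j => hx j (Nat.zero_le _))
    simp [this]
  | succ k ih =>
    intro hk1
    obtain ⟨u, hspan, hβ⟩ := ih (Nat.le_of_succ_le hk1)
    set D := (Vm v).det with hDdef
    have hDz : D ≠ 0 := by exact_mod_cast hD
    have hkd : k < d := hk1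
    set κ : Fin d := ⟨k, hkd⟩ with hκ
    set f : (Fin d → ℤ) →ₗ[ℤ] ℤ := (LinearMap.proj κ) ∘ₗ (phi v) with hf
    have hfapp : ∀ x, f x = phi v x κ := fun x => rfl
    set S : AddSubgroup ℤ :=
      AddSubgroup.map f.toAddMonoidHom (Lam v (k+1)).toAddSubgroup with hS
    have memS : ∀ n : ℤ, n ∈ S ↔ ∃ x ∈ Lam v (k+1), f x = n := by
      intro n
      rw [hS, AddSubgroup.mem_map]
      rfl
    obtain ⟨g, hg⟩ := Int.subgroup_cyclic S
    have hvκ : v κ ∈ Lam v (k+1) := v_mem_Lam v κ (k+1) (Nat.lt_succ_self k)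
    have hfvκ : f (v κ) = D := by rw [hfapp, phi_v]; simp [hDdef]
    have hDS : D ∈ S := (memS D).mpr ⟨v κ, hvκ, hfvκ⟩
    have hgD : g ∣ D := by
      rw [hg, AddSubgroup.mem_closure_singleton] at hDS
      obtain ⟨n, hn⟩ := hDS
      exact Dvd.intro_left n (by simpa [smul_eq_mul] using hn)
    have hgz : g ≠ 0 := by rintro rfl; exact hDz (by simpa using hgD)
    have hgS : g ∈ S := by
      rw [hg, AddSubgroup.mem_closure_singleton]; exact ⟨1, one_smul _ g⟩
    obtain ⟨w, hwmem, hfw⟩ := (memS g).mp hgS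
    -- sign correction
    set w' : Fin d → ℤ := if 0 < g * D then w else -w with hw'
    set g2 : ℤ := if 0 < g * D then g else -g with hg2
    have hw'mem : w' ∈ Lam v (k+1) := by
      rw [hw']; split
      · exact hwmem
      · exact neg_mem hwmem
    have hfw' : f w' = g2 := by
      rw [hw', hg2]; split
      · exact hfw
      · rw [map_neg, hfw]
    have hg2D : 0 < g2 * D := by
      have hne : g * D ≠ 0 := mul_ne_zero hgz hDz
      rcases lt_or_gt_of_ne hne with h | h
      · rw [hg2, if_neg (not_lt.mpr h.le), neg_mul]
        linarith
      · rw [hg2, if_pos h]; exact h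
    have hg2dvd : g2 ∣ D := by
      rw [hg2]; split
      · exact hgD
      · exact (neg_dvd).mpr hgD
    have hgen : ∀ x ∈ Lam v (k+1), ∃ m : ℤ, f x = m * g2 := by
      intro x hx
      have : f x ∈ S := (memS _).mpr ⟨x, hx, rfl⟩
      rw [hg, AddSubgroup.mem_closure_singleton] at this
      obtain ⟨n, hn⟩ := this
      rw [hg2]; split
      · exact ⟨n, by simpa [smul_eq_mul, mul_comm] using hn.symm⟩
      · exact ⟨-n, by rw [neg_mul_neg]; simpa [smul_eq_mul] using hn.symm⟩
    -- bounds for the ratio g2 / D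
    have hqpos : 0 < (g2 : ℝ) / (D : ℝ) := by
      rcases mul_pos_iff.mp hg2D with ⟨h1, h2⟩ | ⟨h1, h2⟩
      · exact div_pos (by exact_mod_cast h1) (by exact_mod_cast h2)
      · exact div_pos_of_neg_of_neg (by exact_mod_cast h1) (by exact_mod_cast h2)
    have hqle : (g2 : ℝ) / (D : ℝ) ≤ 1 := by
      have habs : |g2| ≤ |D| :=
        Int.le_of_dvd (abs_pos.mpr hDz) ((abs_dvd _ _).mpr ((dvd_abs _ _).mpr hg2dvd))
      have habsR : |(g2 : ℝ)| ≤ |(D : ℝ)| := by exact_mod_cast habs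
      calc (g2 : ℝ) / (D : ℝ) ≤ |(g2 : ℝ) / (D : ℝ)| := le_abs_self _
        _ = |(g2 : ℝ)| / |(D : ℝ)| := abs_div _ _
        _ ≤ 1 := by
            rw [div_le_one (abs_pos.mpr hD)]
            exact habsR
    -- the new vector, with coefficients reduced mod 1
    set nn : Fin d → ℤ := fun j => if (j : ℕ) < k then ⌊(phi v w' j : ℝ) / (D : ℝ)⌋ else 0
      with hnn
    set unew : Fin d → ℤ := w' - ∑ j, nn j • v j with hunew
    have hphinew : ∀ j : Fin d, phi v unew j = phi v w' j - nn j * D := by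
      intro j
      rw [hunew, map_sub, map_sum]
      simp only [Pi.sub_apply, Finset.sum_apply, _root_.map_smul, Pi.smul_apply, phi_v,
        smul_eq_mul, mul_ite, mul_zero]
      rw [Finset.sum_ite_eq' Finset.univ j (fun j' => nn j' * D)]
      simp
    have hunewmem : unew ∈ Lam v (k+1) := by
      intro j hj
      rw [hphinew j, hw'mem j hj, hnn]
      simp only [zero_sub, neg_eq_zero, mul_eq_zero]
      left
      rw [if_neg (by omega)]
    have hphinewκ : phi v unew κ = g2 := by
      rw [hphinew κ, hnn]
      simp only []
      rw [if_neg (by simp [hκ])]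
      rw [← hfapp, hfw']
      ring
    have hβnew : ∀ j : Fin d, 0 ≤ (phi v unew j : ℝ) / (D : ℝ) ∧
        (phi v unew j : ℝ) / (D : ℝ) ≤ 1 := by
      intro j
      rcases lt_trichotomy ((j : ℕ)) k with hj | hj | hj
      · have : phi v unew j = phi v w' j - ⌊(phi v w' j : ℝ) / (D : ℝ)⌋ * D := by
          rw [hphinew j, hnn]; simp only []; rw [if_pos hj]
        have heq : (phi v unew j : ℝ) / (D : ℝ)
            = (phi v w' j : ℝ) / (D : ℝ) - ⌊(phi v w' j : ℝ) / (D : ℝ)⌋ := by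
          rw [this]
          push_cast
          field_simp
        constructor
        · rw [heq]; linarith [Int.floor_le ((phi v w' j : ℝ) / (D : ℝ))]
        · rw [heq]; linarith [Int.lt_floor_add_one ((phi v w' j : ℝ) / (D : ℝ))]
      · have hjκ : j = κ := by rw [hκ]; exact Fin.ext hj
        rw [hjκ, hphinewκ]
        exact ⟨hqpos.le, hqle⟩
      · have : phi v unew j = 0 := hunewmem j (by omega)
        rw [this]
        norm_num
    -- the updated family
    set U : Fin d → Fin d → ℤ := Function.update u κ unew with hU
    have hUi : ∀ i : Fin d, (i : ℕ) < k → U i = u i := by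
      intro i hi
      rw [hU]
      refine Function.update_of_ne ?_ _ _
      intro h
      rw [h, hκ] at hi
      simp at hi
    have hUκ : U κ = unew := by rw [hU]; exact Function.update_self _ _ _
    have himage : u '' {i : Fin d | (i : ℕ) < k} = U '' {i : Fin d | (i : ℕ) < k} := by
      apply Set.image_congr
      intro i hi
      exact (hUi i hi).symm
    refine ⟨U, le_antisymm ?_ ?_, ?_⟩
    · rw [Submodule.span_le]
      rintro _ ⟨i, hi, rfl⟩
      rcases Nat.lt_succ_iff_lt_or_eq.mp hi with h | h
      · rw [hUi i h]
        have : u i ∈ Submodule.span ℤ (u '' {i : Fin d | (i : ℕ) < k}) :=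
          Submodule.subset_span ⟨i, h, rfl⟩
        rw [hspan] at this
        exact Lam_mono v (Nat.le_succ k) this
      · have : i = κ := by rw [hκ]; exact Fin.ext h
        rw [this, hUκ]
        exact hunewmem
    · intro x hx
      obtain ⟨m, hm⟩ := hgen x hx
      have hy : x - m • unew ∈ Lam v k := by
        intro j hj
        rcases eq_or_lt_of_le hj with hjk | hjk
        · have hjκ : j = κ := by rw [hκ]; exact Fin.ext hjk.symm
          rw [map_sub, _root_.map_smul, Pi.sub_apply, Pi.smul_apply, hjκ, hphinewκ,
            ← hfapp, hm]
          simp [smul_eq_mul]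
        · rw [map_sub, _root_.map_smul, Pi.sub_apply, Pi.smul_apply,
            hx j (by omega), hunewmem j (by omega)]
          simp
      rw [← hspan, himage] at hy
      have h1 : Submodule.span ℤ (U '' {i : Fin d | (i : ℕ) < k})
          ≤ Submodule.span ℤ (U '' {i : Fin d | (i : ℕ) < k + 1}) :=
        Submodule.span_mono (Set.image_mono (fun i (hi : (i : ℕ) < k) => by
          exact Nat.lt_succ_of_lt hi))
      have h2 : unew ∈ Submodule.span ℤ (U '' {i : Fin d | (i : ℕ) < k + 1}) := by
        apply Submodule.subset_span
        exact ⟨κ, by simp [hκ], hUκ⟩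
      have : x = (x - m • unew) + m • unew := by ring
      rw [this]
      exact Submodule.add_mem _ (h1 hy) (Submodule.smul_mem _ m h2)
    · intro i hi j
      rcases Nat.lt_succ_iff_lt_or_eq.mp hi with h | h
      · rw [hUi i h]
        exact hβ i h j
      · have : i = κ := by rw [hκ]; exact Fin.ext h
        rw [this, hUκ]
        exact hβnew j

lemma key (v : Fin d → Fin d → ℤ)
    (hv : LinearIndependent ℝ (fun j : Fin d => intCast d (v j))) :
    ∃ (u : Fin d → Fin d → ℤ) (β : Fin d → Fin d → ℝ),
      Submodule.span ℤ (Set.range u) = ⊤ ∧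
      LinearIndependent ℝ (fun i : Fin d => intCast d (u i)) ∧
      (∀ i j, 0 ≤ β i j ∧ β i j ≤ 1) ∧
      (∀ i, intCast d (u i) = ∑ j, β i j • intCast d (v j)) := by
  have h1 : LinearIndependent ℝ (fun i => ((Vm v).map (Int.cast : ℤ → ℝ)) i) := hv
  have h2 : IsUnit ((Vm v).map (Int.cast : ℤ → ℝ)) :=
    Matrix.linearIndependent_rows_iff_isUnit.mp h1
  have h3 : ((Vm v).map (Int.cast : ℤ → ℝ)).det ≠ 0 :=
    ((Matrix.isUnit_iff_isUnit_det _).mp h2).ne_zero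
  have hD : ((Vm v).det : ℝ) ≠ 0 := by
    have := RingHom.map_det (Int.castRingHom ℝ) (Vm v)
    rw [show (Int.castRingHom ℝ).mapMatrix (Vm v) = (Vm v).map (Int.cast : ℤ → ℝ) from rfl] at this
    rw [show ((Vm v).det : ℝ) = (Int.castRingHom ℝ) (Vm v).det from rfl, this]
    exact h3
  obtain ⟨u, hspan, hβ⟩ := main_induction v hD d le_rfl
  have huniv : {i : Fin d | (i : ℕ) < d} = Set.univ := by
    ext i; simp [i.isLt]
  rw [huniv, Set.image_univ, Lam_top] at hspan
  -- every intCast of a lattice point is in the real span of the u's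
  have hLmem : ∀ x : Fin d → ℤ,
      intCast d x ∈ Submodule.span ℝ (Set.range fun i => intCast d (u i)) := by
    intro x
    have hx : x ∈ Submodule.span ℤ (Set.range u) := by rw [hspan]; trivial
    refine Submodule.span_induction ?_ ?_ ?_ ?_ hx
    · rintro _ ⟨i, rfl⟩
      exact Submodule.subset_span ⟨i, rfl⟩
    · have : intCast d (0 : Fin d → ℤ) = 0 := by funext i; simp [intCast]
      rw [this]; exact Submodule.zero_mem _
    · intro x y _ _ hx hy
      have : intCast d (x + y) = intCast d x + intCast d y := by
        funext i; simp [intCast]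
      rw [this]; exact Submodule.add_mem _ hx hy
    · intro c x _ hx
      have : intCast d (c • x) = (c : ℝ) • intCast d x := by
        funext i; simp [intCast]
      rw [this]; exact Submodule.smul_mem _ _ hx
  have htop : ⊤ ≤ Submodule.span ℝ (Set.range fun i : Fin d => intCast d (u i)) := by
    intro y _
    have hy : y = ∑ i, y i • intCast d (Pi.single i 1) := by
      funext j
      simp only [Finset.sum_apply, Pi.smul_apply, intCast, smul_eq_mul]
      rw [Finset.sum_eq_single j
        (fun i _ hij => by rw [Pi.single_eq_of_ne (Ne.symm hij)]; simp)
        (fun h => absurd (Finset.mem_univ j) h)]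
      simp
    rw [hy]
    exact Submodule.sum_mem _ fun i _ => Submodule.smul_mem _ _ (hLmem _)
  have hulin : LinearIndependent ℝ (fun i : Fin d => intCast d (u i)) :=
    linearIndependent_of_top_le_span_of_card_eq_finrank htop (by simp)
  refine ⟨u, fun i j => (phi v (u i) j : ℝ) / ((Vm v).det : ℝ), hspan, hulin, ?_, ?_⟩
  · intro i j
    exact hβ i i.isLt j
  · intro i
    exact repr_intCast v hD (u i)

lemma hull (a : Fin d → ℤ) (v : Fin d → Fin d → ℤ) (r : ℕ)
    (C : Set (Fin d → ℤ))
    (hCeq : C = {x | ∃ c : Fin d → ℤ, (∀ j, 0 ≤ c j ∧ c j ≤ (r : ℤ)) ∧ x = a + ∑ j, c j • v j})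
    (t : Fin d → ℝ) (ht : ∀ j, 0 ≤ t j ∧ t j ≤ (r : ℝ)) :
    intCast d a + ∑ j, t j • intCast d (v j) ∈ convexHull ℝ (intCast d '' C) := by
  set Lm : (Fin d → ℝ) →ₗ[ℝ] (Fin d → ℝ) :=
    Matrix.mulVecLin (Matrix.of fun i j => (v j i : ℝ)) with hLm
  set F : (Fin d → ℝ) →ᵃ[ℝ] (Fin d → ℝ) :=
    AffineMap.const ℝ (Fin d → ℝ) (intCast d a) + Lm.toAffineMap with hFdef
  have hF : ∀ s : Fin d → ℝ, F s = intCast d a + ∑ j, s j • intCast d (v j) := by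
    intro s
    funext i
    simp only [hFdef, AffineMap.coe_add, Pi.add_apply, AffineMap.coe_const,
      Function.const_apply, LinearMap.coe_toAffineMap, hLm, Matrix.mulVecLin_apply,
      Matrix.mulVec, dotProduct, Matrix.of_apply, Finset.sum_apply, Pi.smul_apply,
      smul_eq_mul, intCast]
    congr 1
    exact Finset.sum_congr rfl fun j _ => mul_comm _ _
  set B : Set (Fin d → ℝ) := Set.pi Set.univ (fun _ : Fin d => ({0, (r : ℝ)} : Set ℝ)) with hB
  have htB : t ∈ convexHull ℝ B := by
    rw [hB, convexHull_pi]
    intro j _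
    rw [convexHull_pair, segment_eq_Icc (by positivity)]
    exact ⟨(ht j).1, (ht j).2⟩
  have h2 : F '' B ⊆ intCast d '' C := by
    rintro _ ⟨s, hs, rfl⟩
    set c : Fin d → ℤ := fun j => if s j = 0 then 0 else (r : ℤ) with hc
    have hsc : ∀ j, s j = (c j : ℝ) := by
      intro j
      have h := hs j (Set.mem_univ j)
      simp only [Set.mem_insert_iff, Set.mem_singleton_iff] at h
      by_cases h0 : s j = 0
      · simp [hc, h0]
      · have hr : s j = (r : ℝ) := h.resolve_left h0
        simp only [hc, if_neg h0, Int.cast_natCast]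
        exact hr
    refine ⟨a + ∑ j, c j • v j, ?_, ?_⟩
    · rw [hCeq]
      refine ⟨c, fun j => ?_, rfl⟩
      constructor
      · simp only [hc]
        split <;> simp
      · simp only [hc]
        split <;> simp
    · rw [hF s]
      funext i
      simp only [intCast, Pi.add_apply, Finset.sum_apply, Pi.smul_apply, smul_eq_mul, hsc]
      push_cast
      ring_nf
  have := (AffineMap.image_convexHull F B) ▸ Set.mem_image_of_mem F htB
  rw [hF t] at this
  exact convexHull_mono h2 this

end Statement9Aux

theorem statement9 (d r : ℕ) (hd : 1 ≤ d) (hr : 1 ≤ r)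
    (C : Set (Fin d → ℤ)) (hC : IsCube d r C) :
    ∃ C' : Set (Fin d → ℤ), IsBasicCube d (r / d) C' ∧
      intCast d '' C' ⊆ convexHull ℝ (intCast d '' C) := by
  obtain ⟨a, v, hv, hCeq⟩ := hC
  obtain ⟨u, β, hspan, hulin, hβ, hrepr⟩ := Statement9Aux.key v hv
  refine ⟨{x | ∃ c : Fin d → ℤ, (∀ j, 0 ≤ c j ∧ c j ≤ ((r / d : ℕ) : ℤ)) ∧
      x = a + ∑ j, c j • u j},
    ⟨a, u, hulin, hspan, rfl⟩, ?_⟩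
  rintro _ ⟨x, ⟨c, hc, rfl⟩, rfl⟩
  set m : ℕ := r / d with hm
  set t : Fin d → ℝ := fun j => ∑ i, (c i : ℝ) * β i j with htdef
  have hx : intCast d (a + ∑ i, c i • u i)
      = intCast d a + ∑ j, t j • intCast d (v j) := by
    have h0 : intCast d (a + ∑ i, c i • u i)
        = intCast d a + ∑ i, (c i : ℝ) • intCast d (u i) := by
      funext j
      simp only [intCast, Pi.add_apply, Finset.sum_apply, Pi.smul_apply, smul_eq_mul]
      push_cast
      ring
    rw [h0]
    congr 1
    simp_rw [hrepr, Finset.smul_sum, smul_smul]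
    rw [Finset.sum_comm]
    simp_rw [htdef, ← Finset.sum_smul]
  rw [hx]
  apply Statement9Aux.hull a v r C hCeq
  intro j
  constructor
  · apply Finset.sum_nonneg
    intro i _
    exact mul_nonneg (by exact_mod_cast (hc i).1) (hβ i j).1
  · have h1 : t j ≤ ∑ _i : Fin d, (m : ℝ) := by
      apply Finset.sum_le_sum
      intro i _
      calc (c i : ℝ) * β i j ≤ (c i : ℝ) * 1 :=
            mul_le_mul_of_nonneg_left (hβ i j).2 (by exact_mod_cast (hc i).1)
        _ = (c i : ℝ) := mul_one _
        _ ≤ (m : ℝ) := by exact_mod_cast (hc i).2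
    have h2 : (∑ _i : Fin d, (m : ℝ)) = ((d * m : ℕ) : ℝ) := by
      rw [Finset.sum_const, Finset.card_univ, Fintype.card_fin, nsmul_eq_mul]
      push_cast
      ring
    have h3 : ((d * m : ℕ) : ℝ) ≤ (r : ℝ) := by
      have h4 : d * m ≤ r := by
        rw [hm, Nat.mul_comm]
        exact Nat.div_mul_le_self r d
      exact_mod_cast h4
    linarith
end
end
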